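/- arXiv:math/0507264 — 5 statements merged into one kernel-verified Lean document; each statement's English description precedes it below -/
import Mathlib

section
/- Let b > 0 and let u, v be real functions that are C² on (0,b) with u(t) ≥ v(t) for all t ∈ (0,b). Assume max{u'(t), v'(t)} > 0 for every t ∈ (0,b), and assume the main hypothesis: whenever u(t) = v(s) with 0 < t < s < b, one has u''(t) ≤ v''(s). Then either u(t) > v(t) for all t ∈ (0,b), or u(t) = v(t) for all t ∈ (0,b). -/
open Set Filter Real Topology


lemma gron_right (h h1 h2 : ℝ → ℝ) (C t0 a : ℝ) (hC : 0 ≤ C) (h0a : t0 ≤ a)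
    (hd1 : ∀ t ∈ Icc t0 a, HasDerivAt h (h1 t) t)
    (hd2 : ∀ t ∈ Icc t0 a, HasDerivAt h1 (h2 t) t)
    (hnn : ∀ t ∈ Icc t0 a, 0 ≤ h t)
    (h10 : h1 t0 ≤ 0) (h0 : h t0 = 0)
    (hineq : ∀ t ∈ Icc t0 a, 0 < h t → h2 t ≤ C * |h1 t|) :
    ∀ t ∈ Icc t0 a, h t = 0 := by
  have hcont1 : ContinuousOn h1 (Icc t0 a) :=
    fun t ht => (hd2 t ht).continuousAt.continuousWithinAt
  -- Claim: h1 ≤ 0 on the interval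
  have claim : ∀ t ∈ Icc t0 a, h1 t ≤ 0 := by
    by_contra hcon
    push_neg at hcon
    obtain ⟨t2, ht2, ht2pos⟩ := hcon
    have ht02 : t0 < t2 := by
      rcases eq_or_lt_of_le ht2.1 with h | h
      · exact absurd (h ▸ h10) (not_le.2 ht2pos)
      · exact h
    have hsub : Icc t0 t2 ⊆ Icc t0 a := Icc_subset_Icc le_rfl ht2.2
    set K : Set ℝ := {t ∈ Icc t0 t2 | h1 t ≤ 0} with hK
    have hKclosed : IsClosed K :=
      (hcont1.mono hsub).preimage_isClosed_of_isClosed isClosed_Icc isClosed_Iic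
    have hKne : K.Nonempty := ⟨t0, ⟨le_rfl, ht02.le⟩, h10⟩
    have hKbdd : BddAbove K := ⟨t2, fun x hx => hx.1.2⟩
    set σ := sSup K with hσ
    have hσK : σ ∈ K := hKclosed.csSup_mem hKne hKbdd
    have hσ2 : σ < t2 := lt_of_le_of_ne hσK.1.2 (fun he => (not_le.2 ht2pos) (he ▸ hσK.2))
    have hσ0 : t0 ≤ σ := hσK.1.1
    have hpos : ∀ t ∈ Ioc σ t2, 0 < h1 t := by
      intro t ht
      by_contra hle
      push_neg at hle
      have : t ∈ K := ⟨⟨hσ0.trans ht.1.le, ht.2⟩, hle⟩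
      exact absurd (le_csSup hKbdd this) (not_le.2 ht.1)
    have hsubσ : Icc σ t2 ⊆ Icc t0 a := Icc_subset_Icc hσ0 ht2.2
    -- h is strictly increasing on [σ, t2]
    have hmono : StrictMonoOn h (Icc σ t2) := by
      apply strictMonoOn_of_deriv_pos (convex_Icc _ _)
        (fun t ht => (hd1 t (hsubσ ht)).continuousAt.continuousWithinAt)
      intro t ht
      rw [interior_Icc] at ht
      rw [(hd1 t (hsubσ (Ioo_subset_Icc_self ht))).deriv]
      exact hpos t ⟨ht.1, ht.2.le⟩
    have hhpos : ∀ t ∈ Ioc σ t2, 0 < h t := by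
      intro t ht
      have := hmono (left_mem_Icc.2 hσ2.le) ⟨ht.1.le, ht.2⟩ ht.1
      exact lt_of_le_of_lt (hnn σ (hsubσ (left_mem_Icc.2 hσ2.le))) this
    -- g = h1 * exp(-C t) is antitone on [σ, t2]
    set g : ℝ → ℝ := fun t => h1 t * Real.exp (-C * t) with hg
    have hgd : ∀ t ∈ Icc σ t2, HasDerivAt g ((h2 t - C * h1 t) * Real.exp (-C * t)) t := by
      intro t ht
      have he : HasDerivAt (fun t => Real.exp (-C * t)) (-C * Real.exp (-C * t)) t := by
        have := (Real.hasDerivAt_exp (-C * t)).comp t ((hasDerivAt_id t).const_mul (-C))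
        simpa [Function.comp_def, mul_comm] using this
      have : HasDerivAt (fun t => h1 t * Real.exp (-C * t))
          (h2 t * Real.exp (-C * t) + h1 t * (-C * Real.exp (-C * t))) t :=
        (hd2 t (hsubσ ht)).fun_mul he
      convert this using 1
      ring
    have hganti : AntitoneOn g (Icc σ t2) := by
      apply antitoneOn_of_deriv_nonpos (convex_Icc _ _)
        (fun t ht => (hgd t ht).continuousAt.continuousWithinAt)
      · intro t ht
        rw [interior_Icc] at ht
        exact (hgd t (Ioo_subset_Icc_self ht)).differentiableAt.differentiableWithinAt
      · intro t ht
        rw [interior_Icc] at ht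
        rw [(hgd t (Ioo_subset_Icc_self ht)).deriv]
        have h1t : 0 < h1 t := hpos t ⟨ht.1, ht.2.le⟩
        have := hineq t (hsubσ (Ioo_subset_Icc_self ht)) (hhpos t ⟨ht.1, ht.2.le⟩)
        rw [abs_of_pos h1t] at this
        have : h2 t - C * h1 t ≤ 0 := by linarith
        exact mul_nonpos_of_nonpos_of_nonneg this (Real.exp_pos _).le
    have hg2 : g t2 ≤ g σ := hganti (left_mem_Icc.2 hσ2.le) (right_mem_Icc.2 hσ2.le) hσ2.le
    have hgσ : g σ ≤ 0 := mul_nonpos_of_nonpos_of_nonneg hσK.2 (Real.exp_pos _).le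
    have hgt2 : 0 < g t2 := mul_pos ht2pos (Real.exp_pos _)
    linarith
  -- h is antitone, h t0 = 0, h ≥ 0 hence h ≡ 0
  intro t ht
  have hanti : AntitoneOn h (Icc t0 a) := by
    apply antitoneOn_of_deriv_nonpos (convex_Icc _ _)
      (fun s hs => (hd1 s hs).continuousAt.continuousWithinAt)
    · intro s hs
      rw [interior_Icc] at hs
      exact (hd1 s (Ioo_subset_Icc_self hs)).differentiableAt.differentiableWithinAt
    · intro s hs
      rw [interior_Icc] at hs
      rw [(hd1 s (Ioo_subset_Icc_self hs)).deriv]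
      exact claim s (Ioo_subset_Icc_self hs)
  have := hanti (left_mem_Icc.2 h0a) ht ht.1
  have := hnn t ht
  linarith [h0 ▸ this]

lemma gron_left (h h1 h2 : ℝ → ℝ) (C t0 a : ℝ) (hC : 0 ≤ C) (h0a : a ≤ t0)
    (hd1 : ∀ t ∈ Icc a t0, HasDerivAt h (h1 t) t)
    (hd2 : ∀ t ∈ Icc a t0, HasDerivAt h1 (h2 t) t)
    (hnn : ∀ t ∈ Icc a t0, 0 ≤ h t)
    (h10 : 0 ≤ h1 t0) (h0 : h t0 = 0)
    (hineq : ∀ t ∈ Icc a t0, 0 < h t → h2 t ≤ C * |h1 t|) :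
    ∀ t ∈ Icc a t0, h t = 0 := by
  set r : ℝ → ℝ := fun t => 2 * t0 - t with hr
  have hrt0 : r t0 = t0 := by simp [hr]; ring
  have hrmem : ∀ t ∈ Icc t0 (2 * t0 - a), r t ∈ Icc a t0 := by
    intro t ht
    simp only [hr, mem_Icc] at ht ⊢
    constructor <;> linarith [ht.1, ht.2]
  have hrd : ∀ t : ℝ, HasDerivAt r (-1) t := by
    intro t
    simpa using (hasDerivAt_id t).const_sub (2 * t0)
  have key := gron_right (fun t => h (r t)) (fun t => -(h1 (r t))) (fun t => h2 (r t))
    C t0 (2 * t0 - a) hC (by linarith)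
    (fun t ht => by simpa [Function.comp_def] using ((hd1 (r t) (hrmem t ht)).comp t (hrd t)))
    (fun t ht => by simpa [Function.comp_def] using ((hd2 (r t) (hrmem t ht)).comp t (hrd t)).fun_neg)
    (fun t ht => hnn (r t) (hrmem t ht))
    (by simp [hrt0, h10])
    (by simp [hrt0, h0])
    (fun t ht hp => by simpa using hineq (r t) (hrmem t ht) hp)
  intro s hs
  have hmem : 2 * t0 - s ∈ Icc t0 (2 * t0 - a) := by
    simp only [mem_Icc] at hs ⊢
    constructor <;> linarith [hs.1, hs.2]
  have := key (2 * t0 - s) hmem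
  simpa [hr, show 2 * t0 - (2 * t0 - s) = s by ring] using this

lemma local_eq (b : ℝ) (u v : ℝ → ℝ)
    (hu2 : ContDiffOn ℝ 2 u (Set.Ioo 0 b)) (hv2 : ContDiffOn ℝ 2 v (Set.Ioo 0 b))
    (huv : ∀ t ∈ Set.Ioo 0 b, v t ≤ u t)
    (hmono : ∀ t ∈ Set.Ioo 0 b, 0 < max (deriv u t) (deriv v t))
    (hmain : ∀ t s : ℝ, 0 < t → t < s → s < b → u t = v s →
      deriv (deriv u) t ≤ deriv (deriv v) s)
    (t0 : ℝ) (ht0 : t0 ∈ Set.Ioo 0 b) (heq : u t0 = v t0) :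
    ∀ᶠ t in 𝓝 t0, u t = v t := by
  set s : Set ℝ := Set.Ioo 0 b with hs
  have hso : IsOpen s := isOpen_Ioo
  have hsnhds : s ∈ 𝓝 t0 := hso.mem_nhds ht0
  -- basic differentiability facts
  have hudiff : DifferentiableOn ℝ u s := hu2.differentiableOn (by norm_num)
  have hvdiff : DifferentiableOn ℝ v s := hv2.differentiableOn (by norm_num)
  have hatu : ∀ t ∈ s, HasDerivAt u (deriv u t) t := fun t ht =>
    (hudiff.differentiableAt (hso.mem_nhds ht)).hasDerivAt
  have hatv : ∀ t ∈ s, HasDerivAt v (deriv v t) t := fun t ht =>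
    (hvdiff.differentiableAt (hso.mem_nhds ht)).hasDerivAt
  have hu' : ContDiffOn ℝ 1 (deriv u) s := hu2.deriv_of_isOpen hso (by norm_num)
  have hv' : ContDiffOn ℝ 1 (deriv v) s := hv2.deriv_of_isOpen hso (by norm_num)
  have hatv' : ∀ t ∈ s, HasDerivAt (deriv v) (deriv (deriv v) t) t := fun t ht =>
    ((hv'.differentiableOn (by norm_num)).differentiableAt (hso.mem_nhds ht)).hasDerivAt
  have hcv'' : ContinuousOn (deriv (deriv v)) s := by
    have h0 : ContDiffOn ℝ 0 (deriv (deriv v)) s := hv'.deriv_of_isOpen hso (by norm_num)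
    exact h0.continuousOn
  -- Step 1 : equal derivatives at t0
  have hwmin : IsLocalMin (fun t => u t - v t) t0 := by
    filter_upwards [hsnhds] with t ht
    have := huv t ht
    simp only [heq]
    linarith
  have hderiv_eq : deriv u t0 = deriv v t0 := by
    have h1 := hwmin.deriv_eq_zero
    rw [deriv_fun_sub (hudiff.differentiableAt hsnhds) (hvdiff.differentiableAt hsnhds)] at h1
    linarith
  set c := deriv v t0 with hcdef
  have hc : 0 < c := by
    have := hmono t0 ht0
    rwa [hderiv_eq, max_self] at this
  -- Step 2 : local inverse of v at t0
  have hvat : ContDiffAt ℝ 2 v t0 := (hv2 t0 ht0).contDiffAt hsnhds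
  have hdvat : HasDerivAt v c t0 := hatv t0 ht0
  have hfd : HasFDerivAt v
      (ContinuousLinearEquiv.unitsEquivAut ℝ (Units.mk0 c hc.ne') : ℝ →L[ℝ] ℝ) t0 :=
    hdvat.hasFDerivAt_equiv hc.ne'
  have hn12 : (2 : WithTop ℕ∞) ≠ 0 := by norm_num
  set V : ℝ → ℝ := hvat.localInverse hfd hn12 with hVdef
  have hVcd : ContDiffAt ℝ 2 V (v t0) := hvat.to_localInverse hfd hn12
  have hVv : V (v t0) = t0 := hvat.localInverse_apply_image hfd hn12
  have hright : ∀ᶠ y in 𝓝 (v t0), v (V y) = y :=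
    (hvat.hasStrictFDerivAt' hfd hn12).eventually_right_inverse
  -- Step 3 : φ = V ∘ u
  set φ : ℝ → ℝ := fun t => V (u t) with hφdef
  have huat : ContDiffAt ℝ 2 u t0 := (hu2 t0 ht0).contDiffAt hsnhds
  have hφcd : ContDiffAt ℝ 2 φ t0 := by
    have : ContDiffAt ℝ 2 V (u t0) := heq ▸ hVcd
    exact this.comp t0 huat
  have hφt0 : φ t0 = t0 := by
    simp only [hφdef, heq, hVv]
  have hφcont : ContinuousAt φ t0 := hφcd.continuousAt
  -- Step 4 : interval J where deriv v > 0
  have hvposev : ∀ᶠ x in 𝓝 t0, x ∈ s ∧ 0 < deriv v x := by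
    have h1 : ∀ᶠ x in 𝓝 t0, 0 < deriv v x := by
      have hcv' : ContinuousAt (deriv v) t0 := (hv'.continuousOn.continuousAt hsnhds)
      exact hcv'.eventually_mem (Ioi_mem_nhds hc)
    filter_upwards [hsnhds, h1] with x h2 h3 using ⟨h2, h3⟩
  obtain ⟨l, r, hlr, hJsub⟩ := mem_nhds_iff_exists_Ioo_subset.1 hvposev
  set J := Ioo l r with hJdef
  have hJopen : IsOpen J := isOpen_Ioo
  have hJs : J ⊆ s := fun x hx => (hJsub hx).1
  have hJpos : ∀ x ∈ J, 0 < deriv v x := fun x hx => (hJsub hx).2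
  have hJmono : StrictMonoOn v J := by
    apply strictMonoOn_of_deriv_pos (convex_Ioo _ _)
      (fun x hx => ((hatv x (hJs hx)).continuousAt).continuousWithinAt)
    intro x hx
    rw [interior_Ioo] at hx
    exact hJpos x hx
  -- Step 5 : neighborhood where φ is C²
  obtain ⟨U0, hU0, hφon0⟩ := hφcd.contDiffOn le_rfl (by simp)
  obtain ⟨l1, r1, hlr1, hI0sub⟩ := mem_nhds_iff_exists_Ioo_subset.1 hU0
  set I0 := Ioo l1 r1 with hI0def
  have hI0open : IsOpen I0 := isOpen_Ioo
  have hφonI0 : ContDiffOn ℝ 2 φ I0 := hφon0.mono hI0sub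
  have hφdiffI0 : ∀ t ∈ I0, HasDerivAt φ (deriv φ t) t := fun t ht =>
    ((hφonI0.differentiableOn (by norm_num)).differentiableAt (hI0open.mem_nhds ht)).hasDerivAt
  have hφ'cd : ContDiffOn ℝ 1 (deriv φ) I0 := hφonI0.deriv_of_isOpen hI0open (by norm_num)

  have hφ'diffI0 : ∀ t ∈ I0, HasDerivAt (deriv φ) (deriv (deriv φ) t) t := fun t ht =>
    ((hφ'cd.differentiableOn (by norm_num)).differentiableAt (hI0open.mem_nhds ht)).hasDerivAt
  have hφ'cont : ContinuousAt (deriv φ) t0 :=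
    hφ'cd.continuousOn.continuousAt (hI0open.mem_nhds hlr1)
  -- Step 6 : the bound C
  set F : ℝ → ℝ := fun t => deriv (deriv v) (φ t) * (1 + deriv φ t) / deriv v (φ t) with hFdef
  have hφt0s : φ t0 ∈ s := by rw [hφt0]; exact ht0
  have hFcont : ContinuousAt F t0 := by
    have h1 : ContinuousAt (fun t => deriv (deriv v) (φ t)) t0 :=
      (hcv''.continuousAt (hso.mem_nhds hφt0s)).comp hφcont
    have h2 : ContinuousAt (fun t => deriv v (φ t)) t0 :=
      (hv'.continuousOn.continuousAt (hso.mem_nhds hφt0s)).comp hφcont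
    have h3 : (fun t => deriv v (φ t)) t0 ≠ 0 := by
      simp only [hφt0]; exact hc.ne'
    exact ((h1.mul (continuousAt_const.add hφ'cont)).div h2 h3)
  set C := |F t0| + 1 with hCdef
  have hCpos : (0:ℝ) ≤ C := by positivity
  have hFbound : ∀ᶠ t in 𝓝 t0, |F t| ≤ C := by
    have : ∀ᶠ t in 𝓝 t0, F t ∈ Ioo (-C) C := by
      apply hFcont.eventually_mem
      apply Ioo_mem_nhds
      · cases abs_cases (F t0) with
        | inl h => simp [hCdef]; linarith [abs_nonneg (F t0), h.1]
        | inr h => simp [hCdef]; linarith [h.1]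
      · simp [hCdef]; linarith [le_abs_self (F t0)]
    filter_upwards [this] with t ht
    rw [abs_le]; exact ⟨ht.1.le, ht.2.le⟩
  -- Step 7 : gather all eventual facts into one interval I
  have hJnhdsφ : J ∈ 𝓝 (φ t0) := by rw [hφt0]; exact hJopen.mem_nhds hlr
  have hrightu : ∀ᶠ y in 𝓝 (u t0), v (V y) = y := by rw [heq]; exact hright
  have hEall : ∀ᶠ t in 𝓝 t0,
      (t ∈ J ∧ φ t ∈ J ∧ v (φ t) = u t ∧ t ∈ I0 ∧ |F t| ≤ C) := by
    filter_upwards [hJopen.mem_nhds hlr, hφcont.eventually_mem hJnhdsφ,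
      huat.continuousAt.eventually hrightu, hI0open.mem_nhds hlr1, hFbound] with
      t e1 e2 e3 e4 e5
    exact ⟨e1, e2, e3, e4, e5⟩
  obtain ⟨l2, r2, hlr2, hIsub⟩ := mem_nhds_iff_exists_Ioo_subset.1 hEall
  set I := Ioo l2 r2 with hIdef
  have hIopen : IsOpen I := isOpen_Ioo
  have key : ∀ t ∈ I, t ∈ J ∧ φ t ∈ J ∧ v (φ t) = u t ∧ t ∈ I0 ∧ |F t| ≤ C :=
    fun t ht => hIsub ht
  have ht0I : t0 ∈ I := hlr2
  -- φ t ≥ t on I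
  have hφle : ∀ t ∈ I, t ≤ φ t := by
    intro t ht
    obtain ⟨h1, h2, h3, -, -⟩ := key t ht
    by_contra hlt
    push_neg at hlt
    have hv1 := hJmono h2 h1 hlt
    have hv2 := huv t (hJs h1)
    rw [h3] at hv1
    linarith
  have hφd : ∀ t ∈ I, HasDerivAt φ (deriv φ t) t :=
    fun t ht => hφdiffI0 t (key t ht).2.2.2.1
  -- first derivative identity
  have hP5 : ∀ t ∈ I, deriv u t = deriv v (φ t) * deriv φ t := by
    intro t ht
    obtain ⟨h1, h2, h3, h4, -⟩ := key t ht
    have hvd : HasDerivAt v (deriv v (φ t)) (φ t) := hatv _ (hJs h2)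
    have hcomp : HasDerivAt (fun x => v (φ x)) (deriv v (φ t) * deriv φ t) t :=
      hvd.comp t (hφdiffI0 t h4)
    have hev : (fun x => v (φ x)) =ᶠ[𝓝 t] u := by
      filter_upwards [hIopen.mem_nhds ht] with x hx using (key x hx).2.2.1
    exact ((hcomp.congr_of_eventuallyEq hev.symm).deriv)
  have hφ'1 : deriv φ t0 = 1 := by
    have h1 := hP5 t0 ht0I
    rw [hφt0] at h1
    have h2 : c * deriv φ t0 = c := by rw [hcdef]; exact h1.symm.trans hderiv_eq
    have h3 : c * deriv φ t0 = c * 1 := by rw [mul_one]; exact h2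
    exact mul_left_cancel₀ hc.ne' h3
  -- second derivative identity
  have hP6 : ∀ t ∈ I, deriv (deriv u) t =
      deriv (deriv v) (φ t) * deriv φ t * deriv φ t + deriv v (φ t) * deriv (deriv φ) t := by
    intro t ht
    obtain ⟨h1, h2, h3, h4, -⟩ := key t ht
    have hA : HasDerivAt (fun x => deriv v (φ x) * deriv φ x)
        (deriv (deriv v) (φ t) * deriv φ t * deriv φ t
          + deriv v (φ t) * deriv (deriv φ) t) t := by
      have h5 : HasDerivAt (fun x => deriv v (φ x)) (deriv (deriv v) (φ t) * deriv φ t) t :=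
        (hatv' _ (hJs h2)).comp t (hφdiffI0 t h4)
      have h6 : HasDerivAt (deriv φ) (deriv (deriv φ) t) t := hφ'diffI0 t h4
      have h7 := h5.fun_mul h6
      convert h7 using 1 <;> ring
    have hev : (fun x => deriv v (φ x) * deriv φ x) =ᶠ[𝓝 t] deriv u := by
      filter_upwards [hIopen.mem_nhds ht] with x hx using (hP5 x hx).symm
    exact (hA.congr_of_eventuallyEq hev.symm).deriv
  -- the key differential inequality
  have hineqI : ∀ t ∈ I, t < φ t → deriv (deriv φ) t ≤ C * |deriv φ t - 1| := by
    intro t ht hlt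
    obtain ⟨h1, h2, h3, h4, h5⟩ := key t ht
    have hts : t ∈ s := hJs h1
    have hφts : φ t ∈ s := hJs h2
    have hmm := hmain t (φ t) hts.1 hlt hφts.2 h3.symm
    have hD : 0 < deriv v (φ t) := hJpos _ h2
    have h6 := hP6 t ht
    set B := deriv (deriv v) (φ t) with hB
    set D := deriv v (φ t) with hDdef
    set p := deriv φ t with hp
    set q := deriv (deriv φ) t with hq
    have h7 : B * p * p + D * q ≤ B := by rw [← h6]; exact hmm
    have hq1 : q ≤ B * (1 + p) / D * (1 - p) := by
      rw [div_mul_eq_mul_div, le_div_iff₀ hD]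
      nlinarith
    have hq2 : B * (1 + p) / D * (1 - p) ≤ |B * (1 + p) / D| * |1 - p| := by
      calc B * (1 + p) / D * (1 - p) ≤ |B * (1 + p) / D * (1 - p)| := le_abs_self _
        _ = |B * (1 + p) / D| * |1 - p| := abs_mul _ _
    have hFt : |B * (1 + p) / D| ≤ C := h5
    have hq3 : |B * (1 + p) / D| * |1 - p| ≤ C * |1 - p| :=
      mul_le_mul_of_nonneg_right hFt (abs_nonneg _)
    rw [abs_sub_comm] at hq2 hq3
    exact le_trans hq1 (le_trans hq2 hq3)
  -- apply the Gronwall-type lemmas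
  set h : ℝ → ℝ := fun t => φ t - t with hhdef
  set h1f : ℝ → ℝ := fun t => deriv φ t - 1 with hh1def
  have hd1I : ∀ t ∈ I, HasDerivAt h (h1f t) t := by
    intro t ht
    simpa using (hφd t ht).fun_sub (hasDerivAt_id t)
  have hd2I : ∀ t ∈ I, HasDerivAt h1f (deriv (deriv φ) t) t :=
    fun t ht => (hφ'diffI0 t (key t ht).2.2.2.1).sub_const 1
  have hnnI : ∀ t ∈ I, 0 ≤ h t := fun t ht => sub_nonneg.2 (hφle t ht)
  have hht0 : h t0 = 0 := by simp [hhdef, hφt0]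
  have hh1t0 : h1f t0 = 0 := by simp [hh1def, hφ'1]
  have hgineq : ∀ t ∈ I, 0 < h t → deriv (deriv φ) t ≤ C * |h1f t| := by
    intro t ht hpos
    exact hineqI t ht (by simpa [hhdef, sub_pos] using hpos)
  set m1 := (l2 + t0) / 2 with hm1
  set m2 := (t0 + r2) / 2 with hm2
  have hm1t0 : m1 < t0 := by simp only [hm1]; linarith [hlr2.1]
  have hm2t0 : t0 < m2 := by simp only [hm2]; linarith [hlr2.2]
  have hsubR : Icc t0 m2 ⊆ I := fun x hx =>
    ⟨lt_of_lt_of_le hlr2.1 hx.1, lt_of_le_of_lt hx.2 (by simp only [hm2]; linarith [hlr2.2])⟩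
  have hsubL : Icc m1 t0 ⊆ I := fun x hx =>
    ⟨lt_of_lt_of_le (by simp only [hm1]; linarith [hlr2.1]) hx.1, lt_of_le_of_lt hx.2 hlr2.2⟩
  have hR := gron_right h h1f (deriv (deriv φ)) C t0 m2 hCpos hm2t0.le
    (fun t ht => hd1I t (hsubR ht)) (fun t ht => hd2I t (hsubR ht))
    (fun t ht => hnnI t (hsubR ht)) hh1t0.le hht0
    (fun t ht => hgineq t (hsubR ht))
  have hL := gron_left h h1f (deriv (deriv φ)) C t0 m1 hCpos hm1t0.le
    (fun t ht => hd1I t (hsubL ht)) (fun t ht => hd2I t (hsubL ht))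
    (fun t ht => hnnI t (hsubL ht)) hh1t0.ge hht0
    (fun t ht => hgineq t (hsubL ht))
  -- conclude
  have hfinal : ∀ t ∈ Ioo m1 m2, u t = v t := by
    intro t ht
    have htI : t ∈ I := by
      constructor
      · exact lt_of_le_of_lt (by simp only [hm1]; linarith [hlr2.1] : l2 ≤ m1) ht.1
      · exact lt_of_lt_of_le ht.2 (by simp only [hm2]; linarith [hlr2.2] : m2 ≤ r2)
    have hφt : φ t = t := by
      rcases le_total t t0 with hle | hle
      · have := hL t ⟨ht.1.le, hle⟩
        simpa [hhdef, sub_eq_zero] using this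
      · have := hR t ⟨hle, ht.2.le⟩
        simpa [hhdef, sub_eq_zero] using this
    have := (key t htI).2.2.1
    rw [hφt] at this
    exact this.symm
  filter_upwards [Ioo_mem_nhds hm1t0 hm2t0] with t ht using hfinal t ht

/-- Lemma 2.1 of Li–Nirenberg, a variation of the strong maximum principle. -/
theorem stmt_1 (b : ℝ) (hb : 0 < b) (u v : ℝ → ℝ)
    (hu2 : ContDiffOn ℝ 2 u (Set.Ioo 0 b)) (hv2 : ContDiffOn ℝ 2 v (Set.Ioo 0 b))
    (huv : ∀ t ∈ Set.Ioo 0 b, v t ≤ u t)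
    (hmono : ∀ t ∈ Set.Ioo 0 b, 0 < max (deriv u t) (deriv v t))
    (hmain : ∀ t s : ℝ, 0 < t → t < s → s < b → u t = v s →
      deriv (deriv u) t ≤ deriv (deriv v) s) :
    (∀ t ∈ Set.Ioo 0 b, v t < u t) ∨ (∀ t ∈ Set.Ioo 0 b, u t = v t) := by
  by_cases hex : ∃ t0 ∈ Set.Ioo 0 b, u t0 = v t0
  · right
    obtain ⟨t0, ht0, heq⟩ := hex
    intro t1 ht1
    by_contra hne
    -- the set where u = v, and the set where u ≠ v, are both open within Ioo 0 b
    set U : Set ℝ := interior {t | u t = v t} with hU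
    set W : Set ℝ := {t | t ∈ Set.Ioo 0 b ∧ u t ≠ v t} with hW
    have hUopen : IsOpen U := isOpen_interior
    have hWopen : IsOpen W := by
      rw [isOpen_iff_mem_nhds]
      intro t ht
      have hsnhds : Set.Ioo 0 b ∈ 𝓝 t := isOpen_Ioo.mem_nhds ht.1
      have hcu : ContinuousAt u t := ((hu2.continuousOn).continuousAt hsnhds)
      have hcv : ContinuousAt v t := ((hv2.continuousOn).continuousAt hsnhds)
      have hne2 : u t - v t ≠ 0 := sub_ne_zero.2 ht.2
      have : ∀ᶠ x in 𝓝 t, u x - v x ≠ 0 := (hcu.sub hcv).eventually_ne hne2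
      filter_upwards [this, hsnhds] with x hx1 hx2
      exact ⟨hx2, sub_ne_zero.1 hx1⟩
    have hcover : Set.Ioo 0 b ⊆ U ∪ W := by
      intro t ht
      by_cases he : u t = v t
      · left
        rw [hU, mem_interior_iff_mem_nhds]
        exact local_eq b u v hu2 hv2 huv hmono hmain t ht he
      · exact Or.inr ⟨ht, he⟩
    have hUne : (Set.Ioo 0 b ∩ U).Nonempty := by
      refine ⟨t0, ht0, ?_⟩
      rw [hU, mem_interior_iff_mem_nhds]
      exact local_eq b u v hu2 hv2 huv hmono hmain t0 ht0 heq
    have hWne : (Set.Ioo 0 b ∩ W).Nonempty := ⟨t1, ht1, ht1, hne⟩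
    obtain ⟨x, -, hxU, hxW⟩ := isPreconnected_Ioo U W hUopen hWopen hcover hUne hWne
    have : u x = v x := by
      have h1 : x ∈ {t | u t = v t} := interior_subset (by simpa [hU] using hxU)
      exact h1
    exact hxW.2 this
  · left
    intro t ht
    exact lt_of_le_of_ne (huv t ht) (fun he => hex ⟨t, ht, he.symm⟩)
end

section
/- Let c > 0, let f : (0,∞) → ℝ be bounded on every compact subset of (0,∞), and let u, w be real functions on [0,c) that are continuously differentiable on [0,c), positive on (0,c), twice differentiable on (0,c), and satisfy u''(t) = f(u(t)) and w''(t) = f(w(t)) for all t ∈ (0,c). Assume u(0) = w(0) = 0, u'(0) = w'(0), and u'(t) > 0 for all t ∈ (0,c). Then u(t) = w(t) for all t ∈ [0,c). -/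
open Set Filter Topology

private lemma const_of_deriv_zero_aux {E : ℝ → ℝ} {a b : ℝ} (hab : a ≤ b)
    (hc : ContinuousOn E (Set.Icc a b))
    (hd : ∀ t ∈ Set.Ioo a b, HasDerivAt E 0 t) : ∀ t ∈ Set.Icc a b, E t = E a := by
  intro t ht
  have hdiff : DifferentiableOn ℝ E (interior (Set.Icc a b)) := by
    rw [interior_Icc]
    exact fun x hx => (hd x hx).differentiableAt.differentiableWithinAt
  have hderiv : ∀ x ∈ interior (Set.Icc a b), deriv E x = 0 := by
    rw [interior_Icc]
    exact fun x hx => (hd x hx).deriv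
  have h1 : MonotoneOn E (Set.Icc a b) :=
    monotoneOn_of_deriv_nonneg (convex_Icc a b) hc hdiff (fun x hx => (hderiv x hx).ge)
  have h2 : AntitoneOn E (Set.Icc a b) :=
    antitoneOn_of_deriv_nonpos (convex_Icc a b) hc hdiff (fun x hx => (hderiv x hx).le)
  exact le_antisymm (h2 ⟨le_rfl, hab⟩ ht ht.1) (h1 ⟨le_rfl, hab⟩ ht ht.1)

private lemma stmt_2_extend (c : ℝ) (hc : 0 < c) (f : ℝ → ℝ)
    (u w : ℝ → ℝ)
    (hu1 : ContDiffOn ℝ 1 u (Set.Ico 0 c)) (hw1 : ContDiffOn ℝ 1 w (Set.Ico 0 c))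
    (hupos : ∀ t ∈ Set.Ioo 0 c, 0 < u t) (hwpos : ∀ t ∈ Set.Ioo 0 c, 0 < w t)
    (hueq : ∀ t ∈ Set.Ioo 0 c, HasDerivAt (deriv u) (f (u t)) t)
    (hweq : ∀ t ∈ Set.Ioo 0 c, HasDerivAt (deriv w) (f (w t)) t)
    (hu0 : u 0 = 0) (hw0 : w 0 = 0)
    (h'0 : derivWithin u (Set.Ico 0 c) 0 = derivWithin w (Set.Ico 0 c) 0)
    (hu' : ∀ t ∈ Set.Ioo 0 c, 0 < deriv u t)
    (b : ℝ) (hb : b ∈ Set.Ico 0 c) (hag : ∀ s ∈ Set.Icc 0 b, u s = w s) :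
    ∃ ε > 0, ∀ t ∈ Set.Icc b (b + ε), u t = w t := by
  have hud : UniqueDiffOn ℝ (Set.Ico 0 c) := uniqueDiffOn_Ico 0 c
  set g := derivWithin u (Set.Ico 0 c) with hgdef
  set h := derivWithin w (Set.Ico 0 c) with hhdef
  have hgc : ContinuousOn g (Set.Ico 0 c) := hu1.continuousOn_derivWithin hud le_rfl
  have hhc : ContinuousOn h (Set.Ico 0 c) := hw1.continuousOn_derivWithin hud le_rfl
  have hnhds : ∀ t ∈ Set.Ioo 0 c, Set.Ico 0 c ∈ 𝓝 t := fun t ht => Ico_mem_nhds ht.1 ht.2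
  have hgd : ∀ t ∈ Set.Ioo 0 c, g t = deriv u t := fun t ht =>
    derivWithin_of_mem_nhds (hnhds t ht)
  have hhd : ∀ t ∈ Set.Ioo 0 c, h t = deriv w t := fun t ht =>
    derivWithin_of_mem_nhds (hnhds t ht)
  have hgpos : ∀ t ∈ Set.Ioo 0 c, 0 < g t := fun t ht => (hgd t ht) ▸ hu' t ht
  have hudiff : ∀ t ∈ Set.Ioo 0 c, HasDerivAt u (g t) t := by
    intro t ht
    have h1 : DifferentiableAt ℝ u t :=
      (hu1.differentiableOn one_ne_zero t ⟨ht.1.le, ht.2⟩).differentiableAt (hnhds t ht)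
    rw [hgd t ht]; exact h1.hasDerivAt
  have hwdiff : ∀ t ∈ Set.Ioo 0 c, HasDerivAt w (h t) t := by
    intro t ht
    have h1 : DifferentiableAt ℝ w t :=
      (hw1.differentiableOn one_ne_zero t ⟨ht.1.le, ht.2⟩).differentiableAt (hnhds t ht)
    rw [hhd t ht]; exact h1.hasDerivAt
  have hum : StrictMonoOn u (Set.Ico 0 c) :=
    strictMonoOn_of_deriv_pos (convex_Ico 0 c) hu1.continuousOn
      (by rw [interior_Ico]; exact hu')
  set d := (b + c) / 2 with hddef
  have hbd : b < d := by rw [hddef]; linarith [hb.2]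
  have hdc : d < c := by rw [hddef]; linarith [hb.1]
  have hd0 : 0 < d := lt_of_le_of_lt hb.1 hbd
  have hdmem : d ∈ Set.Ioo 0 c := ⟨hd0, hdc⟩
  set L := u d with hLdef
  have hL0 : 0 < L := hupos d hdmem
  have hsub : Set.Icc 0 d ⊆ Set.Ico 0 c := fun x hx => ⟨hx.1, lt_of_le_of_lt hx.2 hdc⟩
  have humd : StrictMonoOn u (Set.Icc 0 d) := hum.mono hsub
  have himage : u '' Set.Icc 0 d = Set.Icc 0 L := by
    apply Set.Subset.antisymm
    · rintro s ⟨t, ht, rfl⟩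
      constructor
      · rw [← hu0]; exact humd.monotoneOn ⟨le_rfl, hd0.le⟩ ht ht.1
      · exact humd.monotoneOn ht ⟨hd0.le, le_rfl⟩ ht.2
    · have h1 := intermediate_value_Icc hd0.le (hu1.continuousOn.mono hsub)
      rw [hu0] at h1
      exact h1
  set v := Function.invFunOn u (Set.Icc 0 d) with hvdef
  have hvu : ∀ t ∈ Set.Icc 0 d, v (u t) = t := fun t ht => humd.injOn.leftInvOn_invFunOn ht
  have hex : ∀ s ∈ Set.Icc 0 L, ∃ t ∈ Set.Icc 0 d, u t = s := by
    intro s hs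
    rw [← himage] at hs
    rcases hs with ⟨t, ht, rfl⟩
    exact ⟨t, ht, rfl⟩
  have huv : ∀ s ∈ Set.Icc 0 L, u (v s) = s := fun s hs => Function.invFunOn_eq (hex s hs)
  have hvmem : ∀ s ∈ Set.Icc 0 L, v s ∈ Set.Icc 0 d := fun s hs =>
    Function.invFunOn_mem (hex s hs)
  have hv0 : v 0 = 0 := by
    have h1 := hvu 0 ⟨le_rfl, hd0.le⟩
    rwa [hu0] at h1
  have hvL : v L = d := hvu d ⟨hd0.le, le_rfl⟩
  have hvmono : StrictMonoOn v (Set.Icc 0 L) := by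
    intro s1 h1 s2 h2 hlt
    by_contra hcon
    push_neg at hcon
    have h3 : s2 ≤ s1 := by
      calc s2 = u (v s2) := (huv s2 h2).symm
        _ ≤ u (v s1) := humd.monotoneOn (hvmem s2 h2) (hvmem s1 h1) hcon
        _ = s1 := huv s1 h1
    exact absurd hlt (not_lt.2 h3)
  have hvimage : v '' Set.Icc 0 L = Set.Icc 0 d := by
    apply Set.Subset.antisymm
    · rintro x ⟨s, hs, rfl⟩; exact hvmem s hs
    · intro t ht
      refine ⟨u t, ?_, hvu t ht⟩
      rw [← himage]; exact ⟨t, ht, rfl⟩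
  have hvmemo : ∀ s ∈ Set.Ioo 0 L, v s ∈ Set.Ioo 0 d := by
    intro s hs
    have hsc : s ∈ Set.Icc 0 L := ⟨hs.1.le, hs.2.le⟩
    have h1 := hvmem s hsc
    have h2 := huv s hsc
    constructor
    · rcases h1.1.lt_or_eq with h3|h3
      · exact h3
      · exfalso
        rw [← h3, hu0] at h2
        exact hs.1.ne' h2.symm
    · rcases h1.2.lt_or_eq with h3|h3
      · exact h3
      · exfalso
        rw [h3] at h2
        exact hs.2.ne' h2
  have hvcont : ContinuousOn v (Set.Icc 0 L) := by
    intro s hs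
    rcases hs.1.lt_or_eq with h0|h0
    · rcases hs.2.lt_or_eq with h1|h1
      · have hio : s ∈ Set.Ioo 0 L := ⟨h0, h1⟩
        have hvs := hvmemo s hio
        have h2 : ContinuousAt v s := by
          apply hvmono.continuousAt_of_image_mem_nhds (Icc_mem_nhds h0 h1)
          rw [hvimage]
          exact Icc_mem_nhds hvs.1 hvs.2
        exact h2.continuousWithinAt
      · rw [h1]
        have h2 : ContinuousWithinAt v (Set.Iic L) L := by
          apply hvmono.continuousWithinAt_left_of_image_mem_nhdsWithin
            (Icc_mem_nhdsLE hL0)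
          rw [hvimage, hvL]
          exact Icc_mem_nhdsLE hd0
        exact h2.mono Set.Icc_subset_Iic_self
    · rw [← h0]
      have h2 : ContinuousWithinAt v (Set.Ici (0:ℝ)) 0 := by
        apply hvmono.continuousWithinAt_right_of_image_mem_nhdsWithin
          (Icc_mem_nhdsGE hL0)
        rw [hvimage, hv0]
        exact Icc_mem_nhdsGE hd0
      exact h2.mono Set.Icc_subset_Ici_self
  have hvderiv : ∀ s ∈ Set.Ioo 0 L, HasDerivAt v (g (v s))⁻¹ s := by
    intro s hs
    have hvs := hvmemo s hs
    have hvsc : v s ∈ Set.Ioo 0 c := ⟨hvs.1, lt_trans hvs.2 hdc⟩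
    apply HasDerivAt.of_local_left_inverse
    · exact hvcont.continuousAt (Icc_mem_nhds hs.1 hs.2)
    · exact hudiff (v s) hvsc
    · exact (hgpos (v s) hvsc).ne'
    · filter_upwards [Ioo_mem_nhds hs.1 hs.2] with y hy
      exact huv y ⟨hy.1.le, hy.2.le⟩
  -- choose ε
  have hwbub : w b = u b := (hag b ⟨hb.1, le_rfl⟩).symm
  have hubL : u b < L := by rw [hLdef]; exact hum hb ⟨hd0.le, hdc⟩ hbd
  have hwcb : ContinuousWithinAt w (Set.Ico 0 c) b := hw1.continuousOn b hb
  have hwbL : w b < L := by rw [hwbub]; exact hubL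
  have hpre : w ⁻¹' (Set.Iio L) ∈ 𝓝[Set.Ico 0 c] b := hwcb (Iio_mem_nhds hwbL)
  rcases Metric.mem_nhdsWithin_iff.mp hpre with ⟨δ, hδ, hball⟩
  set ε := min (δ/2) ((c - b)/2) with hεdef
  have hε : 0 < ε := lt_min (by linarith) (by linarith [hb.2])
  have hεδ : ε ≤ δ/2 := min_le_left _ _
  have hεc : ε ≤ (c - b)/2 := min_le_right _ _
  have hbεc : b + ε < c := by linarith [hb.2]
  have hIoc : ∀ t ∈ Set.Ioc b (b + ε), t ∈ Set.Ioo 0 c := fun t ht =>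
    ⟨lt_of_le_of_lt hb.1 ht.1, lt_of_le_of_lt ht.2 hbεc⟩
  have hwL : ∀ t ∈ Set.Ioc b (b + ε), w t ∈ Set.Ioo 0 L := by
    intro t ht
    refine ⟨hwpos t (hIoc t ht), ?_⟩
    have h1 : t ∈ Metric.ball b δ := by
      rw [Metric.mem_ball, Real.dist_eq, abs_sub_lt_iff]
      constructor
      · linarith [ht.2]
      · linarith [ht.1]
    exact hball ⟨h1, ⟨(hIoc t ht).1.le, (hIoc t ht).2⟩⟩
  have hIsub : Set.Icc b (b + ε) ⊆ Set.Ico 0 c := fun t ht =>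
    ⟨le_trans hb.1 ht.1, lt_of_le_of_lt ht.2 hbεc⟩
  have hwmap : Set.MapsTo w (Set.Icc b (b + ε)) (Set.Icc 0 L) := by
    intro t ht
    rcases ht.1.lt_or_eq with h1|h1
    · have h2 := hwL t ⟨h1, ht.2⟩
      exact ⟨h2.1.le, h2.2.le⟩
    · rw [← h1, hwbub]
      constructor
      · rw [← hu0]; exact hum.monotoneOn ⟨le_rfl, hc⟩ hb hb.1
      · exact hubL.le
  set τ := fun t => v (w t) with hτdef
  have hτcont : ContinuousOn τ (Set.Icc b (b + ε)) :=
    hvcont.comp (hw1.continuousOn.mono hIsub) hwmap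
  have hτb : τ b = b := by
    show v (w b) = b
    rw [hwbub]; exact hvu b ⟨hb.1, hbd.le⟩
  have hτmem : ∀ t ∈ Set.Ioc b (b + ε), τ t ∈ Set.Ioo 0 d := fun t ht => hvmemo _ (hwL t ht)
  have hτmemc : ∀ t ∈ Set.Ioc b (b + ε), τ t ∈ Set.Ioo 0 c := fun t ht =>
    ⟨(hτmem t ht).1, lt_trans (hτmem t ht).2 hdc⟩
  have huτ : ∀ t ∈ Set.Ioc b (b + ε), u (τ t) = w t := fun t ht =>
    huv (w t) ⟨(hwL t ht).1.le, (hwL t ht).2.le⟩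
  have hτd : ∀ t ∈ Set.Ioo b (b + ε), HasDerivAt τ ((g (τ t))⁻¹ * h t) t := by
    intro t ht
    have ht' : t ∈ Set.Ioc b (b + ε) := ⟨ht.1, ht.2.le⟩
    exact (hvderiv (w t) (hwL t ht')).comp t (hwdiff t (hIoc t ht'))
  have hgevent : ∀ x ∈ Set.Ioo 0 c, HasDerivAt g (f (u x)) x := by
    intro x hx
    apply (hueq x hx).congr_of_eventuallyEq
    filter_upwards [isOpen_Ioo.mem_nhds hx] with y hy
    exact hgd y hy
  have hhevent : ∀ x ∈ Set.Ioo 0 c, HasDerivAt h (f (w x)) x := by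
    intro x hx
    apply (hweq x hx).congr_of_eventuallyEq
    filter_upwards [isOpen_Ioo.mem_nhds hx] with y hy
    exact hhd y hy
  have hEd : ∀ t ∈ Set.Ioo b (b + ε),
      HasDerivAt (fun t => g (τ t) * g (τ t) - h t * h t) 0 t := by
    intro t ht
    have ht' : t ∈ Set.Ioc b (b + ε) := ⟨ht.1, ht.2.le⟩
    have h1 : HasDerivAt (fun t => g (τ t)) (f (w t) * ((g (τ t))⁻¹ * h t)) t := by
      have h2 := (hgevent (τ t) (hτmemc t ht')).comp t (hτd t ht)
      rwa [huτ t ht'] at h2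
    have h2 := hhevent t (hIoc t ht')
    have h3 := (h1.mul h1).sub (h2.mul h2)
    refine h3.congr_deriv ?_
    have hgne : g (τ t) ≠ 0 := (hgpos _ (hτmemc t ht')).ne'
    field_simp
    ring
  have hτmapIco : Set.MapsTo τ (Set.Icc b (b + ε)) (Set.Ico 0 c) := fun t ht =>
    hsub (hvmem _ (hwmap ht))
  have hEcont : ContinuousOn (fun t => g (τ t) * g (τ t) - h t * h t) (Set.Icc b (b + ε)) := by
    have hg1 : ContinuousOn (fun t => g (τ t)) (Set.Icc b (b + ε)) := hgc.comp hτcont hτmapIco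
    exact (hg1.mul hg1).sub ((hhc.mono hIsub).mul (hhc.mono hIsub))
  have hgb : g b = h b := by
    rcases hb.1.lt_or_eq with h0|h0
    · have hbio : b ∈ Set.Ioo 0 c := ⟨h0, hb.2⟩
      have h1 : HasDerivWithinAt u (g b) (Set.Icc 0 b) b := (hudiff b hbio).hasDerivWithinAt
      have h2 : HasDerivWithinAt w (g b) (Set.Icc 0 b) b :=
        h1.congr (fun y hy => (hag y hy).symm) (hag b ⟨h0.le, le_rfl⟩).symm
      have h3 : HasDerivWithinAt w (h b) (Set.Icc 0 b) b := (hwdiff b hbio).hasDerivWithinAt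
      have h4 := h2.derivWithin ((uniqueDiffOn_Icc h0) b ⟨h0.le, le_rfl⟩)
      have h5 := h3.derivWithin ((uniqueDiffOn_Icc h0) b ⟨h0.le, le_rfl⟩)
      rw [← h4, ← h5]
    · rw [← h0]; exact h'0
  have hEt : ∀ t ∈ Set.Icc b (b + ε), g (τ t) * g (τ t) = h t * h t := by
    intro t ht
    have h1 := const_of_deriv_zero_aux (by linarith) hEcont hEd t ht
    simp only [hτb, hgb, sub_self] at h1
    linarith [h1]
  have hgτpos : ∀ t ∈ Set.Ioc b (b + ε), 0 < g (τ t) := fun t ht => hgpos _ (hτmemc t ht)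
  have hhne : ∀ t ∈ Set.Ioc b (b + ε), h t ≠ 0 := by
    intro t ht h0
    have h1 := hEt t ⟨le_of_lt ht.1, ht.2⟩
    rw [h0, mul_zero] at h1
    exact (mul_pos (hgτpos t ht) (hgτpos t ht)).ne' h1
  have hhpos : ∀ t ∈ Set.Ioc b (b + ε), 0 < h t := by
    by_contra hcon
    push_neg at hcon
    obtain ⟨t₁, ht₁, ht₁le⟩ := hcon
    have ht₁neg : h t₁ < 0 := lt_of_le_of_ne ht₁le (hhne t₁ ht₁)
    rcases hb.1.lt_or_eq with h0|h0
    · have hbio : b ∈ Set.Ioo 0 c := ⟨h0, hb.2⟩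
      have hhb : 0 < h b := by rw [← hgb]; exact hgpos b hbio
      have hcont : ContinuousOn h (Set.Icc b t₁) :=
        (hhc.mono hIsub).mono (Set.Icc_subset_Icc le_rfl ht₁.2)
      obtain ⟨z, hz, hz0⟩ := intermediate_value_Icc' ht₁.1.le hcont ⟨ht₁neg.le, hhb.le⟩
      have hzI : z ∈ Set.Ioc b (b + ε) := by
        refine ⟨lt_of_le_of_ne hz.1 ?_, le_trans hz.2 ht₁.2⟩
        intro he
        rw [← he] at hz0
        exact hhb.ne' hz0
      exact hhne z hzI hz0
    · have hneg : ∀ t ∈ Set.Ioc b (b + ε), h t < 0 := by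
        intro t ht
        rcases lt_or_gt_of_ne (hhne t ht) with hlt|hgt
        · exact hlt
        · exfalso
          rcases le_total t t₁ with hle|hle
          · have hcont : ContinuousOn h (Set.Icc t t₁) :=
              (hhc.mono hIsub).mono (Set.Icc_subset_Icc ht.1.le ht₁.2)
            obtain ⟨z, hz, hz0⟩ := intermediate_value_Icc' hle hcont ⟨ht₁neg.le, hgt.le⟩
            exact hhne z ⟨lt_of_lt_of_le ht.1 hz.1, le_trans hz.2 ht₁.2⟩ hz0
          · have hcont : ContinuousOn h (Set.Icc t₁ t) :=
              (hhc.mono hIsub).mono (Set.Icc_subset_Icc ht₁.1.le ht.2)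
            obtain ⟨z, hz, hz0⟩ := intermediate_value_Icc hle hcont ⟨ht₁neg.le, hgt.le⟩
            exact hhne z ⟨lt_of_lt_of_le ht₁.1 hz.1, le_trans hz.2 ht.2⟩ hz0
      have hwanti : AntitoneOn w (Set.Icc b (b + ε)) := by
        apply antitoneOn_of_deriv_nonpos (convex_Icc _ _) (hw1.continuousOn.mono hIsub)
        · rw [interior_Icc]
          intro x hx
          exact (hwdiff x (hIoc x ⟨hx.1, hx.2.le⟩)).differentiableAt.differentiableWithinAt
        · rw [interior_Icc]
          intro x hx
          rw [← hhd x (hIoc x ⟨hx.1, hx.2.le⟩)]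
          exact (hneg x ⟨hx.1, hx.2.le⟩).le
      have h1 : w (b + ε) ≤ w b :=
        hwanti ⟨le_rfl, by linarith⟩ ⟨by linarith, le_rfl⟩ (by linarith)
      have h2 : 0 < w (b + ε) := hwpos _ (hIoc _ ⟨by linarith, le_rfl⟩)
      rw [← h0, hw0] at h1
      rw [← h0] at h2
      linarith
  have hheq : ∀ t ∈ Set.Ioc b (b + ε), h t = g (τ t) := by
    intro t ht
    have h1 := hEt t ⟨ht.1.le, ht.2⟩
    rcases mul_self_eq_mul_self_iff.mp h1 with h2|h2
    · exact h2.symm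
    · exfalso
      have h3 := hgτpos t ht
      rw [h2] at h3
      linarith [hhpos t ht]
  have hDd : ∀ t ∈ Set.Ioo b (b + ε), HasDerivAt (fun t => τ t - t) 0 t := by
    intro t ht
    have ht' : t ∈ Set.Ioc b (b + ε) := ⟨ht.1, ht.2.le⟩
    have h1 := (hτd t ht).sub (hasDerivAt_id t)
    refine h1.congr_deriv ?_
    rw [hheq t ht', inv_mul_cancel₀ (hgτpos t ht').ne']
    norm_num
  have hDcont : ContinuousOn (fun t => τ t - t) (Set.Icc b (b + ε)) :=
    hτcont.sub continuousOn_id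
  have hDconst := const_of_deriv_zero_aux (by linarith : b ≤ b + ε) hDcont hDd
  refine ⟨ε, hε, ?_⟩
  intro t ht
  have h1 := hDconst t ht
  simp only [hτb, sub_self] at h1
  have hτt : τ t = t := by linarith [h1]
  rcases ht.1.lt_or_eq with h2|h2
  · have h3 := huτ t ⟨h2, ht.2⟩
    rw [hτt] at h3
    exact h3
  · rw [← h2]; exact hag b ⟨hb.1, le_rfl⟩

/-- Lemma 2.2 of Li–Nirenberg. -/
theorem stmt_2 (c : ℝ) (hc : 0 < c) (f : ℝ → ℝ)
    (hf : ∀ s : Set ℝ, s ⊆ Set.Ioi 0 → IsCompact s → ∃ M : ℝ, ∀ x ∈ s, |f x| ≤ M)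
    (u w : ℝ → ℝ)
    (hu1 : ContDiffOn ℝ 1 u (Set.Ico 0 c)) (hw1 : ContDiffOn ℝ 1 w (Set.Ico 0 c))
    (hupos : ∀ t ∈ Set.Ioo 0 c, 0 < u t) (hwpos : ∀ t ∈ Set.Ioo 0 c, 0 < w t)
    (hueq : ∀ t ∈ Set.Ioo 0 c, HasDerivAt (deriv u) (f (u t)) t)
    (hweq : ∀ t ∈ Set.Ioo 0 c, HasDerivAt (deriv w) (f (w t)) t)
    (hu0 : u 0 = 0) (hw0 : w 0 = 0)
    (h'0 : derivWithin u (Set.Ico 0 c) 0 = derivWithin w (Set.Ico 0 c) 0)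
    (hu' : ∀ t ∈ Set.Ioo 0 c, 0 < deriv u t) :
    ∀ t ∈ Set.Ico 0 c, u t = w t := by
  intro t₀ ht₀
  set S := {x : ℝ | x ∈ Set.Icc 0 t₀ ∧ ∀ s ∈ Set.Icc 0 x, u s = w s} with hSdef
  have h0S : (0:ℝ) ∈ S := by
    refine ⟨⟨le_rfl, ht₀.1⟩, fun s hs => ?_⟩
    have hs0 : s = 0 := le_antisymm hs.2 hs.1
    rw [hs0, hu0, hw0]
  have hne : S.Nonempty := ⟨0, h0S⟩
  have hbdd : BddAbove S := ⟨t₀, fun x hx => hx.1.2⟩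
  set B := sSup S with hBdef
  have hB0 : 0 ≤ B := le_csSup hbdd h0S
  have hBt₀ : B ≤ t₀ := csSup_le hne fun x hx => hx.1.2
  have hBc : B < c := lt_of_le_of_lt hBt₀ ht₀.2
  have hBlt : ∀ s, 0 ≤ s → s < B → u s = w s := by
    intro s hs0 hsB
    obtain ⟨x, hxS, hsx⟩ := exists_lt_of_lt_csSup hne hsB
    exact hxS.2 s ⟨hs0, hsx.le⟩
  have hBeq : u B = w B := by
    rcases hB0.lt_or_eq with h0|h0
    · haveI hne2 : (𝓝[Set.Ico 0 B] B).NeBot := by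
        apply mem_closure_iff_nhdsWithin_neBot.mp
        rw [closure_Ico h0.ne]
        exact ⟨h0.le, le_rfl⟩
      have hsub2 : Set.Ico 0 B ⊆ Set.Ico 0 c := fun x hx => ⟨hx.1, lt_trans hx.2 hBc⟩
      have h1 : Filter.Tendsto u (𝓝[Set.Ico 0 B] B) (𝓝 (u B)) :=
        (hu1.continuousOn B ⟨hB0, hBc⟩).mono hsub2
      have h2 : Filter.Tendsto w (𝓝[Set.Ico 0 B] B) (𝓝 (w B)) :=
        (hw1.continuousOn B ⟨hB0, hBc⟩).mono hsub2
      have h3 : Filter.Tendsto u (𝓝[Set.Ico 0 B] B) (𝓝 (w B)) := by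
        apply h2.congr'
        exact Filter.eventually_of_mem self_mem_nhdsWithin
          (fun x hx => (hBlt x hx.1 hx.2).symm)
      exact tendsto_nhds_unique h1 h3
    · rw [← h0, hu0, hw0]
  have hBS : B ∈ S := by
    refine ⟨⟨hB0, hBt₀⟩, fun s hs => ?_⟩
    rcases hs.2.lt_or_eq with h1|h1
    · exact hBlt s hs.1 h1
    · rw [h1]; exact hBeq
  rcases hBt₀.lt_or_eq with hlt|heq
  · exfalso
    obtain ⟨ε, hε, hext⟩ := stmt_2_extend c hc f u w hu1 hw1 hupos hwpos hueq hweq hu0 hw0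
      h'0 hu' B ⟨hB0, hBc⟩ hBS.2
    set b' := min (B + ε) t₀ with hb'def
    have hb'B : B < b' := lt_min (by linarith) hlt
    have hb'S : b' ∈ S := by
      refine ⟨⟨le_trans hB0 hb'B.le, min_le_right _ _⟩, fun s hs => ?_⟩
      rcases le_or_gt s B with h1|h1
      · exact hBS.2 s ⟨hs.1, h1⟩
      · exact hext s ⟨h1.le, le_trans hs.2 (min_le_left _ _)⟩
    exact absurd (le_csSup hbdd hb'S) (not_le.2 hb'B)
  · exact hBS.2 t₀ ⟨ht₀.1, heq.ge⟩
end

section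
/- Let c > 0, let f : (0,∞) → ℝ be locally Lipschitz on (0,∞) (not necessarily up to 0), and let u, w be real functions on [0,c) that are continuously differentiable on [0,c), positive on (0,c), twice differentiable on (0,c), and satisfy u''(t) = f(u(t)) and w''(t) = f(w(t)) for all t ∈ (0,c). Assume u(0) = w(0) = 0 and u'(0) = w'(0). Then u(t) = w(t) for all t ∈ [0,c). -/
open Set Filter intervalIntegral

private lemma exists_delta' {c : ℝ} (hc : 0 < c) {P : ℝ → Prop}
    (h : ∀ᶠ t in nhdsWithin 0 (Set.Ioo 0 c), P t) :
    ∃ δ, 0 < δ ∧ δ ≤ c ∧ ∀ t ∈ Set.Ioo (0:ℝ) δ, P t := by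
  rw [eventually_nhdsWithin_iff] at h
  rcases Metric.eventually_nhds_iff.1 h with ⟨ε, hε, hε'⟩
  refine ⟨min ε c, by positivity, min_le_right _ _, fun t ht => ?_⟩
  have h1 : dist t 0 < ε := by
    rw [Real.dist_eq, sub_zero, abs_of_pos ht.1]
    exact lt_of_lt_of_le ht.2 (min_le_left _ _)
  exact hε' h1 ⟨ht.1, lt_of_lt_of_le ht.2 (min_le_right _ _)⟩

private lemma ftc_Ioo {g : ℝ → ℝ} {p q b0 s : ℝ} (hb0 : b0 ∈ Set.Ioo p q) (hs : s ∈ Set.Ioo p q)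
    (hg : ∀ x ∈ Set.Ioo p q, ContinuousAt g x) :
    HasDerivAt (fun y => ∫ σ in b0..y, g σ) (g s) s := by
  have hsub : Set.uIcc b0 s ⊆ Set.Ioo p q := Set.ordConnected_Ioo.uIcc_subset hb0 hs
  have hint : IntervalIntegrable g MeasureTheory.volume b0 s :=
    ContinuousOn.intervalIntegrable (fun x hx => (hg x (hsub hx)).continuousWithinAt)
  exact intervalIntegral.integral_hasDerivAt_right hint
    (ContinuousOn.stronglyMeasurableAtFilter isOpen_Ioo
      (fun x hx => (hg x hx).continuousWithinAt) s hs)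
    (hg s hs)

private lemma const_of_deriv0 {h : ℝ → ℝ} {a b : ℝ}
    (hd : ∀ t ∈ Set.Ioo a b, HasDerivAt h 0 t) :
    ∀ t1 ∈ Set.Ioo a b, ∀ t2 ∈ Set.Ioo a b, h t1 = h t2 := by
  have key : ∀ t1 ∈ Set.Ioo a b, ∀ t2 ∈ Set.Ioo a b, t1 ≤ t2 → h t2 = h t1 := by
    intro t1 ht1 t2 ht2 h12
    have hsub : Set.Icc t1 t2 ⊆ Set.Ioo a b := fun x hx =>
      ⟨lt_of_lt_of_le ht1.1 hx.1, lt_of_le_of_lt hx.2 ht2.2⟩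
    exact constant_of_has_deriv_right_zero
      (fun x hx => ((hd x (hsub hx)).continuousAt).continuousWithinAt)
      (fun x hx => ((hd x (hsub (Set.Ico_subset_Icc_self hx))).hasDerivWithinAt))
      t2 ⟨h12, le_rfl⟩
  intro t1 ht1 t2 ht2
  rcases le_total t1 t2 with h12 | h12
  · exact (key t1 ht1 t2 ht2 h12).symm
  · exact key t2 ht2 t1 ht1 h12

private lemma lipschitz_prod {f : ℝ → ℝ} {K : NNReal} {S : Set ℝ} (hK : LipschitzOnWith K f S) :
    LipschitzOnWith (1 ⊔ K) (fun p : ℝ × ℝ => (p.2, f p.1)) (S ×ˢ (Set.univ : Set ℝ)) := by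
  apply LipschitzOnWith.of_dist_le_mul
  intro p hp q hq
  have h1 : dist (f p.1) (f q.1) ≤ (K : ℝ) * dist p.1 q.1 :=
    hK.dist_le_mul _ hp.1 _ hq.1
  rw [Prod.dist_eq, Prod.dist_eq]
  have d1 : (0:ℝ) ≤ dist p.1 q.1 := dist_nonneg
  have d2 : (0:ℝ) ≤ dist p.2 q.2 := dist_nonneg
  have hK0 : (0:ℝ) ≤ K := K.coe_nonneg
  have hge1' : (1:NNReal) ≤ 1 ⊔ K := le_sup_left
  have hgeK' : K ≤ 1 ⊔ K := le_sup_right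
  have hge1 : (1:ℝ) ≤ ((1 ⊔ K : NNReal) : ℝ) := by exact_mod_cast hge1'
  have hgeK : (K:ℝ) ≤ ((1 ⊔ K : NNReal) : ℝ) := by exact_mod_cast hgeK' 
  apply max_le
  · calc dist p.2 q.2 ≤ max (dist p.1 q.1) (dist p.2 q.2) := le_max_right _ _
      _ ≤ ((1 ⊔ K : NNReal) : ℝ) * max (dist p.1 q.1) (dist p.2 q.2) := by
          nlinarith [le_max_right (dist p.1 q.1) (dist p.2 q.2), le_max_left (dist p.1 q.1) (dist p.2 q.2)]
  · calc dist (f p.1) (f q.1) ≤ (K:ℝ) * dist p.1 q.1 := h1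
      _ ≤ ((1 ⊔ K : NNReal) : ℝ) * max (dist p.1 q.1) (dist p.2 q.2) := by
          nlinarith [le_max_left (dist p.1 q.1) (dist p.2 q.2), le_max_right (dist p.1 q.1) (dist p.2 q.2)]

private lemma sys_unique {f : ℝ → ℝ} {K : NNReal} {m M : ℝ}
    (hK : LipschitzOnWith K f (Set.Icc m M))
    {u w : ℝ → ℝ} {a b t₀ : ℝ} (ht₀ : t₀ ∈ Set.Ioo a b)
    (hcu : ContinuousOn u (Set.Icc a b)) (hcu' : ContinuousOn (deriv u) (Set.Icc a b))
    (hcw : ContinuousOn w (Set.Icc a b)) (hcw' : ContinuousOn (deriv w) (Set.Icc a b))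
    (hu : ∀ t ∈ Set.Ioo a b, HasDerivAt u (deriv u t) t)
    (hu' : ∀ t ∈ Set.Ioo a b, HasDerivAt (deriv u) (f (u t)) t)
    (hum : ∀ t ∈ Set.Ioo a b, u t ∈ Set.Icc m M)
    (hw : ∀ t ∈ Set.Ioo a b, HasDerivAt w (deriv w t) t)
    (hw' : ∀ t ∈ Set.Ioo a b, HasDerivAt (deriv w) (f (w t)) t)
    (hwm : ∀ t ∈ Set.Ioo a b, w t ∈ Set.Icc m M)
    (heq : u t₀ = w t₀) (heq' : deriv u t₀ = deriv w t₀) :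
    Set.EqOn u w (Set.Icc a b) := by
  have key := ODE_solution_unique_of_mem_Icc
    (v := fun _ : ℝ => fun p : ℝ × ℝ => (p.2, f p.1))
    (s := fun _ : ℝ => Set.Icc m M ×ˢ (Set.univ : Set ℝ))
    (f := fun t => (u t, deriv u t)) (g := fun t => (w t, deriv w t))
    (fun _ _ => lipschitz_prod hK) ht₀
    (hcu.prodMk hcu') (fun t ht => (hu t ht).prodMk (hu' t ht))
    (fun t ht => Set.mem_prod.2 ⟨hum t ht, trivial⟩)
    (hcw.prodMk hcw') (fun t ht => (hw t ht).prodMk (hw' t ht))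
    (fun t ht => Set.mem_prod.2 ⟨hwm t ht, trivial⟩)
    (by simp only [heq, heq'])
  intro t ht
  exact congrArg Prod.fst (key ht)

private lemma sol_hasDerivAt {c : ℝ} {u : ℝ → ℝ} (hu1 : ContDiffOn ℝ 1 u (Set.Ico 0 c)) :
    ∀ t ∈ Set.Ioo 0 c, HasDerivAt u (deriv u t) t := by
  intro t ht
  have hmem : Set.Ico 0 c ∈ nhds t :=
    mem_nhds_iff.2 ⟨Set.Ioo 0 c, Set.Ioo_subset_Ico_self, isOpen_Ioo, ht⟩
  exact ((hu1.differentiableOn one_ne_zero t (Set.Ioo_subset_Ico_self ht)).differentiableAt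
    hmem).hasDerivAt

private lemma sol_deriv_tendsto {c : ℝ} {u : ℝ → ℝ} (hc : 0 < c)
    (hu1 : ContDiffOn ℝ 1 u (Set.Ico 0 c)) :
    Filter.Tendsto (deriv u) (nhdsWithin 0 (Set.Ioo 0 c))
      (nhds (derivWithin u (Set.Ico 0 c) 0)) := by
  have hcd : ContinuousOn (derivWithin u (Set.Ico 0 c)) (Set.Ico 0 c) :=
    hu1.continuousOn_derivWithin (uniqueDiffOn_Ico 0 c) le_rfl
  have h0 : Filter.Tendsto (derivWithin u (Set.Ico 0 c)) (nhdsWithin 0 (Set.Ico 0 c))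
      (nhds (derivWithin u (Set.Ico 0 c) 0)) := hcd 0 ⟨le_rfl, hc⟩
  have h1 : Filter.Tendsto (derivWithin u (Set.Ico 0 c)) (nhdsWithin 0 (Set.Ioo 0 c))
      (nhds (derivWithin u (Set.Ico 0 c) 0)) :=
    h0.mono_left (nhdsWithin_mono 0 Set.Ioo_subset_Ico_self)
  apply h1.congr'
  filter_upwards [self_mem_nhdsWithin] with t ht
  exact derivWithin_of_mem_nhds
    (mem_nhds_iff.2 ⟨Set.Ioo 0 c, Set.Ioo_subset_Ico_self, isOpen_Ioo, ht⟩)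

private lemma sol_tendsto0 {c : ℝ} {u : ℝ → ℝ} (hc : 0 < c)
    (hu1 : ContDiffOn ℝ 1 u (Set.Ico 0 c)) (hu0 : u 0 = 0) :
    Filter.Tendsto u (nhdsWithin 0 (Set.Ioo 0 c)) (nhds 0) := by
  have h0 : ContinuousWithinAt u (Set.Ico 0 c) 0 := hu1.continuousOn 0 ⟨le_rfl, hc⟩
  rw [ContinuousWithinAt, hu0] at h0
  exact h0.mono_left (nhdsWithin_mono 0 Set.Ioo_subset_Ico_self)

private lemma sol_surj {c : ℝ} {u : ℝ → ℝ} (hc : 0 < c)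
    (hu1 : ContDiffOn ℝ 1 u (Set.Ico 0 c)) (hu0 : u 0 = 0) :
    ∀ δ, 0 < δ → δ < c → ∀ y, 0 < y → y < u δ → ∃ t, 0 < t ∧ t < δ ∧ u t = y := by
  intro δ hδ hδc y hy hyu
  have hcont : ContinuousOn u (Set.Icc 0 δ) :=
    hu1.continuousOn.mono (fun x hx => ⟨hx.1, lt_of_le_of_lt hx.2 hδc⟩)
  have := intermediate_value_Ioo (le_of_lt hδ) hcont
  rw [hu0] at this
  obtain ⟨t, ht, htu⟩ := this ⟨hy, hyu⟩
  exact ⟨t, ht.1, ht.2, htu⟩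

private lemma sol_transfer {c : ℝ} {u : ℝ → ℝ} (hc : 0 < c)
    (hu1 : ContDiffOn ℝ 1 u (Set.Ico 0 c)) (hu0 : u 0 = 0)
    (hupos : ∀ t ∈ Set.Ioo 0 c, 0 < u t)
    {g : ℝ → ℝ} {L : ℝ}
    (h : Filter.Tendsto (fun t => g (u t)) (nhdsWithin 0 (Set.Ioo 0 c)) (nhds L)) :
    Filter.Tendsto g (nhdsWithin 0 (Set.Ioi 0)) (nhds L) := by
  rw [Metric.tendsto_nhdsWithin_nhds]
  intro ε hε
  have hev : ∀ᶠ t in nhdsWithin 0 (Set.Ioo 0 c), dist (g (u t)) L < ε :=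
    h (Metric.ball_mem_nhds L hε)
  obtain ⟨δ, hδ, hδc, hδ'⟩ := exists_delta' hc hev
  have hhalf : δ/2 ∈ Set.Ioo 0 c := ⟨half_pos hδ, lt_of_lt_of_le (half_lt_self hδ) hδc⟩
  refine ⟨u (δ/2), hupos _ hhalf, fun s hs hsd => ?_⟩
  rw [Real.dist_eq, sub_zero, abs_of_pos hs] at hsd
  obtain ⟨t, ht0, htδ, htu⟩ := sol_surj hc hu1 hu0 (δ/2) (half_pos hδ) hhalf.2 s hs hsd
  rw [← htu]
  exact hδ' t ⟨ht0, lt_trans htδ (half_lt_self hδ)⟩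

private lemma sol_deriv_pos {c δ1 ε0 : ℝ} {u G : ℝ → ℝ} (hδ1 : 0 < δ1) (hδ1c : δ1 ≤ c)
    (hu1 : ContDiffOn ℝ 1 u (Set.Ico 0 c)) (hu0 : u 0 = 0)
    (hcont' : ContinuousOn (deriv u) (Set.Ioo 0 c))
    (hupos : ∀ t ∈ Set.Ioo 0 c, 0 < u t)
    (hsq : ∀ t ∈ Set.Ioo 0 c, (deriv u t)^2 = G (u t))
    (hGpos : ∀ s ∈ Set.Ioo 0 ε0, 0 < G s)
    (hsmall : ∀ t ∈ Set.Ioo 0 δ1, u t < ε0) :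
    ∀ t ∈ Set.Ioo 0 δ1, 0 < deriv u t := by
  have hsub : Set.Ioo 0 δ1 ⊆ Set.Ioo 0 c := fun x hx => ⟨hx.1, lt_of_lt_of_le hx.2 hδ1c⟩
  have hne : ∀ t ∈ Set.Ioo 0 δ1, deriv u t ≠ 0 := by
    intro t ht h0
    have hG : (0:ℝ) < G (u t) := hGpos _ ⟨hupos t (hsub ht), hsmall t ht⟩
    rw [← hsq t (hsub ht), h0] at hG
    simp at hG
  intro t ht
  rcases (hne t ht).lt_or_gt with hneg | hpos
  · exfalso
    have hIcc : Set.Icc 0 t ⊆ Set.Ico 0 c :=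
      fun x hx => ⟨hx.1, lt_of_le_of_lt hx.2 (lt_of_lt_of_le ht.2 hδ1c)⟩
    obtain ⟨ξ, hξ, hslope⟩ := exists_hasDerivAt_eq_slope u (deriv u) ht.1
      (hu1.continuousOn.mono hIcc)
      (fun x hx => sol_hasDerivAt hu1 x (hsub ⟨hx.1, lt_trans hx.2 ht.2⟩))
    have hslope_pos : 0 < deriv u ξ := by
      rw [hslope, hu0, sub_zero, sub_zero]
      exact div_pos (hupos t (hsub ht)) ht.1
    have hcont2 : ContinuousOn (deriv u) (Set.Icc ξ t) :=
      hcont'.mono (fun x hx => ⟨lt_of_lt_of_le hξ.1 hx.1,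
        lt_of_le_of_lt hx.2 (lt_of_lt_of_le ht.2 hδ1c)⟩)
    obtain ⟨τ, hτ, hτ0⟩ := intermediate_value_Ioo' (le_of_lt hξ.2) hcont2 ⟨hneg, hslope_pos⟩
    exact hne τ ⟨lt_trans hξ.1 hτ.1, lt_trans hτ.2 ht.2⟩ hτ0
  · exact hpos
set_option maxHeartbeats 1000000 in
/-- Lemma 2.3 of Li–Nirenberg. -/
theorem stmt_3 (c : ℝ) (hc : 0 < c) (f : ℝ → ℝ)
    (hf : ∀ s : Set ℝ, s ⊆ Set.Ioi 0 → IsCompact s → ∃ L : NNReal, LipschitzOnWith L f s)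
    (u w : ℝ → ℝ)
    (hu1 : ContDiffOn ℝ 1 u (Set.Ico 0 c)) (hw1 : ContDiffOn ℝ 1 w (Set.Ico 0 c))
    (hupos : ∀ t ∈ Set.Ioo 0 c, 0 < u t) (hwpos : ∀ t ∈ Set.Ioo 0 c, 0 < w t)
    (hueq : ∀ t ∈ Set.Ioo 0 c, HasDerivAt (deriv u) (f (u t)) t)
    (hweq : ∀ t ∈ Set.Ioo 0 c, HasDerivAt (deriv w) (f (w t)) t)
    (hu0 : u 0 = 0) (hw0 : w 0 = 0)
    (h'0 : derivWithin u (Set.Ico 0 c) 0 = derivWithin w (Set.Ico 0 c) 0) :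
    ∀ t ∈ Set.Ico 0 c, u t = w t := by
  have h2 : c/2 ∈ Set.Ioo 0 c := ⟨half_pos hc, half_lt_self hc⟩
  -- continuity of f on the positive axis
  have hfc : ∀ x : ℝ, 0 < x → ContinuousAt f x := by
    intro x hx
    obtain ⟨L, hL⟩ := hf (Set.Icc (x/2) (x*2))
      (fun y hy => lt_of_lt_of_le (half_pos hx) hy.1) isCompact_Icc
    exact hL.continuousOn.continuousAt (Icc_mem_nhds (half_lt_self hx) (by linarith))
  -- antiderivative of f
  set b0 := u (c/2) with hb0def
  have hb0 : 0 < b0 := hupos _ h2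
  set F : ℝ → ℝ := fun s => ∫ σ in b0..s, f σ with hFdef
  have hF' : ∀ s : ℝ, 0 < s → HasDerivAt F (f s) s := by
    intro s hs
    refine ftc_Ioo (p := 0) (q := max b0 s + 1) ⟨hb0, ?_⟩ ⟨hs, ?_⟩ (fun x hx => hfc x hx.1)
    · have := le_max_left b0 s; linarith
    · have := le_max_right b0 s; linarith
  -- energy conservation
  have energy : ∀ v : ℝ → ℝ, ContDiffOn ℝ 1 v (Set.Ico 0 c) →
      (∀ t ∈ Set.Ioo 0 c, 0 < v t) →
      (∀ t ∈ Set.Ioo 0 c, HasDerivAt (deriv v) (f (v t)) t) →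
      ∀ t ∈ Set.Ioo 0 c,
        (deriv v t)^2 - 2 * F (v t) = (deriv v (c/2))^2 - 2 * F (v (c/2)) := by
    intro v hv1 hvpos hveq
    have hd := sol_hasDerivAt hv1
    have hE : ∀ t ∈ Set.Ioo 0 c,
        HasDerivAt (fun t => (deriv v t)^2 - 2 * F (v t)) 0 t := by
      intro t ht
      have h1 : HasDerivAt (fun t => (deriv v t)^2) (2 * deriv v t * f (v t)) t := by
        have h := (hveq t ht).pow 2
        norm_num at h
        refine h.congr_deriv ?_
        all_goals ring
      have hcomp : HasDerivAt (fun t => F (v t)) (f (v t) * deriv v t) t :=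
        (hF' (v t) (hvpos t ht)).comp t (hd t ht)
      have h3 := h1.sub (hcomp.const_mul 2)
      refine h3.congr_deriv ?_
      ring
    intro t ht
    exact const_of_deriv0 hE t ht (c/2) h2
  set Eu := (deriv u (c/2))^2 - 2 * F (u (c/2)) with hEudef
  set Ew := (deriv w (c/2))^2 - 2 * F (w (c/2)) with hEwdef
  have henu := energy u hu1 hupos hueq
  have henw := energy w hw1 hwpos hweq
  clear_value Eu Ew
  rw [← hEudef] at henu
  rw [← hEwdef] at henw
  -- the limit of F along a solution
  have limF : ∀ (v : ℝ → ℝ) (Ev : ℝ), ContDiffOn ℝ 1 v (Set.Ico 0 c) → v 0 = 0 →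
      (∀ t ∈ Set.Ioo 0 c, 0 < v t) →
      (∀ t ∈ Set.Ioo 0 c, (deriv v t)^2 - 2 * F (v t) = Ev) →
      Filter.Tendsto F (nhdsWithin 0 (Set.Ioi 0))
        (nhds (((derivWithin v (Set.Ico 0 c) 0)^2 - Ev)/2)) := by
    intro v Ev hv1 hv0 hvpos hen
    apply sol_transfer hc hv1 hv0 hvpos
    have hdt := sol_deriv_tendsto hc hv1
    have h1 : Filter.Tendsto (fun t => ((deriv v t)^2 - Ev)/2)
        (nhdsWithin 0 (Set.Ioo 0 c))
        (nhds (((derivWithin v (Set.Ico 0 c) 0)^2 - Ev)/2)) :=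
      ((hdt.pow 2).sub_const Ev).div_const 2
    apply h1.congr'
    filter_upwards [self_mem_nhdsWithin] with t ht
    have := hen t ht
    linarith
  have hEuEw : Eu = Ew := by
    have l1 := limF u Eu hu1 hu0 hupos henu
    have l2 := limF w Ew hw1 hw0 hwpos henw
    rw [← h'0] at l2
    have := tendsto_nhds_unique l1 l2
    linarith
  -- the function G with (v')² = G(v)
  set G : ℝ → ℝ := fun s => Eu + 2 * F s with hGdef
  have hGu : ∀ t ∈ Set.Ioo 0 c, (deriv u t)^2 = G (u t) := by
    intro t ht
    have := henu t ht
    simp only [hGdef]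
    linarith
  have hGw : ∀ t ∈ Set.Ioo 0 c, (deriv w t)^2 = G (w t) := by
    intro t ht
    have := henw t ht
    simp only [hGdef]
    linarith [hEuEw]
  have hGd : ∀ s : ℝ, 0 < s → HasDerivAt G (2 * f s) s := fun s hs =>
    ((hF' s hs).const_mul 2).const_add Eu
  set ε0 := min (u (c/2)) (w (c/2)) with hε0def
  have hε0 : 0 < ε0 := lt_min (hupos _ h2) (hwpos _ h2)
  have hGnonneg : ∀ s ∈ Set.Ioo 0 ε0, 0 ≤ G s := by
    intro s hs
    obtain ⟨t, ht0, htc, htu⟩ := sol_surj hc hu1 hu0 (c/2) h2.1 h2.2 s hs.1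
      (lt_of_lt_of_le hs.2 (min_le_left _ _))
    have h5 := hGu t ⟨ht0, lt_trans htc h2.2⟩
    rw [htu] at h5
    rw [← h5]
    positivity
  have hucontIoo : ContinuousOn (deriv u) (Set.Ioo 0 c) :=
    fun t ht => ((hueq t ht).differentiableAt.continuousAt).continuousWithinAt
  have hwcontIoo : ContinuousOn (deriv w) (Set.Ioo 0 c) :=
    fun t ht => ((hweq t ht).differentiableAt.continuousAt).continuousWithinAt
  -- G is positive near 0
  have hGpos : ∀ s ∈ Set.Ioo 0 ε0, 0 < G s := by
    intro s0 hs0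
    rcases (hGnonneg s0 hs0).lt_or_eq with h | h
    · exact h
    exfalso
    have hlm : IsLocalMin G s0 := by
      refine Filter.eventually_of_mem (Ioo_mem_nhds hs0.1 hs0.2) (fun x hx => ?_)
      rw [← h]
      exact hGnonneg x hx
    have hf0 : f s0 = 0 := by
      have := hlm.hasDerivAt_eq_zero (hGd s0 hs0.1)
      linarith
    obtain ⟨ts, hts0, htsc, htsu⟩ := sol_surj hc hu1 hu0 (c/2) h2.1 h2.2 s0 hs0.1
      (lt_of_lt_of_le hs0.2 (min_le_left _ _))
    have htsIoo : ts ∈ Set.Ioo 0 c := ⟨hts0, lt_trans htsc h2.2⟩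
    have hder0 : deriv u ts = 0 := by
      have h1 := hGu ts htsIoo
      rw [htsu, ← h] at h1
      exact (pow_eq_zero_iff two_ne_zero).1 h1
    -- find a small t' where u < s0
    have hev : ∀ᶠ t in nhdsWithin 0 (Set.Ioo 0 c), u t < s0 :=
      (sol_tendsto0 hc hu1 hu0).eventually (eventually_lt_nhds hs0.1)
    obtain ⟨δ, hδ0, hδc, hδ'⟩ := exists_delta' hc hev
    set t' := min (δ/2) (ts/2) with ht'def
    have ht'0 : 0 < t' := lt_min (half_pos hδ0) (half_pos hts0)
    have ht'δ : t' < δ := lt_of_le_of_lt (min_le_left _ _) (half_lt_self hδ0)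
    have ht'ts : t' < ts := lt_of_le_of_lt (min_le_right _ _) (half_lt_self hts0)
    have hut' : u t' < s0 := hδ' t' ⟨ht'0, ht'δ⟩
    set b' := (ts + c)/2 with hb'def
    have htb' : ts < b' := by
      simp only [hb'def]
      linarith [htsIoo.2]
    have hb'c : b' < c := by
      simp only [hb'def]
      linarith [htsIoo.2]
    have hIccsub : Set.Icc t' b' ⊆ Set.Ioo 0 c := by
      intro x hx
      exact ⟨lt_of_lt_of_le ht'0 hx.1, lt_of_le_of_lt hx.2 hb'c⟩
    have hIcoS : Set.Icc t' b' ⊆ Set.Ico 0 c :=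
      fun x hx => Set.Ioo_subset_Ico_self (hIccsub hx)
    have hneS : (Set.Icc t' b').Nonempty := ⟨t', le_rfl, le_of_lt (lt_trans ht'ts htb')⟩
    have hcu : ContinuousOn u (Set.Icc t' b') := hu1.continuousOn.mono hIcoS
    obtain ⟨x1, hx1m, hx1⟩ := isCompact_Icc.exists_isMinOn hneS hcu
    obtain ⟨x2, hx2m, hx2⟩ := isCompact_Icc.exists_isMaxOn hneS hcu
    have hm : 0 < u x1 := hupos _ (hIccsub hx1m)
    obtain ⟨K, hK⟩ := hf (Set.Icc (u x1) (u x2))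
      (fun y hy => lt_of_lt_of_le hm hy.1) isCompact_Icc
    have htsIcc : ts ∈ Set.Icc t' b' := ⟨le_of_lt ht'ts, le_of_lt htb'⟩
    have hdconst : (deriv (fun _ : ℝ => s0)) = fun _ : ℝ => (0:ℝ) := funext fun x => deriv_const x s0
    have key := sys_unique hK (t₀ := ts) ⟨ht'ts, htb'⟩ hcu (hucontIoo.mono hIccsub)
      continuousOn_const (by rw [hdconst]; exact continuousOn_const)
      (fun s hs => sol_hasDerivAt hu1 s (hIccsub (Set.Ioo_subset_Icc_self hs)))
      (fun s hs => hueq s (hIccsub (Set.Ioo_subset_Icc_self hs)))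
      (fun s hs => ⟨isMinOn_iff.1 hx1 s (Set.Ioo_subset_Icc_self hs),
        isMaxOn_iff.1 hx2 s (Set.Ioo_subset_Icc_self hs)⟩)
      (fun s _ => by rw [hdconst]; exact hasDerivAt_const s s0)
      (fun s _ => by rw [hdconst, hf0]; exact hasDerivAt_const s 0)
      (fun s _ => ⟨by rw [← htsu]; exact isMinOn_iff.1 hx1 ts htsIcc,
        by rw [← htsu]; exact isMaxOn_iff.1 hx2 ts htsIcc⟩)
      htsu (by rw [hdconst, hder0])
    have := key ⟨le_rfl, le_of_lt (lt_trans ht'ts htb')⟩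
    simp only at this
    linarith [hut']
  -- a small interval where both u and w stay below ε0
  have hevs : ∀ᶠ t in nhdsWithin 0 (Set.Ioo 0 c), u t < ε0 ∧ w t < ε0 :=
    ((sol_tendsto0 hc hu1 hu0).eventually (eventually_lt_nhds hε0)).and
      ((sol_tendsto0 hc hw1 hw0).eventually (eventually_lt_nhds hε0))
  obtain ⟨δ1, hδ10, hδ1c, hδ1'⟩ := exists_delta' hc hevs
  have hsubδ1 : Set.Ioo 0 δ1 ⊆ Set.Ioo 0 c :=
    fun x hx => ⟨hx.1, lt_of_lt_of_le hx.2 hδ1c⟩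
  have hupos1 : ∀ t ∈ Set.Ioo 0 δ1, 0 < deriv u t :=
    sol_deriv_pos hδ10 hδ1c hu1 hu0 hucontIoo hupos hGu hGpos (fun t ht => (hδ1' t ht).1)
  have hwpos1 : ∀ t ∈ Set.Ioo 0 δ1, 0 < deriv w t :=
    sol_deriv_pos hδ10 hδ1c hw1 hw0 hwcontIoo hwpos hGw hGpos (fun t ht => (hδ1' t ht).2)
  have hmid : δ1/2 ∈ Set.Ioo 0 δ1 := ⟨half_pos hδ10, half_lt_self hδ10⟩
  set s1 := u (δ1/2) with hs1def
  have hs1 : s1 ∈ Set.Ioo 0 ε0 := ⟨hupos _ (hsubδ1 hmid), (hδ1' _ hmid).1⟩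
  set φ : ℝ → ℝ := fun s => ∫ σ in s1..s, (Real.sqrt (G σ))⁻¹ with hφdef
  have hGcont : ∀ x ∈ Set.Ioo 0 ε0, ContinuousAt (fun σ => (Real.sqrt (G σ))⁻¹) x := by
    intro x hx
    have h1 : ContinuousAt G x := (hGd x hx.1).continuousAt
    have h2 : Real.sqrt (G x) ≠ 0 := ne_of_gt (Real.sqrt_pos.2 (hGpos x hx))
    exact (Real.continuous_sqrt.continuousAt.comp h1).inv₀ h2
  have hφ' : ∀ s ∈ Set.Ioo 0 ε0, HasDerivAt φ ((Real.sqrt (G s))⁻¹) s :=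
    fun s hs => ftc_Ioo hs1 hs hGcont
  have hφmono : StrictMonoOn φ (Set.Ioo 0 ε0) := by
    apply strictMonoOn_of_deriv_pos (convex_Ioo 0 ε0)
    · exact fun s hs => ((hφ' s hs).continuousAt).continuousWithinAt
    · intro x hx
      rw [interior_Ioo] at hx
      rw [(hφ' x hx).deriv]
      exact inv_pos.2 (Real.sqrt_pos.2 (hGpos x hx))
  have hmemu : ∀ t ∈ Set.Ioo 0 δ1, u t ∈ Set.Ioo 0 ε0 :=
    fun t ht => ⟨hupos t (hsubδ1 ht), (hδ1' t ht).1⟩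
  have hmemw : ∀ t ∈ Set.Ioo 0 δ1, w t ∈ Set.Ioo 0 ε0 :=
    fun t ht => ⟨hwpos t (hsubδ1 ht), (hδ1' t ht).2⟩
  -- φ ∘ v is a shift of the identity
  have hψ : ∀ (v : ℝ → ℝ), ContDiffOn ℝ 1 v (Set.Ico 0 c) →
      (∀ t ∈ Set.Ioo 0 c, (deriv v t)^2 = G (v t)) →
      (∀ t ∈ Set.Ioo 0 δ1, 0 < deriv v t) →
      (∀ t ∈ Set.Ioo 0 δ1, v t ∈ Set.Ioo 0 ε0) →
      ∀ t ∈ Set.Ioo 0 δ1, φ (v t) = t + (φ (v (δ1/2)) - δ1/2) := by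
    intro v hv1 hsq hdpos hmem
    have hder : ∀ t ∈ Set.Ioo 0 δ1, HasDerivAt (fun t => φ (v t) - t) 0 t := by
      intro t ht
      have hd := sol_hasDerivAt hv1 t (hsubδ1 ht)
      have h1 : HasDerivAt (fun t => φ (v t)) ((Real.sqrt (G (v t)))⁻¹ * deriv v t) t :=
        (hφ' (v t) (hmem t ht)).comp t hd
      have hsqrt : Real.sqrt (G (v t)) = deriv v t := by
        rw [← hsq t (hsubδ1 ht)]
        exact Real.sqrt_sq (le_of_lt (hdpos t ht))
      have h2 := h1.sub (hasDerivAt_id t)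
      refine h2.congr_deriv ?_
      rw [hsqrt, inv_mul_cancel₀ (ne_of_gt (hdpos t ht))]
      norm_num
    intro t ht
    have := const_of_deriv0 hder t ht (δ1/2) hmid
    linarith [this]
  have hψu := hψ u hu1 hGu hupos1 hmemu
  have hψw := hψ w hw1 hGw hwpos1 hmemw
  -- the two shift constants agree
  have hCuCw : φ (u (δ1/2)) - δ1/2 = φ (w (δ1/2)) - δ1/2 := by
    have hlim : ∀ (v : ℝ → ℝ) (Cv : ℝ), ContDiffOn ℝ 1 v (Set.Ico 0 δ1) → v 0 = 0 →
        (∀ t ∈ Set.Ioo 0 δ1, 0 < v t) →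
        (∀ t ∈ Set.Ioo 0 δ1, φ (v t) = t + Cv) →
        Filter.Tendsto φ (nhdsWithin 0 (Set.Ioi 0)) (nhds Cv) := by
      intro v Cv hv1 hv0 hvpos hid
      apply sol_transfer hδ10 hv1 hv0 hvpos
      have h1 : Filter.Tendsto (fun t : ℝ => t + Cv) (nhdsWithin 0 (Set.Ioo 0 δ1))
          (nhds (0 + Cv)) :=
        ((continuous_id.add continuous_const).continuousAt (x := (0:ℝ))).mono_left
          nhdsWithin_le_nhds
      rw [zero_add] at h1
      apply h1.congr'
      filter_upwards [self_mem_nhdsWithin] with t ht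
      exact (hid t ht).symm
    have l1 := hlim u (φ (u (δ1/2)) - δ1/2)
      (hu1.mono (Set.Ico_subset_Ico_right hδ1c)) hu0
      (fun t ht => hupos t (hsubδ1 ht)) hψu
    have l2 := hlim w (φ (w (δ1/2)) - δ1/2)
      (hw1.mono (Set.Ico_subset_Ico_right hδ1c)) hw0
      (fun t ht => hwpos t (hsubδ1 ht)) hψw
    exact tendsto_nhds_unique l1 l2
  -- u = w on (0, δ1)
  have hequal : ∀ t ∈ Set.Ioo 0 δ1, u t = w t := by
    intro t ht
    apply hφmono.injOn (hmemu t ht) (hmemw t ht)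
    rw [hψu t ht, hψw t ht, hCuCw]
  have heqd : deriv u (δ1/2) = deriv w (δ1/2) := by
    apply Filter.EventuallyEq.deriv_eq
    filter_upwards [Ioo_mem_nhds hmid.1 hmid.2] with x hx
    exact hequal x hx
  -- conclusion
  intro t ht
  rcases eq_or_lt_of_le ht.1 with h0 | h0
  · rw [← h0, hu0, hw0]
  rcases lt_or_ge t δ1 with hlt | hge
  · exact hequal t ⟨h0, hlt⟩
  set b' := (t + c)/2 with hb'def
  have htb' : t < b' := by simp only [hb'def]; linarith [ht.2]
  have hb'c : b' < c := by simp only [hb'def]; linarith [ht.2]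
  have hIccsub : Set.Icc (δ1/4) b' ⊆ Set.Ioo 0 c := by
    intro x hx
    constructor
    · linarith [hx.1, hδ10]
    · exact lt_of_le_of_lt hx.2 hb'c
  have hIcoS : Set.Icc (δ1/4) b' ⊆ Set.Ico 0 c :=
    fun x hx => Set.Ioo_subset_Ico_self (hIccsub hx)
  have ht₀mem : δ1/2 ∈ Set.Ioo (δ1/4) b' := by
    constructor
    · linarith
    · have : δ1 ≤ t := hge
      simp only [hb'def]
      linarith [ht.2]
  have hneS : (Set.Icc (δ1/4) b').Nonempty := ⟨δ1/4, le_rfl, by linarith [ht₀mem.2]⟩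
  have hcu : ContinuousOn u (Set.Icc (δ1/4) b') := hu1.continuousOn.mono hIcoS
  have hcw : ContinuousOn w (Set.Icc (δ1/4) b') := hw1.continuousOn.mono hIcoS
  obtain ⟨x1, hx1m, hx1⟩ := isCompact_Icc.exists_isMinOn hneS hcu
  obtain ⟨x2, hx2m, hx2⟩ := isCompact_Icc.exists_isMaxOn hneS hcu
  obtain ⟨y1, hy1m, hy1⟩ := isCompact_Icc.exists_isMinOn hneS hcw
  obtain ⟨y2, hy2m, hy2⟩ := isCompact_Icc.exists_isMaxOn hneS hcw
  set m := min (u x1) (w y1) with hmdef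
  set M := max (u x2) (w y2) with hMdef
  have hm : 0 < m := lt_min (hupos _ (hIccsub hx1m)) (hwpos _ (hIccsub hy1m))
  obtain ⟨K, hK⟩ := hf (Set.Icc m M) (fun y hy => lt_of_lt_of_le hm hy.1) isCompact_Icc
  have key := sys_unique hK (t₀ := δ1/2) ht₀mem hcu (hucontIoo.mono hIccsub)
    hcw (hwcontIoo.mono hIccsub)
    (fun s hs => sol_hasDerivAt hu1 s (hIccsub (Set.Ioo_subset_Icc_self hs)))
    (fun s hs => hueq s (hIccsub (Set.Ioo_subset_Icc_self hs)))
    (fun s hs => ⟨le_trans (min_le_left _ _) (isMinOn_iff.1 hx1 s (Set.Ioo_subset_Icc_self hs)),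
      le_trans (isMaxOn_iff.1 hx2 s (Set.Ioo_subset_Icc_self hs)) (le_max_left _ _)⟩)
    (fun s hs => sol_hasDerivAt hw1 s (hIccsub (Set.Ioo_subset_Icc_self hs)))
    (fun s hs => hweq s (hIccsub (Set.Ioo_subset_Icc_self hs)))
    (fun s hs => ⟨le_trans (min_le_right _ _) (isMinOn_iff.1 hy1 s (Set.Ioo_subset_Icc_self hs)),
      le_trans (isMaxOn_iff.1 hy2 s (Set.Ioo_subset_Icc_self hs)) (le_max_right _ _)⟩)
    (hequal _ hmid) heqd
  exact key ⟨by linarith [hge, hδ10], by simp only [hb'def]; linarith [ht.2]⟩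
end

section
/- Let b > 0 and let u, v be real functions that are C² on (0,b) and C¹ on [0,b], satisfying u(t) ≥ v(t) > 0 for all t ∈ (0,b]. Assume that either (u'(t) > 0 and v'(t) ≥ 0 for all t ∈ (0,b]) or (u'(t) ≥ 0 and v'(t) > 0 for all t ∈ (0,b]), and that u(0) = u'(0) = 0. Assume the curvature hypothesis: whenever u(t) = v(s) with 0 < t < s < b, one has u''(t)/(1+u'(t)²)^{3/2} ≤ v''(s)/(1+v'(s)²)^{3/2}. Then u(t) = v(t) for all t ∈ [0,b]. -/
open Set Filter Topology

noncomputable def winv (b : ℝ) (f : ℝ → ℝ) (h : ℝ) : ℝ :=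
  sSup {s | s ∈ Set.Icc 0 b ∧ f s ≤ h}

section W
variable {b : ℝ} {f : ℝ → ℝ} {h s : ℝ}

lemma winv_le_of (hs : s ∈ Set.Icc 0 b) (hfs : f s ≤ h) : s ≤ winv b f h := by
  apply le_csSup
  · exact BddAbove.mono (fun x hx => hx.1) (bddAbove_Icc)
  · exact ⟨hs, hfs⟩

lemma winv_mem (hb : 0 < b) (hf0 : f 0 = 0) (hfc : ContinuousOn f (Set.Icc 0 b))
    (hh : 0 ≤ h) : winv b f h ∈ Set.Icc 0 b ∧ f (winv b f h) ≤ h := by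
  have hcl : IsClosed {s | s ∈ Set.Icc 0 b ∧ f s ≤ h} := by
    have : {s | s ∈ Set.Icc 0 b ∧ f s ≤ h} = Set.Icc 0 b ∩ f ⁻¹' (Set.Iic h) := by
      rfl
    rw [this]
    exact ContinuousOn.preimage_isClosed_of_isClosed hfc isClosed_Icc isClosed_Iic
  have hne : Set.Nonempty {s | s ∈ Set.Icc 0 b ∧ f s ≤ h} :=
    ⟨0, ⟨le_refl 0, hb.le⟩, by simpa [hf0]⟩
  have hbdd : BddAbove {s | s ∈ Set.Icc 0 b ∧ f s ≤ h} :=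
    BddAbove.mono (fun x hx => hx.1) (bddAbove_Icc)
  exact hcl.csSup_mem hne hbdd

lemma winv_apply (hb : 0 < b) (hf0 : f 0 = 0) (hm : StrictMonoOn f (Set.Icc 0 b))
    (hfc : ContinuousOn f (Set.Icc 0 b)) (hh : 0 ≤ h) (hhb : h ≤ f b) :
    f (winv b f h) = h := by
  obtain ⟨hWmem, hWle⟩ := winv_mem hb hf0 hfc hh
  rcases eq_or_lt_of_le hWle with heq | hlt
  · exact heq
  exfalso
  have hWb : winv b f h < b :=
    lt_of_le_of_ne hWmem.2 (fun he => absurd hhb (not_le.mpr (he ▸ hlt)))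
  have hcw : ContinuousWithinAt f (Set.Icc 0 b) (winv b f h) := hfc _ hWmem
  have hev : ∀ᶠ s' in 𝓝[Set.Icc 0 b] (winv b f h), f s' < h :=
    hcw.eventually_lt_const hlt
  have hsub : Set.Ioc (winv b f h) b ⊆ Set.Icc 0 b :=
    fun x hx => ⟨le_trans hWmem.1 hx.1.le, hx.2⟩
  have hev2 : ∀ᶠ s' in 𝓝[Set.Ioc (winv b f h) b] (winv b f h), f s' < h :=
    hev.filter_mono (nhdsWithin_mono _ hsub)
  have hne : (𝓝[Set.Ioc (winv b f h) b] (winv b f h)).NeBot :=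
    left_nhdsWithin_Ioc_neBot hWb
  obtain ⟨s', hs'lt, hs'⟩ := (hev2.and (eventually_mem_nhdsWithin)).exists
  exact absurd (winv_le_of (hsub hs') hs'lt.le) (not_le.mpr hs'.1)

lemma winv_f (hb : 0 < b) (hm : StrictMonoOn f (Set.Icc 0 b)) (hs : s ∈ Set.Icc 0 b) :
    winv b f (f s) = s := by
  apply le_antisymm
  · have hne : Set.Nonempty {x | x ∈ Set.Icc 0 b ∧ f x ≤ f s} := ⟨s, hs, le_rfl⟩
    apply csSup_le hne
    intro x hx
    by_contra hc
    push_neg at hc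
    exact absurd (hm hs hx.1 hc) (not_lt.mpr hx.2)
  · exact winv_le_of hs le_rfl

lemma winv_lt_b (hb : 0 < b) (hf0 : f 0 = 0) (hm : StrictMonoOn f (Set.Icc 0 b))
    (hfc : ContinuousOn f (Set.Icc 0 b)) (hh : 0 ≤ h) (hhb : h < f b) :
    winv b f h < b := by
  obtain ⟨hWmem, hWle⟩ := winv_mem hb hf0 hfc hh
  exact lt_of_le_of_ne hWmem.2 (fun he => absurd (he ▸ hWle) (not_le.mpr hhb))

lemma winv_pos (hb : 0 < b) (hf0 : f 0 = 0) (hm : StrictMonoOn f (Set.Icc 0 b))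
    (hfc : ContinuousOn f (Set.Icc 0 b)) (hh : 0 < h) (hhb : h ≤ f b) :
    0 < winv b f h := by
  obtain ⟨hWmem, _⟩ := winv_mem hb hf0 hfc hh.le
  rcases eq_or_lt_of_le hWmem.1 with he | h2
  · exfalso
    have := winv_apply hb hf0 hm hfc hh.le hhb
    rw [← he, hf0] at this
    exact absurd this.symm (ne_of_gt hh)
  · exact h2

lemma winv_nonneg (hb : 0 < b) (hf0 : f 0 = 0) (hm : StrictMonoOn f (Set.Icc 0 b)) :
    0 ≤ winv b f h := by
  rcases le_or_gt 0 h with hh | hh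
  · exact winv_le_of ⟨le_rfl, hb.le⟩ (le_trans (le_of_eq hf0) hh)
  · have hemp : {s | s ∈ Set.Icc 0 b ∧ f s ≤ h} = ∅ := by
      ext x
      simp only [Set.mem_setOf_eq, Set.mem_empty_iff_false, iff_false, not_and]
      intro hx hfx
      have : (0:ℝ) ≤ f x := by
        rcases eq_or_lt_of_le hx.1 with he | hpos
        · rw [← he, hf0]
        · exact le_of_lt (hf0 ▸ hm ⟨le_rfl, hb.le⟩ hx hpos)
      linarith
    show sSup _ ≥ _
    rw [hemp, Real.sSup_empty]

lemma winv_mono (hb : 0 < b) (hf0 : f 0 = 0) (hm : StrictMonoOn f (Set.Icc 0 b))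
    {h h' : ℝ} (hle : h ≤ h') : winv b f h ≤ winv b f h' := by
  rcases le_or_gt 0 h with hh | hh
  · have hne : Set.Nonempty {s | s ∈ Set.Icc 0 b ∧ f s ≤ h} :=
      ⟨0, ⟨le_rfl, hb.le⟩, by simpa [hf0]⟩
    exact csSup_le_csSup (BddAbove.mono (fun x hx => hx.1) (bddAbove_Icc)) hne
      (fun x hx => ⟨hx.1, le_trans hx.2 hle⟩)
  · have hemp : {s | s ∈ Set.Icc 0 b ∧ f s ≤ h} = ∅ := by
      ext x
      simp only [Set.mem_setOf_eq, Set.mem_empty_iff_false, iff_false, not_and]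
      intro hx hfx
      have : (0:ℝ) ≤ f x := by
        rcases eq_or_lt_of_le hx.1 with he | hpos
        · rw [← he, hf0]
        · exact le_of_lt (hf0 ▸ hm ⟨le_rfl, hb.le⟩ hx hpos)
      linarith
    have : winv b f h = 0 := by show sSup _ = _; rw [hemp, Real.sSup_empty]
    rw [this]
    exact winv_nonneg hb hf0 hm

lemma winv_zero (hb : 0 < b) (hm : StrictMonoOn f (Set.Icc 0 b)) (hf0 : f 0 = 0) :
    winv b f 0 = 0 := by
  have := winv_f (s := 0) hb hm ⟨le_rfl, hb.le⟩
  rwa [hf0] at this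

lemma winv_continuousAt (hb : 0 < b) (hf0 : f 0 = 0) (hm : StrictMonoOn f (Set.Icc 0 b))
    (hfc : ContinuousOn f (Set.Icc 0 b)) {h0 : ℝ} (hh : 0 ≤ h0) (hhb : h0 < f b) :
    ContinuousAt (winv b f) h0 := by
  rw [Metric.continuousAt_iff]
  intro ε hε
  set s0 := winv b f h0 with hs0def
  obtain ⟨hs0mem, _⟩ := winv_mem hb hf0 hfc hh
  have hfs0 : f s0 = h0 := winv_apply hb hf0 hm hfc hh hhb.le
  have hs0b : s0 < b := winv_lt_b hb hf0 hm hfc hh hhb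
  -- upper bound control
  set sU := min (s0 + ε/2) b with hsUdef
  have hsU1 : s0 < sU := lt_min (by linarith) hs0b
  have hsU2 : sU ∈ Set.Icc 0 b := ⟨le_trans hs0mem.1 hsU1.le, min_le_right _ _⟩
  have hδU : f s0 < f sU := hm hs0mem hsU2 hsU1
  -- lower bound control: pick δL
  have hlower : ∃ δL > 0, ∀ h, h0 - δL < h → s0 - ε < winv b f h := by
    rcases eq_or_lt_of_le hs0mem.1 with he | hpos
    · exact ⟨1, one_pos, fun h _ => by
        have h9 : s0 = 0 := by rw [hs0def, ← he]
        have h8 : 0 ≤ winv b f h := winv_nonneg hb hf0 hm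
        rw [h9]; linarith⟩
    · set sL := max (s0 - ε/2) 0 with hsLdef
      have hsL1 : sL < s0 := max_lt (by linarith) hpos
      have hsL2 : sL ∈ Set.Icc 0 b := ⟨le_max_right _ _, le_trans hsL1.le hs0mem.2⟩
      have hδL : f sL < h0 := hfs0 ▸ hm hsL2 hs0mem hsL1
      refine ⟨h0 - f sL, by linarith, fun h hh2 => ?_⟩
      have : sL ≤ winv b f h := winv_le_of hsL2 (by linarith)
      have : s0 - ε/2 ≤ winv b f h := le_trans (le_max_left _ _) this
      linarith
  obtain ⟨δL, hδLpos, hδL⟩ := hlower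
  refine ⟨min (f sU - h0) δL, lt_min (by rw [← hfs0]; linarith) hδLpos, fun {h} hdist => ?_⟩
  rw [Real.dist_eq] at hdist ⊢
  rw [abs_lt] at hdist
  have hup : winv b f h ≤ sU := by
    rcases le_or_gt h 0 with hneg | hposh
    · have : winv b f h ≤ winv b f 0 := winv_mono hb hf0 hm hneg
      rw [winv_zero hb hm hf0] at this
      exact le_trans this (le_trans hs0mem.1 hsU1.le)
    · have hWle := (winv_mem hb hf0 hfc hposh.le).2
      have hWmem := (winv_mem hb hf0 hfc hposh.le).1
      by_contra hc
      push_neg at hc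
      have := hm hsU2 hWmem hc
      have h2 : f (winv b f h) < f sU := by
        calc f (winv b f h) ≤ h := hWle
        _ < h0 + (f sU - h0) := by have := hdist.2; have := min_le_left (f sU - h0) δL; linarith
        _ = f sU := by ring
      linarith
  have hlow : s0 - ε < winv b f h := by
    apply hδL
    have := hdist.1
    have := min_le_right (f sU - h0) δL
    linarith
  have : winv b f h ≤ s0 + ε/2 := le_trans hup (min_le_left _ _)
  rw [abs_lt]
  constructor <;> [linarith; linarith]

lemma winv_hasDerivAt (hb : 0 < b) (hf0 : f 0 = 0) (hm : StrictMonoOn f (Set.Icc 0 b))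
    (hfc : ContinuousOn f (Set.Icc 0 b)) {h d : ℝ} (hh : 0 < h) (hhb : h < f b)
    (hfd : HasDerivAt f d (winv b f h)) (hd : d ≠ 0) :
    HasDerivAt (winv b f) d⁻¹ h := by
  apply HasDerivAt.of_local_left_inverse (winv_continuousAt hb hf0 hm hfc hh.le hhb) hfd hd
  have hmem : Set.Ioo (0:ℝ) (f b) ∈ 𝓝 h := Ioo_mem_nhds hh hhb
  filter_upwards [hmem] with y hy
  exact winv_apply hb hf0 hm hfc hy.1.le hy.2.le

end W

section Helpers

/-- monotone from HasDerivAt with nonneg derivative on a half-open interval -/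
lemma mono_of_hasDerivAt_nonneg {φ Φ : ℝ → ℝ} {a c : ℝ}
    (hφ : ContinuousOn φ (Set.Ioc a c))
    (hd : ∀ r ∈ Set.Ioo a c, HasDerivAt φ (Φ r) r)
    (hΦ : ∀ r ∈ Set.Ioo a c, 0 ≤ Φ r) :
    ∀ r ∈ Set.Ioc a c, ∀ s ∈ Set.Ioc a c, r ≤ s → φ r ≤ φ s := by
  intro r hr s hs hrs
  have hsub : Set.Icc r s ⊆ Set.Ioc a c := fun y hy => ⟨lt_of_lt_of_le hr.1 hy.1, le_trans hy.2 hs.2⟩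
  have hsub2 : Set.Ioo r s ⊆ Set.Ioo a c := fun y hy => ⟨lt_trans hr.1 hy.1, lt_of_lt_of_le hy.2 hs.2⟩
  have := monotoneOn_of_deriv_nonneg (convex_Icc r s) (hφ.mono hsub)
    (fun y hy => by
      rw [interior_Icc] at hy
      exact (hd y (hsub2 hy)).differentiableAt.differentiableWithinAt)
    (fun y hy => by
      rw [interior_Icc] at hy
      rw [(hd y (hsub2 hy)).deriv]
      exact hΦ y (hsub2 hy))
  exact this (Set.left_mem_Icc.mpr hrs) (Set.right_mem_Icc.mpr hrs) hrs

/-- antitone version on closed interval -/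
lemma anti_of_hasDerivAt_nonpos {φ Φ : ℝ → ℝ} {a c : ℝ} (hac : a ≤ c)
    (hφ : ContinuousOn φ (Set.Icc a c))
    (hd : ∀ r ∈ Set.Ioo a c, HasDerivAt φ (Φ r) r)
    (hΦ : ∀ r ∈ Set.Ioo a c, Φ r ≤ 0) :
    φ c ≤ φ a := by
  have := antitoneOn_of_deriv_nonpos (convex_Icc a c) hφ
    (fun y hy => by
      rw [interior_Icc] at hy
      exact (hd y hy).differentiableAt.differentiableWithinAt)
    (fun y hy => by
      rw [interior_Icc] at hy
      rw [(hd y hy).deriv]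
      exact hΦ y hy)
  exact this (Set.left_mem_Icc.mpr hac) (Set.right_mem_Icc.mpr hac) hac

/-- limit of deriv along within-filter towards boundary point -/
lemma deriv_tendsto_boundary {f : ℝ → ℝ} {b a : ℝ} (hb : 0 < b)
    (hf1 : ContDiffOn ℝ 1 f (Set.Icc 0 b)) (ha : a ∈ Set.Icc 0 b) :
    Filter.Tendsto (deriv f) (𝓝[Set.Ioo 0 b] a) (𝓝 (derivWithin f (Set.Icc 0 b) a)) := by
  have hcont : ContinuousOn (derivWithin f (Set.Icc 0 b)) (Set.Icc 0 b) :=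
    hf1.continuousOn_derivWithin (uniqueDiffOn_Icc hb) le_rfl
  have h1 : Filter.Tendsto (derivWithin f (Set.Icc 0 b)) (𝓝[Set.Icc 0 b] a)
      (𝓝 (derivWithin f (Set.Icc 0 b) a)) := hcont a ha
  have h2 : Filter.Tendsto (derivWithin f (Set.Icc 0 b)) (𝓝[Set.Ioo 0 b] a)
      (𝓝 (derivWithin f (Set.Icc 0 b) a)) :=
    h1.mono_left (nhdsWithin_mono _ Set.Ioo_subset_Icc_self)
  apply h2.congr'
  filter_upwards [self_mem_nhdsWithin] with y hy
  exact derivWithin_of_mem_nhds (Icc_mem_nhds hy.1 hy.2)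

/-- FF p = (1+p^2)^(-1/2) -/
noncomputable def FF (p : ℝ) : ℝ := (1 + p^2) ^ (-(1/2) : ℝ)

lemma FF_hasDerivAt (p : ℝ) : HasDerivAt FF (-p * (1 + p^2) ^ (-(3/2) : ℝ)) p := by
  have hpos : (0:ℝ) < 1 + p^2 := by positivity
  have hinner : HasDerivAt (fun q : ℝ => 1 + q^2) (2*p) p := by
    simpa using ((hasDerivAt_pow 2 p).const_add 1)
  have houter : HasDerivAt (fun x : ℝ => x ^ (-(1/2) : ℝ))
      ((-(1/2) : ℝ) * (1 + p^2) ^ ((-(1/2) : ℝ) - 1)) (1 + p^2) :=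
    Real.hasDerivAt_rpow_const (Or.inl (ne_of_gt hpos))
  have := houter.comp p hinner
  refine this.congr_deriv ?_
  have : ((-(1/2) : ℝ) - 1) = (-(3/2) : ℝ) := by norm_num
  rw [this]
  ring

lemma FF_le_one {p : ℝ} : FF p ≤ 1 := by
  unfold FF
  have h1 : (1:ℝ) ≤ 1 + p^2 := by nlinarith [sq_nonneg p]
  calc (1 + p^2) ^ (-(1/2) : ℝ) ≤ 1 ^ (-(1/2) : ℝ) :=
        Real.rpow_le_rpow_of_nonpos one_pos h1 (by norm_num)
    _ = 1 := Real.one_rpow _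

lemma FF_le_iff {p q : ℝ} (hp : 0 ≤ p) (hq : 0 ≤ q) : FF p ≤ FF q ↔ q ≤ p := by
  constructor
  · intro h
    have hiff := Real.rpow_le_rpow_iff_of_neg (by positivity : (0:ℝ) < 1 + p^2)
      (by positivity : (0:ℝ) < 1 + q^2) (by norm_num : (-(1/2):ℝ) < 0)
    have h2 : 1 + q^2 ≤ 1 + p^2 := hiff.mp h
    nlinarith
  · intro h
    have hiff := Real.rpow_le_rpow_iff_of_neg (by positivity : (0:ℝ) < 1 + p^2)
      (by positivity : (0:ℝ) < 1 + q^2) (by norm_num : (-(1/2):ℝ) < 0)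
    exact hiff.mpr (by nlinarith)

lemma FF_continuous (p : ℝ) : ContinuousAt FF p := (FF_hasDerivAt p).differentiableAt.continuousAt

end Helpers

section Main

lemma v_zero {b : ℝ} (hb : 0 < b) {u v : ℝ → ℝ}
    (hu1 : ContDiffOn ℝ 1 u (Set.Icc 0 b)) (hv1 : ContDiffOn ℝ 1 v (Set.Icc 0 b))
    (huv : ∀ t ∈ Set.Ioc 0 b, 0 < v t ∧ v t ≤ u t) (hu0 : u 0 = 0) : v 0 = 0 := by
  have hvc : Filter.Tendsto v (𝓝[Set.Ioc 0 b] 0) (𝓝 (v 0)) :=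
    (hv1.continuousOn 0 ⟨le_rfl, hb.le⟩).mono Set.Ioc_subset_Icc_self
  have huc : Filter.Tendsto u (𝓝[Set.Ioc 0 b] 0) (𝓝 0) := by
    have h0 : ContinuousWithinAt u (Set.Ioc 0 b) 0 :=
      (hu1.continuousOn 0 ⟨le_rfl, hb.le⟩).mono Set.Ioc_subset_Icc_self
    have h1 : Filter.Tendsto u (𝓝[Set.Ioc 0 b] 0) (𝓝 (u 0)) := h0
    rwa [hu0] at h1
  have hne : (𝓝[Set.Ioc 0 b] 0).NeBot := left_nhdsWithin_Ioc_neBot hb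
  have h1 : v 0 ≤ 0 :=
    le_of_tendsto_of_tendsto hvc huc
      (eventually_mem_nhdsWithin.mono (fun t ht => (huv t ht).2))
  have h2 : 0 ≤ v 0 :=
    ge_of_tendsto hvc (eventually_mem_nhdsWithin.mono (fun t ht => (huv t ht).1.le))
  linarith

lemma caseRight {b : ℝ} (hb : 0 < b) {u v : ℝ → ℝ}
    (hu2 : ContDiffOn ℝ 2 u (Set.Ioo 0 b)) (hv2 : ContDiffOn ℝ 2 v (Set.Ioo 0 b))
    (hu1 : ContDiffOn ℝ 1 u (Set.Icc 0 b)) (hv1 : ContDiffOn ℝ 1 v (Set.Icc 0 b))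
    (huv : ∀ t ∈ Set.Ioc 0 b, 0 < v t ∧ v t ≤ u t)
    (hmr : ∀ t ∈ Set.Ioc 0 b, 0 ≤ deriv u t ∧ 0 < deriv v t)
    (hu0 : u 0 = 0) (hu'0 : derivWithin u (Set.Icc 0 b) 0 = 0)
    (hmain : ∀ t s : ℝ, 0 < t → t < s → s < b → u t = v s →
      deriv (deriv u) t / (1 + (deriv u t) ^ 2) ^ ((3 : ℝ) / 2) ≤
        deriv (deriv v) s / (1 + (deriv v s) ^ 2) ^ ((3 : ℝ) / 2))
    {x : ℝ} (hx : x ∈ Set.Ioo 0 b) (hxvb : u x < v b) : u x = v x := by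
  by_cases hxe : u x = v x
  · exact hxe
  exfalso
  obtain ⟨hx0, hxb⟩ := hx
  have hucont := hu1.continuousOn
  have hvcont := hv1.continuousOn
  have hv0 : v 0 = 0 := v_zero hb hu1 hv1 huv hu0
  have hvmono : StrictMonoOn v (Set.Icc 0 b) := by
    apply strictMonoOn_of_deriv_pos (convex_Icc 0 b) hvcont
    rw [interior_Icc]
    exact fun r hr => (hmr r ⟨hr.1, hr.2.le⟩).2
  have humono : MonotoneOn u (Set.Icc 0 b) := by
    apply monotoneOn_of_deriv_nonneg (convex_Icc 0 b) hucont
    · rw [interior_Icc]; exact hu2.differentiableOn two_ne_zero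
    · rw [interior_Icc]; exact fun r hr => (hmr r ⟨hr.1, hr.2.le⟩).1
  have hxIcc : x ∈ Set.Icc 0 b := ⟨hx0.le, hxb.le⟩
  have hrIccb : ∀ r ∈ Set.Icc 0 x, r ∈ Set.Icc 0 b := fun r hr => ⟨hr.1, le_trans hr.2 hxb.le⟩
  have hur_lt : ∀ r ∈ Set.Icc 0 x, u r < v b :=
    fun r hr => lt_of_le_of_lt (humono (hrIccb r hr) hxIcc hr.2) hxvb
  have hur_nonneg : ∀ r ∈ Set.Icc 0 x, 0 ≤ u r :=
    fun r hr => hu0 ▸ humono ⟨le_rfl, hb.le⟩ (hrIccb r hr) hr.1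
  have hvu : ∀ r ∈ Set.Icc 0 x, v r ≤ u r := by
    intro r hr
    rcases eq_or_lt_of_le hr.1 with he | hpos
    · rw [← he, hu0, hv0]
    · exact (huv r ⟨hpos, le_trans hr.2 hxb.le⟩).2
  -- touching set
  set T := {r | r ∈ Set.Icc 0 x ∧ u r = v r} with hTdef
  have hTne : T.Nonempty := ⟨0, ⟨le_rfl, hx0.le⟩, by rw [hu0, hv0]⟩
  have hTbdd : BddAbove T := BddAbove.mono (fun r hr => hr.1) bddAbove_Icc
  have hTcl : IsClosed T := by
    have heq : T = Set.Icc 0 x ∩ (fun r => u r - v r) ⁻¹' {0} := by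
      ext r
      simp only [hTdef, Set.mem_setOf_eq, Set.mem_inter_iff, Set.mem_preimage,
        Set.mem_singleton_iff, sub_eq_zero]
    rw [heq]
    exact ContinuousOn.preimage_isClosed_of_isClosed
      ((hucont.mono (Set.Icc_subset_Icc le_rfl hxb.le)).sub
        (hvcont.mono (Set.Icc_subset_Icc le_rfl hxb.le))) isClosed_Icc isClosed_singleton
  set t2 := sSup T with ht2def
  have hmemT : t2 ∈ T := hTcl.csSup_mem hTne hTbdd
  have ht2Iccx : t2 ∈ Set.Icc 0 x := hmemT.1
  have ht2uv : u t2 = v t2 := hmemT.2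
  have ht2lt : t2 < x := lt_of_le_of_ne ht2Iccx.2 (fun he => hxe (by rw [← he]; exact ht2uv))
  have ht2Icc : t2 ∈ Set.Icc 0 b := hrIccb t2 ht2Iccx
  have hrIcc : ∀ r ∈ Set.Ioc t2 x, r ∈ Set.Icc 0 x := fun r hr =>
    ⟨le_trans ht2Iccx.1 hr.1.le, hr.2⟩
  have hrIoo : ∀ r ∈ Set.Ioc t2 x, r ∈ Set.Ioo 0 b := fun r hr =>
    ⟨lt_of_le_of_lt ht2Iccx.1 hr.1, lt_of_le_of_lt hr.2 hxb⟩
  have hgt : ∀ r ∈ Set.Ioc t2 x, v r < u r := by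
    intro r hr
    rcases eq_or_lt_of_le (hvu r (hrIcc r hr)) with he | h
    · exact absurd (le_csSup hTbdd ⟨hrIcc r hr, he.symm⟩) (not_le.mpr hr.1)
    · exact h
  -- sigma
  set σ := fun r => winv b v (u r) with hσdef
  have hσval : ∀ r ∈ Set.Icc 0 x, v (σ r) = u r := fun r hr =>
    winv_apply hb hv0 hvmono hvcont (hur_nonneg r hr) (hur_lt r hr).le
  have hσltb : ∀ r ∈ Set.Icc 0 x, σ r < b := fun r hr =>
    winv_lt_b hb hv0 hvmono hvcont (hur_nonneg r hr) (hur_lt r hr)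
  have hσge : ∀ r ∈ Set.Icc 0 x, r ≤ σ r := fun r hr =>
    winv_le_of (hrIccb r hr) (hvu r hr)
  have hσt2 : σ t2 = t2 := by
    show winv b v (u t2) = t2
    rw [ht2uv]
    exact winv_f hb hvmono ht2Icc
  have hσIoo : ∀ r ∈ Set.Ioc t2 x, σ r ∈ Set.Ioo 0 b := fun r hr =>
    ⟨lt_of_lt_of_le (hrIoo r hr).1 (hσge r (hrIcc r hr)), hσltb r (hrIcc r hr)⟩
  have hσgt : ∀ r ∈ Set.Ioc t2 x, r < σ r := by
    intro r hr
    rcases eq_or_lt_of_le (hσge r (hrIcc r hr)) with he | h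
    · exfalso
      have := hσval r (hrIcc r hr)
      rw [← he] at this
      exact absurd this.symm (ne_of_gt (hgt r hr))
    · exact h
  -- derivative packs
  have hudiff : ∀ r ∈ Set.Ioo 0 b, HasDerivAt u (deriv u r) r := by
    intro r hr
    exact ((hu2.differentiableOn two_ne_zero r hr).differentiableAt
      (isOpen_Ioo.mem_nhds hr)).hasDerivAt
  have hvdiff : ∀ r ∈ Set.Ioo 0 b, HasDerivAt v (deriv v r) r := by
    intro r hr
    exact ((hv2.differentiableOn two_ne_zero r hr).differentiableAt
      (isOpen_Ioo.mem_nhds hr)).hasDerivAt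
  have hu'cd : ContDiffOn ℝ 1 (deriv u) (Set.Ioo 0 b) :=
    hu2.deriv_of_isOpen isOpen_Ioo (by norm_num)
  have hv'cd : ContDiffOn ℝ 1 (deriv v) (Set.Ioo 0 b) :=
    hv2.deriv_of_isOpen isOpen_Ioo (by norm_num)
  have hu'diff : ∀ r ∈ Set.Ioo 0 b, HasDerivAt (deriv u) (deriv (deriv u) r) r := by
    intro r hr
    exact ((hu'cd.differentiableOn one_ne_zero r hr).differentiableAt
      (isOpen_Ioo.mem_nhds hr)).hasDerivAt
  have hv'diff : ∀ r ∈ Set.Ioo 0 b, HasDerivAt (deriv v) (deriv (deriv v) r) r := by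
    intro r hr
    exact ((hv'cd.differentiableOn one_ne_zero r hr).differentiableAt
      (isOpen_Ioo.mem_nhds hr)).hasDerivAt
  have hQpos : ∀ r ∈ Set.Ioc t2 x, 0 < deriv v (σ r) := fun r hr =>
    (hmr (σ r) ⟨(hσIoo r hr).1, (hσIoo r hr).2.le⟩).2
  have hPnonneg : ∀ r ∈ Set.Ioc t2 x, 0 ≤ deriv u r := fun r hr =>
    (hmr r ⟨(hrIoo r hr).1, (hrIoo r hr).2.le⟩).1
  have hσd : ∀ r ∈ Set.Ioc t2 x, HasDerivAt σ ((deriv v (σ r))⁻¹ * deriv u r) r := by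
    intro r hr
    have hurpos : 0 < u r :=
      lt_of_lt_of_le (huv r ⟨(hrIoo r hr).1, (hrIoo r hr).2.le⟩).1
        (huv r ⟨(hrIoo r hr).1, (hrIoo r hr).2.le⟩).2
    have hW : HasDerivAt (winv b v) ((deriv v (σ r))⁻¹) (u r) :=
      winv_hasDerivAt hb hv0 hvmono hvcont hurpos (hur_lt r (hrIcc r hr))
        (hvdiff (σ r) (hσIoo r hr)) (ne_of_gt (hQpos r hr))
    exact hW.comp r (hudiff r (hrIoo r hr))
  -- D
  set D := fun r => FF (deriv u r) - FF (deriv v (σ r)) with hDdef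
  set Φ := fun r => (-(deriv u r) * (1 + (deriv u r)^2) ^ (-(3/2):ℝ) * deriv (deriv u) r) -
      (-(deriv v (σ r)) * (1 + (deriv v (σ r))^2) ^ (-(3/2):ℝ) *
        (deriv (deriv v) (σ r) * ((deriv v (σ r))⁻¹ * deriv u r))) with hΦdef
  have hDd : ∀ r ∈ Set.Ioo t2 x, HasDerivAt D (Φ r) r := by
    intro r hr
    have hrI : r ∈ Set.Ioc t2 x := ⟨hr.1, hr.2.le⟩
    have hA : HasDerivAt (fun r => FF (deriv u r))
        (-(deriv u r) * (1 + (deriv u r)^2) ^ (-(3/2):ℝ) * deriv (deriv u) r) r :=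
      (FF_hasDerivAt _).comp r (hu'diff r (hrIoo r hrI))
    have hB0 : HasDerivAt (fun r => deriv v (σ r))
        (deriv (deriv v) (σ r) * ((deriv v (σ r))⁻¹ * deriv u r)) r :=
      (hv'diff (σ r) (hσIoo r hrI)).comp r (hσd r hrI)
    have hB : HasDerivAt (fun r => FF (deriv v (σ r)))
        (-(deriv v (σ r)) * (1 + (deriv v (σ r))^2) ^ (-(3/2):ℝ) *
          (deriv (deriv v) (σ r) * ((deriv v (σ r))⁻¹ * deriv u r))) r :=
      (FF_hasDerivAt _).comp r hB0
    exact hA.sub hB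
  have hΦnonneg : ∀ r ∈ Set.Ioo t2 x, 0 ≤ Φ r := by
    intro r hr
    have hrI : r ∈ Set.Ioc t2 x := ⟨hr.1, hr.2.le⟩
    have hQ := hQpos r hrI
    have hP := hPnonneg r hrI
    have hκ := hmain r (σ r) (hrIoo r hrI).1 (hσgt r hrI) (hσIoo r hrI).2
      (hσval r (hrIcc r hrI)).symm
    set P := deriv u r
    set Q := deriv v (σ r)
    set KU := deriv (deriv u) r
    set KV := deriv (deriv v) (σ r)
    have h1 : (0:ℝ) < 1 + P^2 := by positivity
    have h2 : (0:ℝ) < 1 + Q^2 := by positivity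
    have e1 : (1 + P^2) ^ (-(3/2):ℝ) = ((1 + P^2) ^ ((3:ℝ)/2))⁻¹ := by
      rw [← Real.rpow_neg h1.le]
    have e2 : (1 + Q^2) ^ (-(3/2):ℝ) = ((1 + Q^2) ^ ((3:ℝ)/2))⁻¹ := by
      rw [← Real.rpow_neg h2.le]
    have hQne : Q ≠ 0 := ne_of_gt hQ
    have hΦeq : Φ r = P * (KV / (1 + Q^2) ^ ((3:ℝ)/2) - KU / (1 + P^2) ^ ((3:ℝ)/2)) := by
      show (-(P) * (1 + P^2) ^ (-(3/2):ℝ) * KU) -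
        (-(Q) * (1 + Q^2) ^ (-(3/2):ℝ) * (KV * (Q⁻¹ * P))) = _
      rw [e1, e2]
      field_simp
      ring
    rw [hΦeq]
    exact mul_nonneg hP (by linarith [hκ])
  have hDcont : ContinuousOn D (Set.Ioc t2 x) := by
    intro r hr
    apply ContinuousAt.continuousWithinAt
    have h1 : ContinuousAt (deriv u) r :=
      (hu'cd.continuousOn r (hrIoo r hr)).continuousAt (isOpen_Ioo.mem_nhds (hrIoo r hr))
    have hWc : ContinuousAt (winv b v) (u r) :=
      winv_continuousAt hb hv0 hvmono hvcont (hur_nonneg r (hrIcc r hr)) (hur_lt r (hrIcc r hr))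
    have huc : ContinuousAt u r := (hudiff r (hrIoo r hr)).differentiableAt.continuousAt
    have h2 : ContinuousAt σ r := hWc.comp huc
    have h3 : ContinuousAt (deriv v) (σ r) :=
      (hv'cd.continuousOn (σ r) (hσIoo r hr)).continuousAt (isOpen_Ioo.mem_nhds (hσIoo r hr))
    exact ((FF_continuous _).comp h1).sub ((FF_continuous _).comp (h3.comp h2))
  -- limits at t2
  set p2 := derivWithin u (Set.Icc 0 b) t2 with hp2def
  set q2 := derivWithin v (Set.Icc 0 b) t2 with hq2def
  have hlne : (𝓝[Set.Ioc t2 x] t2).NeBot := left_nhdsWithin_Ioc_neBot ht2lt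
  have hPlim : Filter.Tendsto (deriv u) (𝓝[Set.Ioc t2 x] t2) (𝓝 p2) :=
    (deriv_tendsto_boundary hb hu1 ht2Icc).mono_left (nhdsWithin_mono _ (fun r hr => hrIoo r hr))
  have hσtend : Filter.Tendsto σ (𝓝[Set.Ioc t2 x] t2) (𝓝[Set.Ioo 0 b] t2) := by
    rw [tendsto_nhdsWithin_iff]
    constructor
    · have hWc : ContinuousAt (winv b v) (u t2) :=
        winv_continuousAt hb hv0 hvmono hvcont (hur_nonneg t2 ht2Iccx) (hur_lt t2 ht2Iccx)
      have huc : Filter.Tendsto u (𝓝[Set.Ioc t2 x] t2) (𝓝 (u t2)) :=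
        (hucont t2 ht2Icc).mono (fun y hy => hrIccb y (hrIcc y hy))
      have h5 : Filter.Tendsto σ (𝓝[Set.Ioc t2 x] t2) (𝓝 (σ t2)) := hWc.tendsto.comp huc
      rwa [hσt2] at h5
    · exact eventually_mem_nhdsWithin.mono (fun r hr => hσIoo r hr)
  have hQlim : Filter.Tendsto (fun r => deriv v (σ r)) (𝓝[Set.Ioc t2 x] t2) (𝓝 q2) :=
    (deriv_tendsto_boundary hb hv1 ht2Icc).comp hσtend
  have hDlim : Filter.Tendsto D (𝓝[Set.Ioc t2 x] t2) (𝓝 (FF p2 - FF q2)) :=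
    ((FF_continuous p2).tendsto.comp hPlim).sub ((FF_continuous q2).tendsto.comp hQlim)
  have hd0 : 0 ≤ FF p2 - FF q2 := by
    rcases eq_or_lt_of_le ht2Iccx.1 with he | hpos
    · have hp20 : p2 = 0 := by rw [hp2def, ← he]; exact hu'0
      have : FF p2 = 1 := by rw [hp20]; show ((1:ℝ) + 0^2) ^ (-(1/2):ℝ) = 1; norm_num
      rw [this]
      linarith [FF_le_one (p := q2)]
    · have ht2Ioo : t2 ∈ Set.Ioo 0 b := ⟨hpos, lt_of_le_of_lt ht2Iccx.2 hxb⟩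
      have hmin : IsLocalMin (fun r => u r - v r) t2 := by
        have hsub : Set.Ioo 0 b ∈ 𝓝 t2 := isOpen_Ioo.mem_nhds ht2Ioo
        filter_upwards [hsub] with y hy
        have h6 : v y ≤ u y := (huv y ⟨hy.1, hy.2.le⟩).2
        have h7 : u t2 - v t2 = 0 := by rw [ht2uv]; ring
        simp only [h7]
        linarith
      have hdz : deriv (fun r => u r - v r) t2 = 0 := hmin.deriv_eq_zero
      have hud := hudiff t2 ht2Ioo
      have hvd := hvdiff t2 ht2Ioo
      have hsubd := (hud.sub hvd).deriv
      have heq2 : deriv u t2 = deriv v t2 := by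
        rw [show deriv (u - v) t2 = 0 from hdz] at hsubd
        linarith [hsubd]
      have hp2 : p2 = deriv u t2 := derivWithin_of_mem_nhds (Icc_mem_nhds ht2Ioo.1 ht2Ioo.2)
      have hq2 : q2 = deriv v t2 := derivWithin_of_mem_nhds (Icc_mem_nhds ht2Ioo.1 ht2Ioo.2)
      rw [hp2, hq2, heq2]
      simp
  have hDmono := mono_of_hasDerivAt_nonneg hDcont hDd hΦnonneg
  have hDnonneg : ∀ r ∈ Set.Ioc t2 x, 0 ≤ D r := by
    intro r hr
    have hev : ∀ᶠ y in 𝓝[Set.Ioc t2 x] t2, D y ≤ D r := by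
      have h1 : Set.Iio r ∈ 𝓝 t2 := Iio_mem_nhds hr.1
      filter_upwards [mem_nhdsWithin_of_mem_nhds h1, self_mem_nhdsWithin] with y hy1 hy2
      exact hDmono y hy2 r hr (le_of_lt hy1)
    have := le_of_tendsto hDlim hev
    linarith
  have hPQ : ∀ r ∈ Set.Ioc t2 x, deriv u r ≤ deriv v (σ r) := by
    intro r hr
    have h8 : FF (deriv v (σ r)) ≤ FF (deriv u r) := by
      have := hDnonneg r hr
      simp only [hDdef] at this
      linarith
    exact (FF_le_iff (hQpos r hr).le (hPnonneg r hr)).mp h8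
  -- rho
  set ρ := fun r => σ r - r with hρdef
  have hρcont : ContinuousOn ρ (Set.Icc t2 x) := by
    apply ContinuousOn.sub _ continuousOn_id
    intro r hr
    have hrx : r ∈ Set.Icc 0 x := ⟨le_trans ht2Iccx.1 hr.1, hr.2⟩
    have hWc : ContinuousAt (winv b v) (u r) :=
      winv_continuousAt hb hv0 hvmono hvcont (hur_nonneg r hrx) (hur_lt r hrx)
    exact hWc.comp_continuousWithinAt ((hucont r (hrIccb r hrx)).mono
      (fun y hy => hrIccb y ⟨le_trans ht2Iccx.1 hy.1, hy.2⟩))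
  have hρd : ∀ r ∈ Set.Ioo t2 x, HasDerivAt ρ ((deriv v (σ r))⁻¹ * deriv u r - 1) r :=
    fun r hr => (hσd r ⟨hr.1, hr.2.le⟩).sub (hasDerivAt_id r)
  have hρ'le : ∀ r ∈ Set.Ioo t2 x, (deriv v (σ r))⁻¹ * deriv u r - 1 ≤ 0 := by
    intro r hr
    have h1 := hPQ r ⟨hr.1, hr.2.le⟩
    have h2 := hQpos r ⟨hr.1, hr.2.le⟩
    have h3 : (deriv v (σ r))⁻¹ * deriv u r ≤ 1 := by
      rw [mul_comm, ← div_eq_mul_inv]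
      exact div_le_one_of_le₀ h1 h2.le
    linarith
  have hfinal : ρ x ≤ ρ t2 := anti_of_hasDerivAt_nonpos ht2lt.le hρcont hρd hρ'le
  have hρt2 : ρ t2 = 0 := by simp only [hρdef, hσt2, sub_self]
  have hσx : σ x = x := by
    have h1 : ρ x ≤ 0 := by rw [hρt2] at hfinal; exact hfinal
    have h2 : σ x - x ≤ 0 := h1
    have h3 := hσge x ⟨hx0.le, le_rfl⟩
    linarith
  apply hxe
  have := hσval x ⟨hx0.le, le_rfl⟩
  rw [hσx] at this
  exact this.symm

lemma caseLeft {b : ℝ} (hb : 0 < b) {u v : ℝ → ℝ}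
    (hu2 : ContDiffOn ℝ 2 u (Set.Ioo 0 b)) (hv2 : ContDiffOn ℝ 2 v (Set.Ioo 0 b))
    (hu1 : ContDiffOn ℝ 1 u (Set.Icc 0 b)) (hv1 : ContDiffOn ℝ 1 v (Set.Icc 0 b))
    (huv : ∀ t ∈ Set.Ioc 0 b, 0 < v t ∧ v t ≤ u t)
    (hml : ∀ t ∈ Set.Ioc 0 b, 0 < deriv u t ∧ 0 ≤ deriv v t)
    (hu0 : u 0 = 0) (hu'0 : derivWithin u (Set.Icc 0 b) 0 = 0)
    (hmain : ∀ t s : ℝ, 0 < t → t < s → s < b → u t = v s →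
      deriv (deriv u) t / (1 + (deriv u t) ^ 2) ^ ((3 : ℝ) / 2) ≤
        deriv (deriv v) s / (1 + (deriv v s) ^ 2) ^ ((3 : ℝ) / 2))
    {x : ℝ} (hx : x ∈ Set.Ioo 0 b) : u x = v x := by
  by_cases hxe : u x = v x
  · exact hxe
  exfalso
  obtain ⟨hx0, hxb⟩ := hx
  have hucont := hu1.continuousOn
  have hvcont := hv1.continuousOn
  have hv0 : v 0 = 0 := v_zero hb hu1 hv1 huv hu0
  have humonoS : StrictMonoOn u (Set.Icc 0 b) := by
    apply strictMonoOn_of_deriv_pos (convex_Icc 0 b) hucont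
    rw [interior_Icc]
    exact fun r hr => (hml r ⟨hr.1, hr.2.le⟩).1
  have hvmonoM : MonotoneOn v (Set.Icc 0 b) := by
    apply monotoneOn_of_deriv_nonneg (convex_Icc 0 b) hvcont
    · rw [interior_Icc]; exact hv2.differentiableOn two_ne_zero
    · rw [interior_Icc]; exact fun r hr => (hml r ⟨hr.1, hr.2.le⟩).2
  have hxIcc : x ∈ Set.Icc 0 b := ⟨hx0.le, hxb.le⟩
  have hbIcc : b ∈ Set.Icc 0 b := ⟨hb.le, le_rfl⟩
  have hrIccb : ∀ r ∈ Set.Icc 0 x, r ∈ Set.Icc 0 b := fun r hr => ⟨hr.1, le_trans hr.2 hxb.le⟩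
  have hvu : ∀ r ∈ Set.Icc 0 x, v r ≤ u r := by
    intro r hr
    rcases eq_or_lt_of_le hr.1 with he | hpos
    · rw [← he, hu0, hv0]
    · exact (huv r ⟨hpos, le_trans hr.2 hxb.le⟩).2
  have huxb : u x < u b := humonoS hxIcc hbIcc hxb
  have hvs_lt : ∀ s ∈ Set.Icc 0 x, v s < u b := by
    intro s hs
    have h1 : u s ≤ u x := humonoS.monotoneOn (hrIccb s hs) hxIcc hs.2
    exact lt_of_le_of_lt (le_trans (hvu s hs) h1) huxb
  have hvs_nonneg : ∀ s ∈ Set.Icc 0 x, 0 ≤ v s :=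
    fun s hs => hv0 ▸ hvmonoM ⟨le_rfl, hb.le⟩ (hrIccb s hs) hs.1
  -- touching set
  set T := {r | r ∈ Set.Icc 0 x ∧ u r = v r} with hTdef
  have hTne : T.Nonempty := ⟨0, ⟨le_rfl, hx0.le⟩, by rw [hu0, hv0]⟩
  have hTbdd : BddAbove T := BddAbove.mono (fun r hr => hr.1) bddAbove_Icc
  have hTcl : IsClosed T := by
    have heq : T = Set.Icc 0 x ∩ (fun r => u r - v r) ⁻¹' {0} := by
      ext r
      simp only [hTdef, Set.mem_setOf_eq, Set.mem_inter_iff, Set.mem_preimage,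
        Set.mem_singleton_iff, sub_eq_zero]
    rw [heq]
    exact ContinuousOn.preimage_isClosed_of_isClosed
      ((hucont.mono (Set.Icc_subset_Icc le_rfl hxb.le)).sub
        (hvcont.mono (Set.Icc_subset_Icc le_rfl hxb.le))) isClosed_Icc isClosed_singleton
  set t2 := sSup T with ht2def
  have hmemT : t2 ∈ T := hTcl.csSup_mem hTne hTbdd
  have ht2Iccx : t2 ∈ Set.Icc 0 x := hmemT.1
  have ht2uv : u t2 = v t2 := hmemT.2
  have ht2lt : t2 < x := lt_of_le_of_ne ht2Iccx.2 (fun he => hxe (by rw [← he]; exact ht2uv))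
  have ht2Icc : t2 ∈ Set.Icc 0 b := hrIccb t2 ht2Iccx
  have hrIcc : ∀ r ∈ Set.Ioc t2 x, r ∈ Set.Icc 0 x := fun r hr =>
    ⟨le_trans ht2Iccx.1 hr.1.le, hr.2⟩
  have hrIoo : ∀ r ∈ Set.Ioc t2 x, r ∈ Set.Ioo 0 b := fun r hr =>
    ⟨lt_of_le_of_lt ht2Iccx.1 hr.1, lt_of_le_of_lt hr.2 hxb⟩
  have hgt : ∀ r ∈ Set.Ioc t2 x, v r < u r := by
    intro r hr
    rcases eq_or_lt_of_le (hvu r (hrIcc r hr)) with he | h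
    · exact absurd (le_csSup hTbdd ⟨hrIcc r hr, he.symm⟩) (not_le.mpr hr.1)
    · exact h
  -- tau
  set τ := fun s => winv b u (v s) with hτdef
  have hτval : ∀ s ∈ Set.Icc 0 x, u (τ s) = v s := fun s hs =>
    winv_apply hb hu0 humonoS hucont (hvs_nonneg s hs) (hvs_lt s hs).le
  have hτle : ∀ s ∈ Set.Icc 0 x, τ s ≤ s := by
    intro s hs
    have h1 : winv b u (v s) ≤ winv b u (u s) := winv_mono hb hu0 humonoS (hvu s hs)
    rwa [winv_f hb humonoS (hrIccb s hs)] at h1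
  have hτpos : ∀ s ∈ Set.Ioc t2 x, 0 < τ s := by
    intro s hs
    exact winv_pos hb hu0 humonoS hucont (huv s ⟨(hrIoo s hs).1, (hrIoo s hs).2.le⟩).1
      (hvs_lt s (hrIcc s hs)).le
  have hτIoo : ∀ s ∈ Set.Ioc t2 x, τ s ∈ Set.Ioo 0 b := fun s hs =>
    ⟨hτpos s hs, lt_of_le_of_lt (le_trans (hτle s (hrIcc s hs)) hs.2) hxb⟩
  have hτt2 : τ t2 = t2 := by
    show winv b u (v t2) = t2
    rw [← ht2uv]
    exact winv_f hb humonoS ht2Icc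
  have hτlt : ∀ s ∈ Set.Ioc t2 x, τ s < s := by
    intro s hs
    rcases eq_or_lt_of_le (hτle s (hrIcc s hs)) with he | h
    · exfalso
      have := hτval s (hrIcc s hs)
      rw [he] at this
      exact absurd this (ne_of_gt (hgt s hs))
    · exact h
  -- derivative packs
  have hudiff : ∀ r ∈ Set.Ioo 0 b, HasDerivAt u (deriv u r) r := by
    intro r hr
    exact ((hu2.differentiableOn two_ne_zero r hr).differentiableAt
      (isOpen_Ioo.mem_nhds hr)).hasDerivAt
  have hvdiff : ∀ r ∈ Set.Ioo 0 b, HasDerivAt v (deriv v r) r := by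
    intro r hr
    exact ((hv2.differentiableOn two_ne_zero r hr).differentiableAt
      (isOpen_Ioo.mem_nhds hr)).hasDerivAt
  have hu'cd : ContDiffOn ℝ 1 (deriv u) (Set.Ioo 0 b) :=
    hu2.deriv_of_isOpen isOpen_Ioo (by norm_num)
  have hv'cd : ContDiffOn ℝ 1 (deriv v) (Set.Ioo 0 b) :=
    hv2.deriv_of_isOpen isOpen_Ioo (by norm_num)
  have hu'diff : ∀ r ∈ Set.Ioo 0 b, HasDerivAt (deriv u) (deriv (deriv u) r) r := by
    intro r hr
    exact ((hu'cd.differentiableOn one_ne_zero r hr).differentiableAt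
      (isOpen_Ioo.mem_nhds hr)).hasDerivAt
  have hv'diff : ∀ r ∈ Set.Ioo 0 b, HasDerivAt (deriv v) (deriv (deriv v) r) r := by
    intro r hr
    exact ((hv'cd.differentiableOn one_ne_zero r hr).differentiableAt
      (isOpen_Ioo.mem_nhds hr)).hasDerivAt
  have hPpos : ∀ s ∈ Set.Ioc t2 x, 0 < deriv u (τ s) := fun s hs =>
    (hml (τ s) ⟨(hτIoo s hs).1, (hτIoo s hs).2.le⟩).1
  have hQnonneg : ∀ s ∈ Set.Ioc t2 x, 0 ≤ deriv v s := fun s hs =>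
    (hml s ⟨(hrIoo s hs).1, (hrIoo s hs).2.le⟩).2
  have hτd : ∀ s ∈ Set.Ioc t2 x, HasDerivAt τ ((deriv u (τ s))⁻¹ * deriv v s) s := by
    intro s hs
    have hvspos : 0 < v s := (huv s ⟨(hrIoo s hs).1, (hrIoo s hs).2.le⟩).1
    have hW : HasDerivAt (winv b u) ((deriv u (τ s))⁻¹) (v s) :=
      winv_hasDerivAt hb hu0 humonoS hucont hvspos (hvs_lt s (hrIcc s hs))
        (hudiff (τ s) (hτIoo s hs)) (ne_of_gt (hPpos s hs))
    exact hW.comp s (hvdiff s (hrIoo s hs))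
  -- D
  set D := fun s => FF (deriv u (τ s)) - FF (deriv v s) with hDdef
  set Φ := fun s => (-(deriv u (τ s)) * (1 + (deriv u (τ s))^2) ^ (-(3/2):ℝ) *
      (deriv (deriv u) (τ s) * ((deriv u (τ s))⁻¹ * deriv v s))) -
      (-(deriv v s) * (1 + (deriv v s)^2) ^ (-(3/2):ℝ) * deriv (deriv v) s) with hΦdef
  have hDd : ∀ s ∈ Set.Ioo t2 x, HasDerivAt D (Φ s) s := by
    intro s hs
    have hsI : s ∈ Set.Ioc t2 x := ⟨hs.1, hs.2.le⟩
    have hA0 : HasDerivAt (fun s => deriv u (τ s))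
        (deriv (deriv u) (τ s) * ((deriv u (τ s))⁻¹ * deriv v s)) s :=
      (hu'diff (τ s) (hτIoo s hsI)).comp s (hτd s hsI)
    have hA : HasDerivAt (fun s => FF (deriv u (τ s)))
        (-(deriv u (τ s)) * (1 + (deriv u (τ s))^2) ^ (-(3/2):ℝ) *
          (deriv (deriv u) (τ s) * ((deriv u (τ s))⁻¹ * deriv v s))) s :=
      (FF_hasDerivAt _).comp s hA0
    have hB : HasDerivAt (fun s => FF (deriv v s))
        (-(deriv v s) * (1 + (deriv v s)^2) ^ (-(3/2):ℝ) * deriv (deriv v) s) s :=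
      (FF_hasDerivAt _).comp s (hv'diff s (hrIoo s hsI))
    exact hA.sub hB
  have hΦnonneg : ∀ s ∈ Set.Ioo t2 x, 0 ≤ Φ s := by
    intro s hs
    have hsI : s ∈ Set.Ioc t2 x := ⟨hs.1, hs.2.le⟩
    have hP := hPpos s hsI
    have hQ := hQnonneg s hsI
    have hκ := hmain (τ s) s (hτpos s hsI) (hτlt s hsI) (hrIoo s hsI).2
      (hτval s (hrIcc s hsI))
    set P := deriv u (τ s)
    set Q := deriv v s
    set KU := deriv (deriv u) (τ s)
    set KV := deriv (deriv v) s
    have h1 : (0:ℝ) < 1 + P^2 := by positivity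
    have h2 : (0:ℝ) < 1 + Q^2 := by positivity
    have e1 : (1 + P^2) ^ (-(3/2):ℝ) = ((1 + P^2) ^ ((3:ℝ)/2))⁻¹ := by
      rw [← Real.rpow_neg h1.le]
    have e2 : (1 + Q^2) ^ (-(3/2):ℝ) = ((1 + Q^2) ^ ((3:ℝ)/2))⁻¹ := by
      rw [← Real.rpow_neg h2.le]
    have hPne : P ≠ 0 := ne_of_gt hP
    have hΦeq : Φ s = Q * (KV / (1 + Q^2) ^ ((3:ℝ)/2) - KU / (1 + P^2) ^ ((3:ℝ)/2)) := by
      show (-(P) * (1 + P^2) ^ (-(3/2):ℝ) * (KU * (P⁻¹ * Q))) -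
        (-(Q) * (1 + Q^2) ^ (-(3/2):ℝ) * KV) = _
      rw [e1, e2]
      field_simp
      ring
    rw [hΦeq]
    exact mul_nonneg hQ (by linarith [hκ])
  have hDcont : ContinuousOn D (Set.Ioc t2 x) := by
    intro s hs
    apply ContinuousAt.continuousWithinAt
    have h3 : ContinuousAt (deriv v) s :=
      (hv'cd.continuousOn s (hrIoo s hs)).continuousAt (isOpen_Ioo.mem_nhds (hrIoo s hs))
    have hWc : ContinuousAt (winv b u) (v s) :=
      winv_continuousAt hb hu0 humonoS hucont (hvs_nonneg s (hrIcc s hs)) (hvs_lt s (hrIcc s hs))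
    have hvc : ContinuousAt v s := (hvdiff s (hrIoo s hs)).differentiableAt.continuousAt
    have h2 : ContinuousAt τ s := hWc.comp hvc
    have h1 : ContinuousAt (deriv u) (τ s) :=
      (hu'cd.continuousOn (τ s) (hτIoo s hs)).continuousAt (isOpen_Ioo.mem_nhds (hτIoo s hs))
    exact ((FF_continuous _).comp (h1.comp h2)).sub ((FF_continuous _).comp h3)
  -- limits at t2
  set p2 := derivWithin u (Set.Icc 0 b) t2 with hp2def
  set q2 := derivWithin v (Set.Icc 0 b) t2 with hq2def
  have hlne : (𝓝[Set.Ioc t2 x] t2).NeBot := left_nhdsWithin_Ioc_neBot ht2lt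
  have hQlim : Filter.Tendsto (deriv v) (𝓝[Set.Ioc t2 x] t2) (𝓝 q2) :=
    (deriv_tendsto_boundary hb hv1 ht2Icc).mono_left (nhdsWithin_mono _ (fun r hr => hrIoo r hr))
  have hτtend : Filter.Tendsto τ (𝓝[Set.Ioc t2 x] t2) (𝓝[Set.Ioo 0 b] t2) := by
    rw [tendsto_nhdsWithin_iff]
    constructor
    · have hWc : ContinuousAt (winv b u) (v t2) :=
        winv_continuousAt hb hu0 humonoS hucont (hvs_nonneg t2 ht2Iccx) (hvs_lt t2 ht2Iccx)
      have hvc : Filter.Tendsto v (𝓝[Set.Ioc t2 x] t2) (𝓝 (v t2)) :=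
        (hvcont t2 ht2Icc).mono (fun y hy => hrIccb y (hrIcc y hy))
      have h5 : Filter.Tendsto τ (𝓝[Set.Ioc t2 x] t2) (𝓝 (τ t2)) := hWc.tendsto.comp hvc
      rwa [hτt2] at h5
    · exact eventually_mem_nhdsWithin.mono (fun s hs => hτIoo s hs)
  have hPlim : Filter.Tendsto (fun s => deriv u (τ s)) (𝓝[Set.Ioc t2 x] t2) (𝓝 p2) :=
    (deriv_tendsto_boundary hb hu1 ht2Icc).comp hτtend
  have hDlim : Filter.Tendsto D (𝓝[Set.Ioc t2 x] t2) (𝓝 (FF p2 - FF q2)) :=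
    ((FF_continuous p2).tendsto.comp hPlim).sub ((FF_continuous q2).tendsto.comp hQlim)
  have hd0 : 0 ≤ FF p2 - FF q2 := by
    rcases eq_or_lt_of_le ht2Iccx.1 with he | hpos
    · have hp20 : p2 = 0 := by rw [hp2def, ← he]; exact hu'0
      have : FF p2 = 1 := by rw [hp20]; show ((1:ℝ) + 0^2) ^ (-(1/2):ℝ) = 1; norm_num
      rw [this]
      linarith [FF_le_one (p := q2)]
    · have ht2Ioo : t2 ∈ Set.Ioo 0 b := ⟨hpos, lt_of_le_of_lt ht2Iccx.2 hxb⟩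
      have hmin : IsLocalMin (fun r => u r - v r) t2 := by
        have hsub : Set.Ioo 0 b ∈ 𝓝 t2 := isOpen_Ioo.mem_nhds ht2Ioo
        filter_upwards [hsub] with y hy
        have h6 : v y ≤ u y := (huv y ⟨hy.1, hy.2.le⟩).2
        have h7 : u t2 - v t2 = 0 := by rw [ht2uv]; ring
        simp only [h7]
        linarith
      have hdz : deriv (fun r => u r - v r) t2 = 0 := hmin.deriv_eq_zero
      have hud := hudiff t2 ht2Ioo
      have hvd := hvdiff t2 ht2Ioo
      have hsubd := (hud.sub hvd).deriv
      have heq2 : deriv u t2 = deriv v t2 := by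
        rw [show deriv (u - v) t2 = 0 from hdz] at hsubd
        linarith [hsubd]
      have hp2 : p2 = deriv u t2 := derivWithin_of_mem_nhds (Icc_mem_nhds ht2Ioo.1 ht2Ioo.2)
      have hq2 : q2 = deriv v t2 := derivWithin_of_mem_nhds (Icc_mem_nhds ht2Ioo.1 ht2Ioo.2)
      rw [hp2, hq2, heq2]
      simp
  have hDmono := mono_of_hasDerivAt_nonneg hDcont hDd hΦnonneg
  have hDnonneg : ∀ s ∈ Set.Ioc t2 x, 0 ≤ D s := by
    intro s hs
    have hev : ∀ᶠ y in 𝓝[Set.Ioc t2 x] t2, D y ≤ D s := by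
      have h1 : Set.Iio s ∈ 𝓝 t2 := Iio_mem_nhds hs.1
      filter_upwards [mem_nhdsWithin_of_mem_nhds h1, self_mem_nhdsWithin] with y hy1 hy2
      exact hDmono y hy2 s hs (le_of_lt hy1)
    have := le_of_tendsto hDlim hev
    linarith
  have hPQ : ∀ s ∈ Set.Ioc t2 x, deriv u (τ s) ≤ deriv v s := by
    intro s hs
    have h8 : FF (deriv v s) ≤ FF (deriv u (τ s)) := by
      have := hDnonneg s hs
      simp only [hDdef] at this
      linarith
    exact (FF_le_iff (hQnonneg s hs) (hPpos s hs).le).mp h8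
  -- rho
  set ρ := fun s => s - τ s with hρdef
  have hρcont : ContinuousOn ρ (Set.Icc t2 x) := by
    apply ContinuousOn.sub continuousOn_id
    intro s hs
    have hsx : s ∈ Set.Icc 0 x := ⟨le_trans ht2Iccx.1 hs.1, hs.2⟩
    have hWc : ContinuousAt (winv b u) (v s) :=
      winv_continuousAt hb hu0 humonoS hucont (hvs_nonneg s hsx) (hvs_lt s hsx)
    exact hWc.comp_continuousWithinAt ((hvcont s (hrIccb s hsx)).mono
      (fun y hy => hrIccb y ⟨le_trans ht2Iccx.1 hy.1, hy.2⟩))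
  have hρd : ∀ s ∈ Set.Ioo t2 x, HasDerivAt ρ (1 - (deriv u (τ s))⁻¹ * deriv v s) s :=
    fun s hs => (hasDerivAt_id s).sub (hτd s ⟨hs.1, hs.2.le⟩)
  have hρ'le : ∀ s ∈ Set.Ioo t2 x, 1 - (deriv u (τ s))⁻¹ * deriv v s ≤ 0 := by
    intro s hs
    have h1 := hPQ s ⟨hs.1, hs.2.le⟩
    have h2 := hPpos s ⟨hs.1, hs.2.le⟩
    have h3 : 1 ≤ (deriv u (τ s))⁻¹ * deriv v s := by
      rw [mul_comm, ← div_eq_mul_inv]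
      exact (one_le_div h2).mpr h1
    linarith
  have hfinal : ρ x ≤ ρ t2 := anti_of_hasDerivAt_nonpos ht2lt.le hρcont hρd hρ'le
  have hρt2 : ρ t2 = 0 := by simp only [hρdef, hτt2, sub_self]
  have hτx : τ x = x := by
    have h1 : ρ x ≤ 0 := by rw [hρt2] at hfinal; exact hfinal
    have h2 : x - τ x ≤ 0 := h1
    have h3 := hτle x ⟨hx0.le, le_rfl⟩
    linarith
  apply hxe
  have := hτval x ⟨hx0.le, le_rfl⟩
  rw [hτx] at this
  exact this

/-- Lemma 3.1 of Li–Nirenberg, the main lemma for the symmetry theorem for plane curves. -/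
theorem stmt_5 (b : ℝ) (hb : 0 < b) (u v : ℝ → ℝ)
    (hu2 : ContDiffOn ℝ 2 u (Set.Ioo 0 b)) (hv2 : ContDiffOn ℝ 2 v (Set.Ioo 0 b))
    (hu1 : ContDiffOn ℝ 1 u (Set.Icc 0 b)) (hv1 : ContDiffOn ℝ 1 v (Set.Icc 0 b))
    (huv : ∀ t ∈ Set.Ioc 0 b, 0 < v t ∧ v t ≤ u t)
    (hmono : (∀ t ∈ Set.Ioc 0 b, 0 < deriv u t ∧ 0 ≤ deriv v t) ∨
      (∀ t ∈ Set.Ioc 0 b, 0 ≤ deriv u t ∧ 0 < deriv v t))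
    (hu0 : u 0 = 0) (hu'0 : derivWithin u (Set.Icc 0 b) 0 = 0)
    (hmain : ∀ t s : ℝ, 0 < t → t < s → s < b → u t = v s →
      deriv (deriv u) t / (1 + (deriv u t) ^ 2) ^ ((3 : ℝ) / 2) ≤
        deriv (deriv v) s / (1 + (deriv v s) ^ 2) ^ ((3 : ℝ) / 2)) :
    ∀ t ∈ Set.Icc 0 b, u t = v t := by
  have hv0 : v 0 = 0 := v_zero hb hu1 hv1 huv hu0
  have hucont := hu1.continuousOn
  have hvcont := hv1.continuousOn
  have key : ∀ x ∈ Set.Ioo 0 b, u x = v x := by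
    rcases hmono with hml | hmr
    · exact fun x hx => caseLeft hb hu2 hv2 hu1 hv1 huv hml hu0 hu'0 hmain hx
    · have hvb : 0 < v b := (huv b ⟨hb, le_rfl⟩).1
      have hvmono : StrictMonoOn v (Set.Icc 0 b) := by
        apply strictMonoOn_of_deriv_pos (convex_Icc 0 b) hvcont
        rw [interior_Icc]
        exact fun r hr => (hmr r ⟨hr.1, hr.2.le⟩).2
      have hwin : ∀ x ∈ Set.Ioo 0 b, u x < v b := by
        by_contra hc
        push_neg at hc
        obtain ⟨x0, hx0, hx0b⟩ := hc
        set S := {r | r ∈ Set.Icc 0 b ∧ v b ≤ u r} with hSdef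
        have hSne : S.Nonempty := ⟨x0, ⟨hx0.1.le, hx0.2.le⟩, hx0b⟩
        have hSbdd : BddBelow S := ⟨0, fun r hr => hr.1.1⟩
        have hScl : IsClosed S := by
          have heq : S = Set.Icc 0 b ∩ u ⁻¹' (Set.Ici (v b)) := rfl
          rw [heq]
          exact ContinuousOn.preimage_isClosed_of_isClosed hucont isClosed_Icc isClosed_Ici
        set e := sInf S with hedef
        have heS : e ∈ S := hScl.csInf_mem hSne hSbdd
        have he0 : 0 < e := by
          rcases eq_or_lt_of_le heS.1.1 with he | h
          · exfalso
            have := heS.2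
            rw [← he, hu0] at this
            linarith
          · exact h
        have heb : e < b := lt_of_le_of_lt (csInf_le hSbdd ⟨⟨hx0.1.le, hx0.2.le⟩, hx0b⟩) hx0.2
        have hlow : ∀ y ∈ Set.Ioo 0 e, u y = v y := by
          intro y hy
          have hyb : y ∈ Set.Ioo 0 b := ⟨hy.1, lt_trans hy.2 heb⟩
          apply caseRight hb hu2 hv2 hu1 hv1 huv hmr hu0 hu'0 hmain hyb
          by_contra h
          push_neg at h
          exact absurd (csInf_le hSbdd ⟨⟨hy.1.le, hyb.2.le⟩, h⟩) (not_le.mpr hy.2)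
        have hne : (𝓝[Set.Ioo 0 e] e).NeBot := right_nhdsWithin_Ioo_neBot he0
        have hsub : Set.Ioo 0 e ⊆ Set.Icc 0 b := fun y hy =>
          ⟨hy.1.le, le_trans hy.2.le heb.le⟩
        have hue : Filter.Tendsto u (𝓝[Set.Ioo 0 e] e) (𝓝 (u e)) :=
          (hucont e heS.1).mono hsub
        have hve : Filter.Tendsto v (𝓝[Set.Ioo 0 e] e) (𝓝 (v e)) :=
          (hvcont e heS.1).mono hsub
        have hueve : u e = v e := by
          apply tendsto_nhds_unique (hue.congr' ?_) hve
          filter_upwards [self_mem_nhdsWithin] with y hy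
          exact hlow y hy
        have h9 : v e < v b := hvmono heS.1 ⟨hb.le, le_rfl⟩ heb
        have := heS.2
        rw [hueve] at this
        linarith
      exact fun x hx => caseRight hb hu2 hv2 hu1 hv1 huv hmr hu0 hu'0 hmain hx (hwin x hx)
  intro t ht
  rcases eq_or_lt_of_le ht.1 with he0 | h0
  · rw [← he0, hu0, hv0]
  rcases eq_or_lt_of_le ht.2 with heb | hlt
  · subst heb
    have hne : (𝓝[Set.Ioo 0 t] t).NeBot := right_nhdsWithin_Ioo_neBot h0
    have hsub : Set.Ioo 0 t ⊆ Set.Icc 0 t := Set.Ioo_subset_Icc_self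
    have hue : Filter.Tendsto u (𝓝[Set.Ioo 0 t] t) (𝓝 (u t)) :=
      (hucont t ht).mono (by rw [show Set.Icc 0 t = Set.Icc (0:ℝ) t from rfl]; exact hsub)
    have hve : Filter.Tendsto v (𝓝[Set.Ioo 0 t] t) (𝓝 (v t)) :=
      (hvcont t ht).mono hsub
    apply tendsto_nhds_unique (hue.congr' ?_) hve
    filter_upwards [self_mem_nhdsWithin] with y hy
    exact key y hy
  · exact key t ⟨h0, hlt⟩
end Main
end

section
/- Let a < b and α < β be real numbers. Let u be C² on (a,b) and C¹ on [a,b], with u'(a) = 0 and u'(t) > 0 for all t ∈ (a,b). Let v be C² on (α,β) and C¹ on [α,β], with v(α) ≤ u(b), v(β) = u(a), v(β) < v(s) < v(α) for all s ∈ (α,β), and v'(α) = 0. Suppose that whenever u(t) = v(s) for some t ∈ (a,b) and s ∈ (α,β), one has u''(t) ≤ v''(s). Then β − α = b − a and v(s) = u(c − s) for all s ∈ [α,β], where c = b + α = a + β; in particular v(α) = u(b). -/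
set_option linter.unusedSectionVars false
open Set Filter Topology

noncomputable def phi (u : ℝ → ℝ) (a b y : ℝ) : ℝ := by
  classical exact if h : ∃ t ∈ Icc a b, u t = y then h.choose else a

section
variable {u : ℝ → ℝ} {a b : ℝ}

lemma phi_spec (hab : a ≤ b) (hc : ContinuousOn u (Icc a b)) {y : ℝ}
    (hy : y ∈ Icc (u a) (u b)) : phi u a b y ∈ Icc a b ∧ u (phi u a b y) = y := by
  have h : ∃ t ∈ Icc a b, u t = y := by
    rcases intermediate_value_Icc hab hc hy with ⟨t, ht, h⟩
    exact ⟨t, ht, h⟩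
  rw [phi, dif_pos h]
  exact ⟨h.choose_spec.1, h.choose_spec.2⟩

variable (hab : a ≤ b) (hc : ContinuousOn u (Icc a b)) (hm : StrictMonoOn u (Icc a b))

include hab hc hm

lemma phi_u {t : ℝ} (ht : t ∈ Icc a b) : phi u a b (u t) = t := by
  have hy : u t ∈ Icc (u a) (u b) :=
    ⟨hm.monotoneOn (left_mem_Icc.2 hab) ht ht.1, hm.monotoneOn ht (right_mem_Icc.2 hab) ht.2⟩
  have h := phi_spec hab hc hy
  exact hm.injOn h.1 ht h.2

lemma phi_lt {y y' : ℝ} (hy : y ∈ Icc (u a) (u b)) (hy' : y' ∈ Icc (u a) (u b))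
    (h : y < y') : phi u a b y < phi u a b y' := by
  have h1 := phi_spec hab hc hy
  have h2 := phi_spec hab hc hy'
  by_contra hle
  push_neg at hle
  have := hm.monotoneOn h2.1 h1.1 hle
  rw [h1.2, h2.2] at this
  exact absurd this (not_le.2 h)

lemma phi_mem_Ioo {y : ℝ} (hy : y ∈ Ioo (u a) (u b)) : phi u a b y ∈ Ioo a b := by
  have h := phi_spec hab hc (Ioo_subset_Icc_self hy)
  rcases eq_or_lt_of_le h.1.1 with h1 | h1
  · exfalso; rw [← h1] at h; exact absurd h.2 (ne_of_lt hy.1)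
  rcases eq_or_lt_of_le h.1.2 with h2 | h2
  · exfalso; rw [h2] at h; exact absurd h.2 (ne_of_gt hy.2)
  exact ⟨h1, h2⟩

lemma phi_tendsto {y₀ : ℝ} (hy₀ : y₀ ∈ Icc (u a) (u b)) :
    Tendsto (phi u a b) (𝓝[Icc (u a) (u b)] y₀) (𝓝 (phi u a b y₀)) := by
  rw [tendsto_order]
  constructor
  · intro l hl
    rcases lt_or_ge l a with hla | hla
    · filter_upwards [self_mem_nhdsWithin] with y hy
      exact lt_of_lt_of_le hla (phi_spec hab hc hy).1.1
    · have hlI : l ∈ Icc a b := ⟨hla, le_trans hl.le (phi_spec hab hc hy₀).1.2⟩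
      have hul : u l < y₀ := by
        have := hm hlI (phi_spec hab hc hy₀).1 hl
        rwa [(phi_spec hab hc hy₀).2] at this
      have hev : ∀ᶠ y in 𝓝[Icc (u a) (u b)] y₀, u l < y :=
        eventually_nhdsWithin_of_eventually_nhds (eventually_gt_nhds hul)
      filter_upwards [hev, self_mem_nhdsWithin] with y hy hyI
      by_contra hle
      push_neg at hle
      have := hm.monotoneOn (phi_spec hab hc hyI).1 hlI hle
      rw [(phi_spec hab hc hyI).2] at this
      exact absurd this (not_le.2 hy)
  · intro r hr
    rcases lt_or_ge b r with hbr | hbr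
    · filter_upwards [self_mem_nhdsWithin] with y hy
      exact lt_of_le_of_lt (phi_spec hab hc hy).1.2 hbr
    · have hrI : r ∈ Icc a b := ⟨le_trans (phi_spec hab hc hy₀).1.1 hr.le, hbr⟩
      have hur : y₀ < u r := by
        have := hm (phi_spec hab hc hy₀).1 hrI hr
        rwa [(phi_spec hab hc hy₀).2] at this
      have hev : ∀ᶠ y in 𝓝[Icc (u a) (u b)] y₀, y < u r :=
        eventually_nhdsWithin_of_eventually_nhds (eventually_lt_nhds hur)
      filter_upwards [hev, self_mem_nhdsWithin] with y hy hyI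
      by_contra hle
      push_neg at hle
      have := hm.monotoneOn hrI (phi_spec hab hc hyI).1 hle
      rw [(phi_spec hab hc hyI).2] at this
      exact absurd this (not_le.2 hy)

end
structure LN where
  a : ℝ
  b : ℝ
  al : ℝ
  be : ℝ
  u : ℝ → ℝ
  v : ℝ → ℝ
  hab : a < b
  hαβ : al < be
  hu2 : ContDiffOn ℝ 2 u (Ioo a b)
  hu1 : ContDiffOn ℝ 1 u (Icc a b)
  hu'a : derivWithin u (Icc a b) a = 0
  hu' : ∀ t ∈ Ioo a b, 0 < deriv u t
  hv2 : ContDiffOn ℝ 2 v (Ioo al be)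
  hv1 : ContDiffOn ℝ 1 v (Icc al be)
  hvα : v al ≤ u b
  hvβ : v be = u a
  hvbet : ∀ s ∈ Ioo al be, v be < v s ∧ v s < v al
  hv'α : derivWithin v (Icc al be) al = 0
  hmain : ∀ t ∈ Ioo a b, ∀ s ∈ Ioo al be, u t = v s →
      deriv (deriv u) t ≤ deriv (deriv v) s

namespace LN

variable (S : LN)

lemma ucont : ContinuousOn S.u (Icc S.a S.b) := S.hu1.continuousOn

lemma vcont : ContinuousOn S.v (Icc S.al S.be) := S.hv1.continuousOn

lemma umono : StrictMonoOn S.u (Icc S.a S.b) := by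
  apply strictMonoOn_of_deriv_pos (convex_Icc _ _) S.ucont
  intro x hx
  rw [interior_Icc] at hx
  exact S.hu' x hx

lemma uab : S.u S.a < S.u S.b :=
  S.umono (left_mem_Icc.2 S.hab.le) (right_mem_Icc.2 S.hab.le) S.hab

/-- derivWithin u (Icc a b) is continuous on Icc a b -/
lemma du_cont : ContinuousOn (derivWithin S.u (Icc S.a S.b)) (Icc S.a S.b) :=
  S.hu1.continuousOn_derivWithin (uniqueDiffOn_Icc S.hab) le_rfl

lemma dv_cont : ContinuousOn (derivWithin S.v (Icc S.al S.be)) (Icc S.al S.be) :=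
  S.hv1.continuousOn_derivWithin (uniqueDiffOn_Icc S.hαβ) le_rfl

lemma deriv_eq_derivWithin_u {t : ℝ} (ht : t ∈ Ioo S.a S.b) :
    deriv S.u t = derivWithin S.u (Icc S.a S.b) t :=
  (derivWithin_of_mem_nhds (Icc_mem_nhds ht.1 ht.2)).symm

lemma deriv_eq_derivWithin_v {s : ℝ} (hs : s ∈ Ioo S.al S.be) :
    deriv S.v s = derivWithin S.v (Icc S.al S.be) s :=
  (derivWithin_of_mem_nhds (Icc_mem_nhds hs.1 hs.2)).symm

lemma deriv_u_a : deriv S.u S.a = 0 := by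
  by_cases h : DifferentiableAt ℝ S.u S.a
  · rw [← S.hu'a]
    exact (h.hasDerivAt.hasDerivWithinAt.derivWithin
      ((uniqueDiffOn_Icc S.hab) S.a (left_mem_Icc.2 S.hab.le))).symm
  · exact deriv_zero_of_not_differentiableAt h

lemma deriv_u_eq_on_Ico : ∀ t ∈ Ico S.a S.b, deriv S.u t = derivWithin S.u (Icc S.a S.b) t := by
  intro t ht
  rcases eq_or_lt_of_le ht.1 with h | h
  · rw [← h, S.deriv_u_a, S.hu'a]
  · exact S.deriv_eq_derivWithin_u ⟨h, ht.2⟩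

lemma du_cont_Ico : ContinuousOn (deriv S.u) (Ico S.a S.b) :=
  (S.du_cont.mono Ico_subset_Icc_self).congr S.deriv_u_eq_on_Ico


noncomputable def ph : ℝ → ℝ := phi S.u S.a S.b

noncomputable def tau : ℝ → ℝ := fun s => S.ph (S.v s)

noncomputable def g : ℝ → ℝ := fun y => (deriv S.u (S.ph y))^2

noncomputable def F : ℝ → ℝ := fun s => (derivWithin S.v (Icc S.al S.be) s)^2 - S.g (S.v s)

lemma v_mem_Ioo {s : ℝ} (hs : s ∈ Ioo S.al S.be) : S.v s ∈ Ioo (S.u S.a) (S.u S.b) := by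
  obtain ⟨h1, h2⟩ := S.hvbet s hs
  rw [S.hvβ] at h1
  exact ⟨h1, lt_of_lt_of_le h2 S.hvα⟩

lemma v_mem_Icc {s : ℝ} (hs : s ∈ Icc S.al S.be) : S.v s ∈ Icc (S.u S.a) (S.u S.b) := by
  rcases eq_or_lt_of_le hs.1 with h | h
  · rw [← h]
    constructor
    · have h2 := S.hvbet ((S.al + S.be)/2) ⟨by linarith [S.hαβ], by linarith [S.hαβ]⟩
      rw [S.hvβ] at h2
      linarith [h2.1, h2.2]
    · exact S.hvα
  rcases eq_or_lt_of_le hs.2 with h2 | h2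
  · rw [h2, S.hvβ]; exact ⟨le_refl _, S.uab.le⟩
  · exact Ioo_subset_Icc_self (S.v_mem_Ioo ⟨h, h2⟩)

lemma tau_mem {s : ℝ} (hs : s ∈ Ioo S.al S.be) : S.tau s ∈ Ioo S.a S.b :=
  phi_mem_Ioo S.hab.le S.ucont S.umono (S.v_mem_Ioo hs)

lemma u_tau {s : ℝ} (hs : s ∈ Icc S.al S.be) : S.u (S.tau s) = S.v s :=
  (phi_spec S.hab.le S.ucont (S.v_mem_Icc hs)).2

lemma ph_ua : S.ph (S.u S.a) = S.a := phi_u S.hab.le S.ucont S.umono (left_mem_Icc.2 S.hab.le)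

lemma ph_ub : S.ph (S.u S.b) = S.b := phi_u S.hab.le S.ucont S.umono (right_mem_Icc.2 S.hab.le)

lemma g_ua : S.g (S.u S.a) = 0 := by
  rw [g, S.ph_ua, S.deriv_u_a]; norm_num

lemma g_pos {y : ℝ} (hy : y ∈ Ioo (S.u S.a) (S.u S.b)) : 0 < S.g y := by
  have h := phi_mem_Ioo S.hab.le S.ucont S.umono hy
  exact pow_pos (S.hu' _ h) 2

lemma g_nonneg (y : ℝ) : 0 ≤ S.g y := sq_nonneg _

/-- continuity of g ∘ v on Ioc al be -/
lemma gv_cont : ContinuousOn (fun s => S.g (S.v s)) (Ioc S.al S.be) := by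
  have h1 : ContinuousOn S.tau (Ioc S.al S.be) := by
    intro s hs
    have hvs : S.v s ∈ Icc (S.u S.a) (S.u S.b) := S.v_mem_Icc (Ioc_subset_Icc_self hs)
    have hc1 : ContinuousWithinAt S.v (Ioc S.al S.be) s :=
      (S.vcont.mono Ioc_subset_Icc_self) s hs
    exact ((phi_tendsto S.hab.le S.ucont S.umono hvs).comp
      (hc1.tendsto_nhdsWithin (fun x hx => S.v_mem_Icc (Ioc_subset_Icc_self hx))))
  have h2 : ∀ s ∈ Ioc S.al S.be, S.tau s ∈ Ico S.a S.b := by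
    intro s hs
    rcases eq_or_lt_of_le hs.2 with h | h
    · have : S.tau s = S.a := by rw [tau, h, S.hvβ, S.ph_ua]
      rw [this]; exact ⟨le_refl _, S.hab⟩
    · exact Ioo_subset_Ico_self (S.tau_mem ⟨hs.1, h⟩)
  have := (S.du_cont_Ico.comp h1 h2)
  exact (this.pow 2)

lemma F_cont : ContinuousOn S.F (Ioc S.al S.be) := by
  have h1 : ContinuousOn (fun s => (derivWithin S.v (Icc S.al S.be) s)^2) (Ioc S.al S.be) :=
    (S.dv_cont.mono Ioc_subset_Icc_self).pow 2
  exact h1.sub S.gv_cont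


lemma hasDerivAt_u {t : ℝ} (ht : t ∈ Ioo S.a S.b) : HasDerivAt S.u (deriv S.u t) t :=
  (((S.hu2.differentiableOn (by norm_num)) t ht).differentiableAt
    (isOpen_Ioo.mem_nhds ht)).hasDerivAt

lemma hasDerivAt_du {t : ℝ} (ht : t ∈ Ioo S.a S.b) :
    HasDerivAt (deriv S.u) (deriv (deriv S.u) t) t :=
  ((((S.hu2.deriv_of_isOpen (m := 1) isOpen_Ioo (by norm_num)).differentiableOn
    (by norm_num : (1:WithTop ℕ∞) ≠ 0)) t ht).differentiableAt (isOpen_Ioo.mem_nhds ht)).hasDerivAt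

lemma hasDerivAt_v {s : ℝ} (hs : s ∈ Ioo S.al S.be) : HasDerivAt S.v (deriv S.v s) s :=
  (((S.hv2.differentiableOn (by norm_num)) s hs).differentiableAt
    (isOpen_Ioo.mem_nhds hs)).hasDerivAt

lemma hasDerivAt_dv {s : ℝ} (hs : s ∈ Ioo S.al S.be) :
    HasDerivAt (deriv S.v) (deriv (deriv S.v) s) s :=
  ((((S.hv2.deriv_of_isOpen (m := 1) isOpen_Ioo (by norm_num)).differentiableOn
    (by norm_num : (1:WithTop ℕ∞) ≠ 0)) s hs).differentiableAt (isOpen_Ioo.mem_nhds hs)).hasDerivAt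

lemma hasDerivAt_ph {y : ℝ} (hy : y ∈ Ioo (S.u S.a) (S.u S.b)) :
    HasDerivAt S.ph (deriv S.u (S.ph y))⁻¹ y := by
  have hmem := phi_mem_Ioo S.hab.le S.ucont S.umono hy
  have hcont : ContinuousAt S.ph y := by
    have := phi_tendsto S.hab.le S.ucont S.umono (Ioo_subset_Icc_self hy)
    exact ContinuousWithinAt.continuousAt this (Icc_mem_nhds hy.1 hy.2)
  have hfg : ∀ᶠ y' in 𝓝 y, S.u (S.ph y') = y' := by
    filter_upwards [Icc_mem_nhds hy.1 hy.2] with y' hy'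
    exact (phi_spec S.hab.le S.ucont hy').2
  have huder : HasDerivAt S.u (deriv S.u (S.ph y)) (S.ph y) := S.hasDerivAt_u hmem
  exact HasDerivAt.of_local_left_inverse hcont huder (ne_of_gt (S.hu' _ hmem)) hfg

/-- The derivative formula for F on the interior. -/
lemma hasDerivAt_F {s : ℝ} (hs : s ∈ Ioo S.al S.be) :
    HasDerivAt S.F (2 * deriv S.v s * (deriv (deriv S.v) s - deriv (deriv S.u) (S.tau s))) s := by
  have hvs := S.v_mem_Ioo hs
  have ht := S.tau_mem hs
  have hph := S.hasDerivAt_ph hvs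
  have hv := S.hasDerivAt_v hs
  have htau : HasDerivAt S.tau ((deriv S.u (S.tau s))⁻¹ * deriv S.v s) s := hph.comp s hv
  have hdu := S.hasDerivAt_du ht
  have hcomp : HasDerivAt (fun x => deriv S.u (S.tau x))
      (deriv (deriv S.u) (S.tau s) * ((deriv S.u (S.tau s))⁻¹ * deriv S.v s)) s :=
    hdu.comp s htau
  have hg : HasDerivAt (fun x => S.g (S.v x))
      (2 * deriv S.u (S.tau s) * (deriv (deriv S.u) (S.tau s) *
        ((deriv S.u (S.tau s))⁻¹ * deriv S.v s))) s := by
    have := hcomp.fun_pow 2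
    simpa [mul_comm, mul_assoc, mul_left_comm, g, tau] using this
  have hdv := S.hasDerivAt_dv hs
  have hsq : HasDerivAt (fun x => (deriv S.v x)^2)
      (2 * deriv S.v s * deriv (deriv S.v) s) s := by
    have := hdv.fun_pow 2
    simpa [mul_comm, mul_assoc, mul_left_comm] using this
  have hF0 : HasDerivAt (fun x => (deriv S.v x)^2 - S.g (S.v x))
      (2 * deriv S.v s * deriv (deriv S.v) s - 2 * deriv S.u (S.tau s) *
        (deriv (deriv S.u) (S.tau s) * ((deriv S.u (S.tau s))⁻¹ * deriv S.v s))) s :=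
    hsq.sub hg
  have heq : S.F =ᶠ[𝓝 s] (fun x => (deriv S.v x)^2 - S.g (S.v x)) := by
    filter_upwards [isOpen_Ioo.mem_nhds hs] with x hx
    rw [F, S.deriv_eq_derivWithin_v hx]
  have := hF0.congr_of_eventuallyEq heq
  refine this.congr_deriv ?_
  have hne : deriv S.u (S.tau s) ≠ 0 := ne_of_gt (S.hu' _ ht)
  have hinv : deriv S.u (S.tau s) * (deriv S.u (S.tau s))⁻¹ = 1 := mul_inv_cancel₀ hne
  linear_combination (-2 * deriv (deriv S.u) (S.tau s) * deriv S.v s) * hinv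

lemma deriv_F_nonpos {s : ℝ} (hs : s ∈ Ioo S.al S.be) (hv' : deriv S.v s ≤ 0) :
    2 * deriv S.v s * (deriv (deriv S.v) s - deriv (deriv S.u) (S.tau s)) ≤ 0 := by
  have h := S.hmain (S.tau s) (S.tau_mem hs) s hs (S.u_tau (Ioo_subset_Icc_self hs))
  have h2 : 0 ≤ deriv (deriv S.v) s - deriv (deriv S.u) (S.tau s) := by linarith
  have h3 : 2 * deriv S.v s ≤ 0 := by linarith
  exact mul_nonpos_of_nonpos_of_nonneg h3 h2


/-- The set of "record" points: points after which v never exceeds its value. -/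
def W : Set ℝ := {s | s ∈ Icc S.al S.be ∧ ∀ x ∈ Icc s S.be, S.v x ≤ S.v s}

lemma be_mem_W : S.be ∈ S.W := by
  refine ⟨right_mem_Icc.2 S.hαβ.le, ?_⟩
  intro x hx
  have : x = S.be := le_antisymm hx.2 hx.1
  rw [this]

lemma W_closed : IsClosed S.W := by
  apply IsSeqClosed.isClosed
  intro xs p hmem htend
  have hpI : p ∈ Icc S.al S.be :=
    isClosed_Icc.isSeqClosed (fun n => (hmem n).1) htend
  refine ⟨hpI, ?_⟩
  intro x hx
  rcases eq_or_lt_of_le hx.1 with h | h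
  · rw [← h]
  · have hev : ∀ᶠ n in atTop, S.v x ≤ S.v (xs n) := by
      filter_upwards [htend.eventually (eventually_lt_nhds h)] with n hn
      exact (hmem n).2 x ⟨hn.le, hx.2⟩
    have hvt : Tendsto (fun n => S.v (xs n)) atTop (𝓝 (S.v p)) := by
      have hc : ContinuousWithinAt S.v (Icc S.al S.be) p := S.vcont p hpI
      exact (hc.tendsto).comp (tendsto_nhdsWithin_iff.2 ⟨htend, Eventually.of_forall
        (fun n => (hmem n).1)⟩)
    exact ge_of_tendsto hvt hev

lemma W_deriv_nonpos {s : ℝ} (hsW : s ∈ S.W) (hs : s ∈ Ioo S.al S.be) :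
    deriv S.v s ≤ 0 := by
  have hd := S.hasDerivAt_v hs
  rw [hasDerivAt_iff_tendsto_slope] at hd
  have hle : Tendsto (slope S.v s) (𝓝[>] s) (𝓝 (deriv S.v s)) :=
    hd.mono_left (nhdsWithin_mono s (fun x hx => ne_of_gt hx))
  refine le_of_tendsto hle ?_
  filter_upwards [Ioo_mem_nhdsGT_of_mem (left_mem_Ico.2 hs.2)] with x hx
  rw [slope_def_field]
  have hvx : S.v x ≤ S.v s := hsW.2 x ⟨hx.1.le, hx.2.le⟩
  have : x - s > 0 := sub_pos.2 hx.1
  exact div_nonpos_of_nonpos_of_nonneg (by linarith) (by linarith)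


/-- Level set of v in [al, be]. -/
def lev (y : ℝ) : Set ℝ := Icc S.al S.be ∩ S.v ⁻¹' {y}

lemma lev_compact (y : ℝ) : IsCompact (S.lev y) :=
  isCompact_Icc.of_isClosed_subset
    (S.vcont.preimage_isClosed_of_isClosed isClosed_Icc isClosed_singleton)
    inter_subset_left

lemma lev_nonempty {y : ℝ} (hy : y ∈ Icc (S.v S.be) (S.v S.al)) : (S.lev y).Nonempty := by
  rcases intermediate_value_Icc' S.hαβ.le S.vcont hy with ⟨s, hs, h⟩
  exact ⟨s, hs, h⟩

/-- The last time v attains value y. -/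
noncomputable def Sig (y : ℝ) : ℝ := sSup (S.lev y)

lemma Sig_mem {y : ℝ} (hy : y ∈ Icc (S.v S.be) (S.v S.al)) : S.Sig y ∈ S.lev y :=
  (S.lev_compact y).sSup_mem (S.lev_nonempty hy)

lemma v_Sig {y : ℝ} (hy : y ∈ Icc (S.v S.be) (S.v S.al)) : S.v (S.Sig y) = y :=
  (S.Sig_mem hy).2

lemma Sig_mem_Icc {y : ℝ} (hy : y ∈ Icc (S.v S.be) (S.v S.al)) : S.Sig y ∈ Icc S.al S.be :=
  (S.Sig_mem hy).1

/-- After Sig y, v stays strictly below y. -/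
lemma lt_of_gt_Sig {y : ℝ} (hy : y ∈ Ioc (S.v S.be) (S.v S.al)) {x : ℝ}
    (hx : x ∈ Icc S.al S.be) (hgt : S.Sig y < x) : S.v x < y := by
  by_contra hle
  push_neg at hle
  have hyx : y ∈ Icc (S.v S.be) (S.v x) := ⟨hy.1.le, hle⟩
  have hcont : ContinuousOn S.v (Icc x S.be) := S.vcont.mono (Icc_subset_Icc hx.1 le_rfl)
  rcases intermediate_value_Icc' hx.2 hcont hyx with ⟨z, hz, hvz⟩
  have hzlev : z ∈ S.lev y := ⟨⟨le_trans hx.1 hz.1, hz.2⟩, hvz⟩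
  have : z ≤ S.Sig y := le_csSup (S.lev_compact y).bddAbove hzlev
  have : S.Sig y < z := lt_of_lt_of_le hgt hz.1
  linarith

lemma Sig_mem_W {y : ℝ} (hy : y ∈ Ioc (S.v S.be) (S.v S.al)) : S.Sig y ∈ S.W := by
  have hyI : y ∈ Icc (S.v S.be) (S.v S.al) := Ioc_subset_Icc_self hy
  refine ⟨S.Sig_mem_Icc hyI, ?_⟩
  intro x hx
  rcases eq_or_lt_of_le hx.1 with h | h
  · rw [← h]
  · have hxI : x ∈ Icc S.al S.be := ⟨le_trans (S.Sig_mem_Icc hyI).1 hx.1, hx.2⟩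
    rw [S.v_Sig hyI]
    exact (S.lt_of_gt_Sig hy hxI h).le

lemma Sig_lt_be {y : ℝ} (hy : y ∈ Ioc (S.v S.be) (S.v S.al)) : S.Sig y < S.be := by
  have hyI : y ∈ Icc (S.v S.be) (S.v S.al) := Ioc_subset_Icc_self hy
  rcases eq_or_lt_of_le (S.Sig_mem_Icc hyI).2 with h | h
  · exfalso
    have := S.v_Sig hyI
    rw [h] at this
    exact absurd this.symm (ne_of_gt hy.1)
  · exact h

lemma al_lt_Sig {y : ℝ} (hy : y ∈ Ico (S.v S.be) (S.v S.al)) : S.al < S.Sig y := by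
  have hyI : y ∈ Icc (S.v S.be) (S.v S.al) := Ico_subset_Icc_self hy
  rcases eq_or_lt_of_le (S.Sig_mem_Icc hyI).1 with h | h
  · exfalso
    have := S.v_Sig hyI
    rw [← h] at this
    exact absurd this (ne_of_gt hy.2)
  · exact h


/-- In a gap of the record set, v stays below the right endpoint value. -/
lemma gap_le {L R : ℝ} (hL : L ∈ S.W) (hR : R ∈ S.W) (hLR : L < R)
    (hgap : ∀ w ∈ S.W, w ≤ L ∨ R ≤ w) {s : ℝ} (hs : s ∈ Ioo L R) : S.v s ≤ S.v R := by
  have hsI : s ∈ Icc S.al S.be := ⟨le_trans hL.1.1 hs.1.le, le_trans hs.2.le hR.1.2⟩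
  have hne : (Icc s S.be).Nonempty := nonempty_Icc.2 (le_trans hs.2.le hR.1.2)
  obtain ⟨m, hm, hmax⟩ := isCompact_Icc.exists_isMaxOn hne
    (S.vcont.mono (Icc_subset_Icc hsI.1 le_rfl))
  set y := S.v m with hy
  set A := Icc s S.be ∩ S.v ⁻¹' {y} with hA
  have hAc : IsCompact A := isCompact_Icc.of_isClosed_subset
    ((S.vcont.mono (Icc_subset_Icc hsI.1 le_rfl)).preimage_isClosed_of_isClosed
      isClosed_Icc isClosed_singleton) inter_subset_left
  have hAne : A.Nonempty := ⟨m, hm, rfl⟩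
  set z := sSup A with hz
  have hzA : z ∈ A := hAc.sSup_mem hAne
  have hzW : z ∈ S.W := by
    refine ⟨⟨le_trans hsI.1 hzA.1.1, hzA.1.2⟩, ?_⟩
    intro x hx
    have : S.v x ≤ y := hmax ⟨le_trans hzA.1.1 hx.1, hx.2⟩
    rw [hzA.2]
    exact this
  have hzR : R ≤ z := by
    rcases hgap z hzW with h | h
    · exfalso; have := hzA.1.1; linarith [hs.1]
    · exact h
  have h1 : S.v s ≤ y := hmax ⟨le_rfl, hsI.2⟩
  have h2 : S.v z ≤ S.v R := hR.2 z ⟨hzR, hzA.1.2⟩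
  rw [hzA.2] at h2
  linarith

lemma gap_eq {L R : ℝ} (hL : L ∈ S.W) (hR : R ∈ S.W) (hLR : L < R)
    (hgap : ∀ w ∈ S.W, w ≤ L ∨ R ≤ w) : S.v L = S.v R := by
  have h1 : S.v R ≤ S.v L := hL.2 R ⟨hLR.le, hR.1.2⟩
  have h2 : S.v L ≤ S.v R := by
    have hsub : Ioo L R ⊆ Icc S.al S.be :=
      fun x hx => ⟨le_trans hL.1.1 hx.1.le, le_trans hx.2.le hR.1.2⟩
    have hten : Tendsto S.v (𝓝[Ioo L R] L) (𝓝 (S.v L)) :=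
      ((S.vcont L hL.1).mono hsub).tendsto
    have hnb : (𝓝[Ioo L R] L).NeBot := by
      rw [← mem_closure_iff_nhdsWithin_neBot, closure_Ioo (ne_of_lt hLR)]
      exact ⟨le_rfl, hLR.le⟩
    exact le_of_tendsto hten (eventually_mem_nhdsWithin.mono
      (fun x hx => S.gap_le hL hR hLR hgap hx))
  linarith

lemma gap_deriv_zero {L R : ℝ} (hL : L ∈ S.W) (hR : R ∈ S.W) (hLR : L < R)
    (hgap : ∀ w ∈ S.W, w ≤ L ∨ R ≤ w) (hRbe : R < S.be) : deriv S.v R = 0 := by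
  have hmax : IsLocalMax S.v R := by
    have hU : Ioo L S.be ∈ 𝓝 R := isOpen_Ioo.mem_nhds ⟨hLR, hRbe⟩
    filter_upwards [hU] with x hx
    rcases lt_or_ge x R with h | h
    · exact S.gap_le hL hR hLR hgap ⟨hx.1, h⟩
    · exact hR.2 x ⟨h, hx.2.le⟩
  exact hmax.deriv_eq_zero


lemma no_gap_at_be {L : ℝ} (hL : L ∈ S.W) (hLbe : L < S.be)
    (hgap : ∀ w ∈ S.W, w ≤ L ∨ S.be ≤ w) : False := by
  have heq : S.v L = S.v S.be := S.gap_eq hL S.be_mem_W hLbe hgap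
  rcases eq_or_lt_of_le hL.1.1 with h | h
  · have hmid := S.hvbet ((S.al + S.be)/2) ⟨by linarith [S.hαβ], by linarith [S.hαβ]⟩
    rw [← h] at heq
    linarith [hmid.1, hmid.2]
  · have := (S.hvbet L ⟨h, hLbe⟩).1
    linarith

lemma F_antitone_W_eps {p q : ℝ} (hp : p ∈ S.W) (hq : q ∈ S.W) (hpal : S.al < p)
    (hpq : p ≤ q) {ε : ℝ} (hε : 0 < ε) : S.F q ≤ S.F p + ε * (q - p) := by
  classical
  set T := {x ∈ Icc p S.be | ∀ r, r ∈ S.W → r ∈ Icc p x → S.F r ≤ S.F p + ε * (r - p)} with hT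
  have hpT : p ∈ T := by
    refine ⟨⟨le_rfl, hp.1.2⟩, ?_⟩
    intro r _ hr
    have : r = p := le_antisymm hr.2 hr.1
    rw [this]
    simp
  have hTne : T.Nonempty := ⟨p, hpT⟩
  have hTbdd : BddAbove T := ⟨S.be, fun x hx => hx.1.2⟩
  set xb := sSup T with hxb
  have hxbI : xb ∈ Icc p S.be :=
    ⟨le_csSup hTbdd hpT, csSup_le hTne (fun x hx => hx.1.2)⟩
  -- substep A : xb ∈ T
  have hxbT : xb ∈ T := by
    refine ⟨hxbI, ?_⟩
    intro r hrW hr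
    rcases lt_or_eq_of_le hr.2 with hrlt | hreq
    · obtain ⟨x, hxT, hrx⟩ := exists_lt_of_lt_csSup hTne hrlt
      exact hxT.2 r hrW ⟨hr.1, hrx.le⟩
    · subst hreq
      rcases eq_or_lt_of_le hr.1 with hpr | hpr
      · rw [← hpr]; simp
      -- r = xb ∈ W, p < xb
      by_cases hcl : xb ∈ closure (S.W ∩ Ico p xb)
      · -- limit of records from the left
        have hnb : (𝓝[S.W ∩ Ico p xb] xb).NeBot := mem_closure_iff_nhdsWithin_neBot.1 hcl
        have hsub : S.W ∩ Ico p xb ⊆ Ioc S.al S.be :=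
          fun x hx => ⟨lt_of_lt_of_le hpal hx.2.1, hx.1.1.2⟩
        have hxbIoc : xb ∈ Ioc S.al S.be := ⟨lt_of_lt_of_le hpal hr.1, hxbI.2⟩
        have htenF : Tendsto S.F (𝓝[S.W ∩ Ico p xb] xb) (𝓝 (S.F xb)) :=
          ((S.F_cont xb hxbIoc).mono hsub).tendsto
        have htenR : Tendsto (fun x => S.F p + ε * (x - p)) (𝓝[S.W ∩ Ico p xb] xb)
            (𝓝 (S.F p + ε * (xb - p))) :=
          ((continuous_const.add (continuous_const.mul
            (continuous_id.sub continuous_const))).tendsto xb).mono_left nhdsWithin_le_nhds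
        refine le_of_tendsto_of_tendsto htenF htenR ?_
        filter_upwards [eventually_mem_nhdsWithin] with x hx
        have hxlt : x < xb := hx.2.2
        obtain ⟨x', hx'T, hxx'⟩ := exists_lt_of_lt_csSup hTne hxlt
        exact hx'T.2 x hx.1 ⟨hx.2.1, hxx'.le⟩
      · -- gap on the left of xb
        set L := sSup (S.W ∩ Ico p xb) with hL
        have hLne : (S.W ∩ Ico p xb).Nonempty := ⟨p, hp, le_rfl, hpr⟩
        have hLbdd : BddAbove (S.W ∩ Ico p xb) := ⟨xb, fun x hx => hx.2.2.le⟩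
        have hLcl : L ∈ closure (S.W ∩ Ico p xb) := csSup_mem_closure hLne hLbdd
        have hLmem : L ∈ S.W ∩ Icc p xb := by
          have : closure (S.W ∩ Ico p xb) ⊆ S.W ∩ Icc p xb := by
            refine subset_trans (closure_inter_subset_inter_closure _ _) ?_
            rw [S.W_closed.closure_eq]
            exact inter_subset_inter_right _ (by rw [closure_Ico (ne_of_lt hpr)])
          exact this hLcl
        have hLlt : L < xb := lt_of_le_of_ne hLmem.2.2 (fun h => hcl (h ▸ hLcl))
        have hgap : ∀ w ∈ S.W, w ≤ L ∨ xb ≤ w := by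
          intro w hw
          rcases lt_or_ge w xb with hwlt | hwge
          · rcases lt_or_ge w p with hwp | hwp
            · exact Or.inl (le_trans hwp.le (le_csSup hLbdd ⟨hp, le_rfl, hpr⟩))
            · exact Or.inl (le_csSup hLbdd ⟨hw, hwp, hwlt⟩)
          · exact Or.inr hwge
        rcases eq_or_lt_of_le hxbI.2 with hxbe | hxbe
        · exact absurd (S.no_gap_at_be hLmem.1 (hxbe ▸ hLlt) (hxbe ▸ hgap)) id
        · have hdz : deriv S.v xb = 0 := S.gap_deriv_zero hLmem.1 hrW hLlt hgap hxbe
          have hveq : S.v L = S.v xb := S.gap_eq hLmem.1 hrW hLlt hgap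
          have hFxb : S.F xb = -S.g (S.v xb) := by
            rw [F, ← S.deriv_eq_derivWithin_v ⟨lt_of_lt_of_le hpal hr.1, hxbe⟩, hdz]
            ring
          have hFL : S.F L ≤ S.F p + ε * (L - p) := by
            rcases eq_or_lt_of_le hLmem.2.1 with hLp | hLp
            · rw [← hLp]; simp
            · obtain ⟨x', hx'T, hxx'⟩ := exists_lt_of_lt_csSup hTne hLlt
              exact hx'T.2 L hLmem.1 ⟨hLmem.2.1, hxx'.le⟩
          have hFLge : -S.g (S.v L) ≤ S.F L := by
            rw [F]
            have := sq_nonneg (derivWithin S.v (Icc S.al S.be) L)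
            nlinarith [sq_nonneg (derivWithin S.v (Icc S.al S.be) L)]
          rw [hFxb, ← hveq]
          have hLxb : L - p ≤ xb - p := by linarith
          calc -S.g (S.v L) ≤ S.F L := hFLge
            _ ≤ S.F p + ε * (L - p) := hFL
            _ ≤ S.F p + ε * (xb - p) := by nlinarith
  -- substep B : xb = be
  have hxbe : xb = S.be := by
    by_contra hne
    have hxblt : xb < S.be := lt_of_le_of_ne hxbI.2 hne
    by_cases hxbW : xb ∈ S.W
    · -- xb is a record, use the derivative bound
      have hxbIoo : xb ∈ Ioo S.al S.be := ⟨lt_of_lt_of_le hpal hxbI.1, hxblt⟩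
      have hd := S.hasDerivAt_F hxbIoo
      have hd' : 2 * deriv S.v xb * (deriv (deriv S.v) xb - deriv (deriv S.u) (S.tau xb)) ≤ 0 :=
        S.deriv_F_nonpos hxbIoo (S.W_deriv_nonpos hxbW hxbIoo)
      rw [hasDerivAt_iff_tendsto_slope] at hd
      have hslope : ∀ᶠ x in 𝓝[>] xb, slope S.F xb x < ε :=
        Filter.Tendsto.eventually_lt_const (lt_of_le_of_lt hd' hε)
          (hd.mono_left (nhdsWithin_mono xb (fun x hx => ne_of_gt hx)))
      have hIoo : ∀ᶠ x in 𝓝[>] xb, x < S.be := eventually_nhdsWithin_of_eventually_nhds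
        (eventually_lt_nhds hxblt)
      obtain ⟨x', hx'1, hx'2, hx'3⟩ : ∃ x', xb < x' ∧ x' < S.be ∧
          ∀ x, xb < x → x ≤ x' → S.F x ≤ S.F xb + ε * (x - xb) := by
        have hcomb := hslope.and hIoo
        rw [eventually_nhdsWithin_iff] at hcomb
        obtain ⟨δ, hδ, hball⟩ := Metric.eventually_nhds_iff.1 hcomb
        refine ⟨xb + δ/2, by linarith, ?_, ?_⟩
        · have := hball (show dist (xb + δ/2) xb < δ by
            rw [Real.dist_eq]; rw [abs_of_pos] <;> linarith) (by simp; linarith)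
          exact this.2
        · intro x hx1 hx2
          have hdist : dist x xb < δ := by
            rw [Real.dist_eq, abs_of_pos (by linarith)]
            linarith
          have hsl := (hball hdist (by simpa using hx1)).1
          rw [slope_def_field] at hsl
          have hpos : (0:ℝ) < x - xb := by linarith
          have h2 := (div_lt_iff₀ hpos).1 hsl
          linarith
      have hx'T : x' ∈ T := by
        refine ⟨⟨le_trans hxbI.1 hx'1.le, hx'2.le⟩, ?_⟩
        intro r hrW hr
        rcases le_or_gt r xb with hrle | hrgt
        · exact hxbT.2 r hrW ⟨hr.1, hrle⟩
        · have hFr := hx'3 r hrgt hr.2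
          have hFxb : S.F xb ≤ S.F p + ε * (xb - p) := hxbT.2 xb hxbW ⟨hxbI.1, le_rfl⟩
          have : r - xb + (xb - p) = r - p := by ring
          nlinarith [hε.le]
      have := le_csSup hTbdd hx'T
      linarith
    · -- xb not a record : no records nearby
      have hopen : IsOpen S.Wᶜ := S.W_closed.isOpen_compl
      obtain ⟨δ, hδ, hball⟩ := Metric.isOpen_iff.1 hopen xb hxbW
      set x' := min (xb + δ/2) S.be with hx'
      have hx'gt : xb < x' := lt_min (by linarith) (lt_of_le_of_ne hxbI.2 hne)
      have hx'T : x' ∈ T := by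
        refine ⟨⟨le_trans hxbI.1 hx'gt.le, min_le_right _ _⟩, ?_⟩
        intro r hrW hr
        rcases le_or_gt r xb with hrle | hrgt
        · exact hxbT.2 r hrW ⟨hr.1, hrle⟩
        · exfalso
          apply hball (show dist r xb < δ by
            rw [Real.dist_eq, abs_of_pos (by linarith)]
            have : r ≤ xb + δ/2 := le_trans hr.2 (min_le_left _ _)
            linarith)
          exact hrW
      have := le_csSup hTbdd hx'T
      linarith
  rw [hxbe] at hxbT
  exact hxbT.2 q hq ⟨hpq, hq.1.2⟩


lemma F_antitone_W {p q : ℝ} (hp : p ∈ S.W) (hq : q ∈ S.W) (hpal : S.al < p)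
    (hpq : p ≤ q) : S.F q ≤ S.F p := by
  apply le_of_forall_sub_le
  intro ε hε
  rcases eq_or_lt_of_le hpq with h | h
  · rw [h]; linarith
  · have hε' : 0 < ε / (q - p) := div_pos hε (by linarith)
    have h2 := S.F_antitone_W_eps hp hq hpal hpq hε'
    rw [div_mul_cancel₀ ε (by linarith : q - p ≠ 0)] at h2
    linarith

lemma ua_lt_val : S.u S.a < S.v S.al := by
  have h2 := S.hvbet ((S.al + S.be)/2) ⟨by linarith [S.hαβ], by linarith [S.hαβ]⟩
  rw [S.hvβ] at h2
  linarith [h2.1, h2.2]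

lemma F_be : 0 ≤ S.F S.be := by
  rw [F, S.hvβ, S.g_ua]
  have := sq_nonneg (derivWithin S.v (Icc S.al S.be) S.be)
  linarith

lemma F_Sig_nonneg {y : ℝ} (hy : y ∈ Ioo (S.v S.be) (S.v S.al)) : 0 ≤ S.F (S.Sig y) := by
  have h1 := S.F_antitone_W (S.Sig_mem_W ⟨hy.1, hy.2.le⟩) S.be_mem_W
    (S.al_lt_Sig ⟨hy.1.le, hy.2⟩) (S.Sig_mem_Icc (Ioo_subset_Icc_self hy)).2
  linarith [S.F_be]

lemma Sig_near_al {η : ℝ} (hη : 0 < η) (hηb : S.al + η ≤ S.be) :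
    ∃ ymin, ymin < S.v S.al ∧ S.v S.be ≤ ymin ∧
      ∀ y ∈ Ioo ymin (S.v S.al), S.Sig y ≤ S.al + η := by
  have hne : (Icc (S.al + η) S.be).Nonempty := nonempty_Icc.2 hηb
  obtain ⟨z, hz, hmax⟩ := isCompact_Icc.exists_isMaxOn hne
    (S.vcont.mono (Icc_subset_Icc (by linarith) le_rfl))
  have hzval : S.v z < S.v S.al := by
    rcases eq_or_lt_of_le hz.2 with h | h
    · rw [h]
      have := S.ua_lt_val
      rw [← S.hvβ] at this
      exact this
    · exact (S.hvbet z ⟨by linarith [hz.1], h⟩).2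
  refine ⟨max (S.v z) (S.v S.be), max_lt hzval ?_, le_max_right _ _, ?_⟩
  · have := S.ua_lt_val
    rw [← S.hvβ] at this
    exact this
  · intro y hy
    have hyI : y ∈ Icc (S.v S.be) (S.v S.al) :=
      ⟨le_trans (le_max_right _ _) hy.1.le, hy.2.le⟩
    apply csSup_le (S.lev_nonempty hyI)
    intro s hs
    by_contra hgt
    push_neg at hgt
    have hsmem : s ∈ Icc (S.al + η) S.be := ⟨hgt.le, hs.1.2⟩
    have : S.v s ≤ S.v z := hmax hsmem
    have hvs : S.v s = y := hs.2
    have : y ≤ S.v z := by rw [← hvs]; exact this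
    have := hy.1
    have hmax' : S.v z ≤ max (S.v z) (S.v S.be) := le_max_left _ _
    linarith

lemma Sig_tendsto : Tendsto S.Sig (𝓝[Ioo (S.v S.be) (S.v S.al)] (S.v S.al)) (𝓝 S.al) := by
  rw [tendsto_order]
  constructor
  · intro l hl
    filter_upwards [self_mem_nhdsWithin] with y hy
    exact lt_of_lt_of_le hl (le_of_lt (S.al_lt_Sig ⟨hy.1.le, hy.2⟩))
  · intro r hr
    set η := min ((r - S.al)/2) ((S.be - S.al)/2) with hη
    have hη0 : 0 < η := lt_min (by linarith) (by linarith [S.hαβ])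
    have hηb : S.al + η ≤ S.be := by
      have := min_le_right ((r - S.al)/2) ((S.be - S.al)/2)
      have h2 := S.hαβ
      simp only [hη]
      rw [← sub_nonneg]
      have : η ≤ (S.be - S.al)/2 := min_le_right _ _
      linarith
    obtain ⟨ymin, hymin1, _, hymin3⟩ := S.Sig_near_al hη0 hηb
    have hmem : Ioi ymin ∈ 𝓝[Ioo (S.v S.be) (S.v S.al)] (S.v S.al) :=
      nhdsWithin_le_nhds (Ioi_mem_nhds hymin1)
    filter_upwards [hmem, self_mem_nhdsWithin] with y hy1 hy2
    have := hymin3 y ⟨hy1, hy2.2⟩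
    have hηr : η ≤ (r - S.al)/2 := min_le_left _ _
    calc S.Sig y ≤ S.al + η := this
      _ < r := by linarith

lemma nb_val : (𝓝[Ioo (S.v S.be) (S.v S.al)] (S.v S.al)).NeBot := by
  rw [← mem_closure_iff_nhdsWithin_neBot, closure_Ioo (ne_of_lt (by rw [S.hvβ]; exact S.ua_lt_val))]
  exact ⟨by rw [S.hvβ]; exact S.ua_lt_val.le, le_rfl⟩

lemma dv_Sig_tendsto :
    Tendsto (fun y => derivWithin S.v (Icc S.al S.be) (S.Sig y))
      (𝓝[Ioo (S.v S.be) (S.v S.al)] (S.v S.al)) (𝓝 0) := by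
  have hcont : Tendsto (derivWithin S.v (Icc S.al S.be)) (𝓝[Icc S.al S.be] S.al)
      (𝓝 (derivWithin S.v (Icc S.al S.be) S.al)) :=
    (S.dv_cont S.al (left_mem_Icc.2 S.hαβ.le)).tendsto
  rw [S.hv'α] at hcont
  apply hcont.comp
  rw [tendsto_nhdsWithin_iff]
  refine ⟨S.Sig_tendsto, ?_⟩
  filter_upwards [self_mem_nhdsWithin] with y hy
  exact S.Sig_mem_Icc (Ioo_subset_Icc_self hy)


lemma val_sub : Ioo (S.v S.be) (S.v S.al) ⊆ Icc (S.u S.a) (S.u S.b) := by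
  intro y hy
  constructor
  · rw [← S.hvβ]; exact hy.1.le
  · exact le_trans hy.2.le S.hvα

lemma val_eq : S.v S.al = S.u S.b := by
  by_contra hne
  have hlt : S.v S.al < S.u S.b := lt_of_le_of_ne S.hvα hne
  have hval : S.v S.al ∈ Ioo (S.u S.a) (S.u S.b) := ⟨S.ua_lt_val, hlt⟩
  set t := S.ph (S.v S.al) with ht
  have htI : t ∈ Ioo S.a S.b := phi_mem_Ioo S.hab.le S.ucont S.umono hval
  have hph : Tendsto S.ph (𝓝[Ioo (S.v S.be) (S.v S.al)] (S.v S.al)) (𝓝 t) :=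
    (phi_tendsto S.hab.le S.ucont S.umono (Ioo_subset_Icc_self hval)).mono_left
      (nhdsWithin_mono _ S.val_sub)
  have hduc : ContinuousAt (deriv S.u) t :=
    (S.du_cont_Ico t ⟨htI.1.le, htI.2⟩).continuousAt (Ico_mem_nhds htI.1 htI.2)
  have hgten : Tendsto S.g (𝓝[Ioo (S.v S.be) (S.v S.al)] (S.v S.al)) (𝓝 (S.g (S.v S.al))) := by
    have := (hduc.tendsto.comp hph).pow 2
    exact this
  have hF : Tendsto (fun y => S.F (S.Sig y)) (𝓝[Ioo (S.v S.be) (S.v S.al)] (S.v S.al))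
      (𝓝 (0 ^ 2 - S.g (S.v S.al))) := by
    apply Tendsto.congr' _ ((S.dv_Sig_tendsto.pow 2).sub hgten)
    filter_upwards [self_mem_nhdsWithin] with y hy
    rw [F, S.v_Sig (Ioo_subset_Icc_self hy)]
  have hnb := S.nb_val
  have hge : 0 ≤ 0 ^ 2 - S.g (S.v S.al) := by
    apply ge_of_tendsto hF
    filter_upwards [self_mem_nhdsWithin] with y hy
    exact S.F_Sig_nonneg hy
  have := S.g_pos hval
  simp at hge
  linarith

lemma t_al_eq : S.ph (S.v S.al) = S.b := by rw [S.val_eq, S.ph_ub]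

lemma F_Sig_tendsto_zero : Tendsto (fun y => S.F (S.Sig y))
    (𝓝[Ioo (S.v S.be) (S.v S.al)] (S.v S.al)) (𝓝 0) := by
  set ub' := derivWithin S.u (Icc S.a S.b) S.b with hub'
  have hph : Tendsto S.ph (𝓝[Ioo (S.v S.be) (S.v S.al)] (S.v S.al)) (𝓝 S.b) := by
    have h0 : Tendsto S.ph (𝓝[Ioo (S.v S.be) (S.v S.al)] (S.u S.b)) (𝓝 (S.ph (S.u S.b))) :=
      (phi_tendsto S.hab.le S.ucont S.umono
        (right_mem_Icc.2 S.uab.le)).mono_left (nhdsWithin_mono _ S.val_sub)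
    rw [S.ph_ub, ← S.val_eq] at h0
    exact h0
  have hphmem : ∀ y ∈ Ioo (S.v S.be) (S.v S.al), S.ph y ∈ Ico S.a S.b := by
    intro y hy
    have h1 := phi_spec S.hab.le S.ucont (S.val_sub hy)
    refine ⟨h1.1.1, ?_⟩
    have h2 : S.ph y < S.ph (S.u S.b) :=
      phi_lt S.hab.le S.ucont S.umono (S.val_sub hy) (right_mem_Icc.2 S.uab.le)
        (by rw [← S.val_eq]; exact hy.2)
    rwa [S.ph_ub] at h2
  have hduw : Tendsto (derivWithin S.u (Icc S.a S.b)) (𝓝[Icc S.a S.b] S.b) (𝓝 ub') :=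
    (S.du_cont S.b (right_mem_Icc.2 S.hab.le)).tendsto
  have hcomp : Tendsto (fun y => derivWithin S.u (Icc S.a S.b) (S.ph y))
      (𝓝[Ioo (S.v S.be) (S.v S.al)] (S.v S.al)) (𝓝 ub') := by
    apply hduw.comp
    rw [tendsto_nhdsWithin_iff]
    refine ⟨hph, ?_⟩
    filter_upwards [self_mem_nhdsWithin] with y hy
    exact (phi_spec S.hab.le S.ucont (S.val_sub hy)).1
  have hgten : Tendsto S.g (𝓝[Ioo (S.v S.be) (S.v S.al)] (S.v S.al)) (𝓝 (ub' ^ 2)) := by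
    apply Tendsto.congr' _ (hcomp.pow 2)
    filter_upwards [self_mem_nhdsWithin] with y hy
    rw [g, S.deriv_u_eq_on_Ico _ (hphmem y hy)]
  have hF : Tendsto (fun y => S.F (S.Sig y)) (𝓝[Ioo (S.v S.be) (S.v S.al)] (S.v S.al))
      (𝓝 (0 ^ 2 - ub' ^ 2)) := by
    apply Tendsto.congr' _ ((S.dv_Sig_tendsto.pow 2).sub hgten)
    filter_upwards [self_mem_nhdsWithin] with y hy
    rw [F, S.v_Sig (Ioo_subset_Icc_self hy)]
  have hnb := S.nb_val
  have hge : 0 ≤ 0 ^ 2 - ub' ^ 2 := by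
    apply ge_of_tendsto hF
    filter_upwards [self_mem_nhdsWithin] with y hy
    exact S.F_Sig_nonneg hy
  have hub0 : ub' = 0 := by
    simp at hge
    have := sq_nonneg ub'
    have h0 : ub' ^ 2 = 0 := by rw [hge]; norm_num
    exact pow_eq_zero_iff (by norm_num) |>.1 h0
  rw [hub0] at hF
  simpa using hF

lemma F_zero_W {s : ℝ} (hsW : s ∈ S.W) (hs : s ∈ Ioo S.al S.be) : S.F s = 0 := by
  have hge : 0 ≤ S.F s := le_trans S.F_be (S.F_antitone_W hsW S.be_mem_W hs.1 hsW.1.2)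
  have hle : S.F s ≤ 0 := by
    have hnb := S.nb_val
    apply ge_of_tendsto S.F_Sig_tendsto_zero
    have hev : ∀ᶠ y in 𝓝[Ioo (S.v S.be) (S.v S.al)] (S.v S.al), S.Sig y < s :=
      S.Sig_tendsto.eventually (eventually_lt_nhds hs.1)
    filter_upwards [hev, self_mem_nhdsWithin] with y hy1 hy2
    exact S.F_antitone_W (S.Sig_mem_W ⟨hy2.1, hy2.2.le⟩) hsW
      (S.al_lt_Sig ⟨hy2.1.le, hy2.2⟩) hy1.le
  linarith


lemma all_records {s : ℝ} (hs : s ∈ Ioo S.al S.be) : s ∈ S.W := by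
  by_contra hsW
  have hsI : s ∈ Icc S.al S.be := Ioo_subset_Icc_self hs
  have hne : (Icc s S.be).Nonempty := nonempty_Icc.2 hs.2.le
  obtain ⟨m, hm, hmax⟩ := isCompact_Icc.exists_isMaxOn hne
    (S.vcont.mono (Icc_subset_Icc hsI.1 le_rfl))
  set A := Icc s S.be ∩ S.v ⁻¹' {S.v m} with hA
  have hAc : IsCompact A := isCompact_Icc.of_isClosed_subset
    ((S.vcont.mono (Icc_subset_Icc hsI.1 le_rfl)).preimage_isClosed_of_isClosed
      isClosed_Icc isClosed_singleton) inter_subset_left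
  have hAne : A.Nonempty := ⟨m, hm, rfl⟩
  set z := sSup A with hz
  have hzA : z ∈ A := hAc.sSup_mem hAne
  have hzW : z ∈ S.W := by
    refine ⟨⟨le_trans hsI.1 hzA.1.1, hzA.1.2⟩, ?_⟩
    intro x hx
    have : S.v x ≤ S.v m := hmax ⟨le_trans hzA.1.1 hx.1, hx.2⟩
    rw [hzA.2]
    exact this
  have hsz : s < z := by
    rcases eq_or_lt_of_le hzA.1.1 with h | h
    · exfalso
      apply hsW
      rw [← h] at hzW
      exact hzW
    · exact h
  have hzbe : z < S.be := by
    rcases eq_or_lt_of_le hzA.1.2 with h | h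
    · exfalso
      have h1 : S.v s ≤ S.v m := hmax ⟨le_rfl, hsI.2⟩
      have h2 : S.v S.be < S.v s := (S.hvbet s hs).1
      have h3 : S.v z = S.v m := hzA.2
      rw [h] at h3
      linarith
    · exact h
  have hzIoo : z ∈ Ioo S.al S.be := ⟨lt_trans hs.1 hsz, hzbe⟩
  have hF0 : S.F z = 0 := S.F_zero_W hzW hzIoo
  have hlm : IsLocalMax S.v z := by
    filter_upwards [isOpen_Ioo.mem_nhds (show z ∈ Ioo s S.be from ⟨hsz, hzbe⟩)] with x hx
    rw [hzA.2]
    exact hmax ⟨hx.1.le, hx.2.le⟩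
  have hdz : deriv S.v z = 0 := hlm.deriv_eq_zero
  have : S.F z = -S.g (S.v z) := by
    rw [F, ← S.deriv_eq_derivWithin_v hzIoo, hdz]
    ring
  have hgz := S.g_pos (S.v_mem_Ioo hzIoo)
  rw [hF0] at this
  linarith

lemma deriv_v_eq {s : ℝ} (hs : s ∈ Ioo S.al S.be) :
    deriv S.v s = -(deriv S.u (S.tau s)) := by
  have hW := S.all_records hs
  have hF0 : S.F s = 0 := S.F_zero_W hW hs
  rw [F, ← S.deriv_eq_derivWithin_v hs] at hF0
  have hsq : (deriv S.v s)^2 = (deriv S.u (S.tau s))^2 := by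
    rw [g] at hF0
    have : S.ph (S.v s) = S.tau s := rfl
    rw [this] at hF0
    linarith
  have hneg : deriv S.v s ≤ 0 := S.W_deriv_nonpos hW hs
  have hpos : 0 < deriv S.u (S.tau s) := S.hu' _ (S.tau_mem hs)
  have hfac : (deriv S.v s + deriv S.u (S.tau s)) * (deriv S.v s - deriv S.u (S.tau s)) = 0 := by
    nlinarith
  rcases mul_eq_zero.1 hfac with h | h
  · linarith
  · linarith

lemma hasDerivAt_tau {s : ℝ} (hs : s ∈ Ioo S.al S.be) : HasDerivAt S.tau (-1) s := by
  have htau : HasDerivAt S.tau ((deriv S.u (S.tau s))⁻¹ * deriv S.v s) s :=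
    (S.hasDerivAt_ph (S.v_mem_Ioo hs)).comp s (S.hasDerivAt_v hs)
  have hpos : 0 < deriv S.u (S.tau s) := S.hu' _ (S.tau_mem hs)
  rw [S.deriv_v_eq hs] at htau
  convert htau using 1
  field_simp

lemma tau_cont : ContinuousOn S.tau (Icc S.al S.be) := by
  intro s hs
  exact ((phi_tendsto S.hab.le S.ucont S.umono (S.v_mem_Icc hs)).comp
    ((S.vcont s hs).tendsto_nhdsWithin (fun x hx => S.v_mem_Icc hx)))

lemma tau_add_interior : ∀ s₁ ∈ Ioo S.al S.be, ∀ s₂ ∈ Ioo S.al S.be, s₁ ≤ s₂ →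
    S.tau s₁ + s₁ = S.tau s₂ + s₂ := by
  intro s₁ hs₁ s₂ hs₂ h12
  set w := fun x => S.tau x + x with hw
  have hcont : ContinuousOn w (Icc s₁ s₂) :=
    ((S.tau_cont.mono (Icc_subset_Icc hs₁.1.le hs₂.2.le)).add continuousOn_id)
  have hderiv : ∀ x ∈ Ico s₁ s₂, HasDerivWithinAt w 0 (Ici x) x := by
    intro x hx
    have hxI : x ∈ Ioo S.al S.be := ⟨lt_of_lt_of_le hs₁.1 hx.1, lt_of_lt_of_le hx.2 hs₂.2.le⟩
    have := (S.hasDerivAt_tau hxI).add (hasDerivAt_id x)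
    have h0 : (-1 : ℝ) + 1 = 0 := by norm_num
    rw [h0] at this
    exact this.hasDerivWithinAt
  have := constant_of_has_deriv_right_zero hcont hderiv s₂ (right_mem_Icc.2 h12)
  exact this.symm

lemma c_eq : ∀ s ∈ Ioo S.al S.be, S.tau s + s = S.b + S.al := by
  have hmid : (S.al + S.be)/2 ∈ Ioo S.al S.be := ⟨by linarith [S.hαβ], by linarith [S.hαβ]⟩
  set m := (S.al + S.be)/2 with hm
  have hconst : ∀ s ∈ Ioo S.al S.be, S.tau s + s = S.tau m + m := by
    intro s hs
    rcases le_or_gt s m with h | h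
    · exact S.tau_add_interior s hs m hmid h
    · exact (S.tau_add_interior m hmid s hs h.le).symm
  have hal : S.tau S.al + S.al = S.tau m + m := by
    have hnb : (𝓝[Ioo S.al S.be] S.al).NeBot := by
      rw [← mem_closure_iff_nhdsWithin_neBot, closure_Ioo (ne_of_lt S.hαβ)]
      exact ⟨le_rfl, S.hαβ.le⟩
    have hten : Tendsto (fun x => S.tau x + x) (𝓝[Ioo S.al S.be] S.al)
        (𝓝 (S.tau S.al + S.al)) :=
      (((S.tau_cont S.al (left_mem_Icc.2 S.hαβ.le)).mono Ioo_subset_Icc_self).add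
        continuousWithinAt_id).tendsto
    have hten2 : Tendsto (fun x => S.tau x + x) (𝓝[Ioo S.al S.be] S.al)
        (𝓝 (S.tau m + m)) := by
      apply Tendsto.congr' _ tendsto_const_nhds
      filter_upwards [self_mem_nhdsWithin] with x hx
      exact (hconst x hx).symm
    exact tendsto_nhds_unique hten hten2
  intro s hs
  rw [hconst s hs, ← hal]
  have h1 : S.tau S.al = S.b := by
    rw [tau, t_al_eq]
  rw [h1]

lemma sum_eq : S.a + S.be = S.b + S.al := by
  have hmid : (S.al + S.be)/2 ∈ Ioo S.al S.be := ⟨by linarith [S.hαβ], by linarith [S.hαβ]⟩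
  have hbe : S.tau S.be + S.be = S.b + S.al := by
    have hnb : (𝓝[Ioo S.al S.be] S.be).NeBot := by
      rw [← mem_closure_iff_nhdsWithin_neBot, closure_Ioo (ne_of_lt S.hαβ)]
      exact ⟨S.hαβ.le, le_rfl⟩
    have hten : Tendsto (fun x => S.tau x + x) (𝓝[Ioo S.al S.be] S.be)
        (𝓝 (S.tau S.be + S.be)) :=
      (((S.tau_cont S.be (right_mem_Icc.2 S.hαβ.le)).mono Ioo_subset_Icc_self).add
        continuousWithinAt_id).tendsto
    have hten2 : Tendsto (fun x => S.tau x + x) (𝓝[Ioo S.al S.be] S.be)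
        (𝓝 (S.b + S.al)) := by
      apply Tendsto.congr' _ tendsto_const_nhds
      filter_upwards [self_mem_nhdsWithin] with x hx
      exact (S.c_eq x hx).symm
    exact tendsto_nhds_unique hten hten2
  have h1 : S.tau S.be = S.a := by
    rw [tau, S.hvβ, S.ph_ua]
  rw [h1] at hbe
  exact hbe

lemma refl_eq : ∀ s ∈ Icc S.al S.be, S.v s = S.u (S.b + S.al - s) := by
  intro s hs
  rcases eq_or_lt_of_le hs.1 with h | h
  · rw [← h]
    have : S.b + S.al - S.al = S.b := by ring
    rw [this, S.val_eq]
  rcases eq_or_lt_of_le hs.2 with h2 | h2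
  · rw [h2]
    have : S.b + S.al - S.be = S.a := by linarith [S.sum_eq]
    rw [this, S.hvβ]
  · have hsIoo : s ∈ Ioo S.al S.be := ⟨h, h2⟩
    have := S.c_eq s hsIoo
    have htau : S.tau s = S.b + S.al - s := by linarith
    rw [← htau]
    exact (S.u_tau (Ioo_subset_Icc_self hsIoo)).symm

end LN

/-- Lemma 4.1 of Li–Nirenberg: v is a reflection of u. -/
theorem stmt_6 (a b α β : ℝ) (hab : a < b) (hαβ : α < β) (u v : ℝ → ℝ)
    (hu2 : ContDiffOn ℝ 2 u (Set.Ioo a b)) (hu1 : ContDiffOn ℝ 1 u (Set.Icc a b))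
    (hu'a : derivWithin u (Set.Icc a b) a = 0)
    (hu' : ∀ t ∈ Set.Ioo a b, 0 < deriv u t)
    (hv2 : ContDiffOn ℝ 2 v (Set.Ioo α β)) (hv1 : ContDiffOn ℝ 1 v (Set.Icc α β))
    (hvα : v α ≤ u b) (hvβ : v β = u a)
    (hvbet : ∀ s ∈ Set.Ioo α β, v β < v s ∧ v s < v α)
    (hv'α : derivWithin v (Set.Icc α β) α = 0)
    (hmain : ∀ t ∈ Set.Ioo a b, ∀ s ∈ Set.Ioo α β, u t = v s →
      deriv (deriv u) t ≤ deriv (deriv v) s) :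
    β - α = b - a ∧ (∀ s ∈ Set.Icc α β, v s = u (b + α - s)) ∧ v α = u b := by
  set S : LN := ⟨a, b, α, β, u, v, hab, hαβ, hu2, hu1, hu'a, hu', hv2, hv1, hvα, hvβ,
    hvbet, hv'α, hmain⟩ with hS
  refine ⟨?_, ?_, ?_⟩
  · have := S.sum_eq
    simp only [hS] at this
    linarith
  · intro s hs
    exact S.refl_eq s hs
  · exact S.val_eq
end
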